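/- arXiv:1501.01822 — 9 statements merged into one kernel-verified Lean document; each statement's English description precedes it below -/
import Mathlib

section
/- Let n ≥ 1, let σ : Fin n → ℝ → ℝ be continuous functions, let a ≤ b be real numbers, and set U(t) = max_{i} σ_i(t) and L(t) = min_{i} σ_i(t) (maximum and minimum over the finite index set). Assume U(t) + L(t) = 0 for all t ∈ [a,b]. Let f : ℝ → ℝ be a measurable function such that for every t ∈ [a,b] there exists an index i with f(t) = σ_i(t). Then ∫_a^b max_i |f(t) − σ_i(t)| dt = ∫_a^b |f(t)| dt + ∫_a^b U(t) dt. In particular, the difference between ∫_a^b max_i |f(t) − σ_i(t)| dt and ∫_a^b |f(t)| dt does not depend on f. -/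
/-- Lemma 2 of the paper: in ℝ¹, with the ideal trajectory normalized so that
`U + L = 0` on `[a,b]`, the integral of the distance from a trajectoid `f` to the
farthest entity equals `∫ |f|` plus a term independent of `f`. -/
theorem stmt0 (n : ℕ) (hn : 1 ≤ n)
    (σ : Fin n → ℝ → ℝ) (hσ : ∀ i, Continuous (σ i))
    (a b : ℝ) (hab : a ≤ b)
    (U L : ℝ → ℝ)
    (hU : ∀ t, U t = Finset.univ.sup' ⟨⟨0, hn⟩, Finset.mem_univ _⟩ (fun i => σ i t))
    (hL : ∀ t, L t = Finset.univ.inf' ⟨⟨0, hn⟩, Finset.mem_univ _⟩ (fun i => σ i t))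
    (hUL : ∀ t ∈ Set.Icc a b, U t + L t = 0)
    (f : ℝ → ℝ) (hf : Measurable f)
    (hfon : ∀ t ∈ Set.Icc a b, ∃ i, f t = σ i t) :
    (∫ t in a..b, Finset.univ.sup' ⟨⟨0, hn⟩, Finset.mem_univ _⟩ (fun i => |f t - σ i t|))
      = (∫ t in a..b, |f t|) + ∫ t in a..b, U t := by
  have hne : (Finset.univ : Finset (Fin n)).Nonempty := ⟨⟨0, hn⟩, Finset.mem_univ _⟩
  -- bounds on σ
  have hσU : ∀ i t, σ i t ≤ U t := fun i t => by
    rw [hU]; exact Finset.le_sup' (fun i => σ i t) (Finset.mem_univ i)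
  have hLσ : ∀ i t, L t ≤ σ i t := fun i t => by
    rw [hL]; exact Finset.inf'_le _ (Finset.mem_univ i)
  -- pointwise identity on [a,b]
  have key : ∀ t ∈ Set.Icc a b,
      (Finset.univ.sup' hne (fun i => |f t - σ i t|)) = |f t| + U t := by
    intro t ht
    obtain ⟨i, hi⟩ := hfon t ht
    have hLU : L t = -U t := by linarith [hUL t ht]
    have hfU : f t ≤ U t := hi ▸ hσU i t
    have hfL : -U t ≤ f t := by rw [← hLU]; exact hi ▸ hLσ i t
    have habs : ∀ j, |σ j t| ≤ U t := fun j =>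
      abs_le.2 ⟨by linarith [hLσ j t, hLU ▸ (hLσ j t)], hσU j t⟩
    apply le_antisymm
    · apply Finset.sup'_le
      intro j _
      calc |f t - σ j t| ≤ |f t| + |σ j t| := abs_sub _ _
        _ ≤ |f t| + U t := by linarith [habs j]
    · rcases le_or_gt 0 (f t) with hpos | hneg
      · -- pick j achieving the min L t
        obtain ⟨j, -, hj⟩ := Finset.exists_mem_eq_inf' hne (fun i => σ i t)
        have hjL : σ j t = L t := by rw [hL]; exact hj.symm
        calc |f t| + U t = f t - L t := by rw [abs_of_nonneg hpos, hLU]; ring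
          _ ≤ |f t - σ j t| := by rw [hjL]; exact le_abs_self _
          _ ≤ _ := Finset.le_sup' (fun i => |f t - σ i t|) (Finset.mem_univ j)
      · obtain ⟨j, -, hj⟩ := Finset.exists_mem_eq_sup' hne (fun i => σ i t)
        have hjU : σ j t = U t := by rw [hU]; exact hj.symm
        calc |f t| + U t = -(f t - U t) := by rw [abs_of_neg hneg]; ring
          _ ≤ |f t - σ j t| := by rw [hjU]; exact neg_le_abs _
          _ ≤ _ := Finset.le_sup' (fun i => |f t - σ i t|) (Finset.mem_univ j)
  have hUcont : Continuous U := by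
    have : Continuous fun t => Finset.univ.sup' hne (fun i => σ i t) :=
      Continuous.finset_sup'_apply hne (fun i _ => hσ i)
    simpa [funext hU] using this
  have hUint : IntervalIntegrable U MeasureTheory.volume a b :=
    hUcont.intervalIntegrable a b
  have hsub : Set.uIoc a b ⊆ Set.Icc a b := by
    rw [Set.uIoc_of_le hab]; exact Set.Ioc_subset_Icc_self
  have hfint : IntervalIntegrable (fun t => |f t|) MeasureTheory.volume a b := by
    apply hUint.mono_fun' (hf.abs.aestronglyMeasurable)
    refine MeasureTheory.ae_restrict_of_forall_mem measurableSet_uIoc ?_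
    intro t ht
    have ht' := hsub ht
    obtain ⟨i, hi⟩ := hfon t ht'
    have hLU : L t = -U t := by linarith [hUL t ht']
    have hfU : f t ≤ U t := hi ▸ hσU i t
    have hfL : -U t ≤ f t := by rw [← hLU]; exact hi ▸ hLσ i t
    simpa [abs_abs] using abs_le.2 ⟨hfL, hfU⟩
  have hcong : Set.EqOn (fun t => Finset.univ.sup' hne (fun i => |f t - σ i t|))
      (fun t => |f t| + U t) (Set.uIcc a b) := by
    intro t ht
    exact key t (by rwa [Set.uIcc_of_le hab] at ht)
  rw [intervalIntegral.integral_congr hcong, intervalIntegral.integral_add hfint hUint]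
end

section
/- Let S ⊆ ℝ be a nonempty finite set and let m = (max S + min S)/2. Then for all p, q ∈ ℝ, if |p − m| ≤ |q − m| then max_{s∈S} |p − s| ≤ max_{s∈S} |q − s|. -/
lemma sup'_abs_eq (S : Finset ℝ) (hS : S.Nonempty) (x : ℝ) :
    S.sup' hS (fun s => |x - s|) =
      |x - (S.max' hS + S.min' hS) / 2| + (S.max' hS - S.min' hS) / 2 := by
  set m := (S.max' hS + S.min' hS) / 2 with hm
  apply le_antisymm
  · apply Finset.sup'_le
    intro s hs
    have h1 := S.min'_le s hs
    have h2 := S.le_max' s hs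
    rcases abs_cases (x - s) with ⟨e1, _⟩ | ⟨e1, _⟩ <;>
      rcases abs_cases (x - m) with ⟨e2, _⟩ | ⟨e2, _⟩ <;> simp only [hm] at * <;> linarith
  · have hmin := S.min'_le _ (S.max'_mem hS)
    rcases le_or_gt x m with hx | hx
    · have := Finset.le_sup' (fun s => |x - s|) (S.max'_mem hS)
      have hxmax : x ≤ S.max' hS := by simp only [hm] at hx; linarith
      have : S.max' hS - x ≤ S.sup' hS (fun s => |x - s|) := by
        calc S.max' hS - x ≤ |x - S.max' hS| := by rw [abs_sub_comm]; exact le_abs_self _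
        _ ≤ _ := this
      have habs : |x - m| = m - x := by rw [abs_of_nonpos (by linarith : x - m ≤ 0)]; ring
      simp only [hm] at *; linarith
    · have := Finset.le_sup' (fun s => |x - s|) (S.min'_mem hS)
      have hxmin : S.min' hS ≤ x := by simp only [hm] at hx; linarith
      have : x - S.min' hS ≤ S.sup' hS (fun s => |x - s|) := by
        calc x - S.min' hS ≤ |x - S.min' hS| := le_abs_self _
        _ ≤ _ := this
      have habs : |x - m| = x - m := abs_of_nonneg (by linarith)
      simp only [hm] at *; linarith

/-- In ℝ¹, being closer to the midrange `m` of a nonempty finite set `S` implies being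
closer to the farthest point of `S`. -/
theorem stmt3 (S : Finset ℝ) (hS : S.Nonempty) (p q : ℝ)
    (h : |p - (S.max' hS + S.min' hS) / 2| ≤ |q - (S.max' hS + S.min' hS) / 2|) :
    S.sup' hS (fun s => |p - s|) ≤ S.sup' hS (fun s => |q - s|) := by
  rw [sup'_abs_eq, sup'_abs_eq]
  linarith
end

section
/- There exist a finite set P of points in the Euclidean plane ℝ², a point m ∈ ℝ², and points p, q ∈ P such that: (i) for every c ∈ ℝ², max_{x∈P} dist(m, x) ≤ max_{x∈P} dist(c, x) (so m is the center of the smallest enclosing disk of P); (ii) dist(p, m) < dist(q, m); and (iii) max_{x∈P} dist(q, x) < max_{x∈P} dist(p, x). -/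
noncomputable def pt4aux (a b : ℝ) : EuclideanSpace ℝ (Fin 2) :=
  (WithLp.equiv 2 (Fin 2 → ℝ)).symm ![a, b]

lemma pt4aux_dist (a b c d : ℝ) :
    dist (pt4aux a b) (pt4aux c d) = Real.sqrt ((a - c) ^ 2 + (b - d) ^ 2) := by
  rw [EuclideanSpace.dist_eq]
  norm_num [pt4aux, Fin.sum_univ_two, Real.dist_eq, sq_abs]

lemma dist_pt4aux (c : EuclideanSpace ℝ (Fin 2)) (a b : ℝ) :
    dist c (pt4aux a b) = Real.sqrt ((c 0 - a) ^ 2 + (c 1 - b) ^ 2) := by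
  rw [EuclideanSpace.dist_eq]
  norm_num [pt4aux, Fin.sum_univ_two, Real.dist_eq, sq_abs]

lemma sqrt_eq_of_sq (a t : ℝ) (ha : 0 ≤ a) (h : t = a ^ 2) : Real.sqrt t = a := by
  rw [h]; exact Real.sqrt_sq ha

lemma tri_key (s x y : ℝ) (hs2 : s ^ 2 = 3) :
    2 ≤ Real.sqrt ((x - 2) ^ 2 + (y - 0) ^ 2)
    ∨ 2 ≤ Real.sqrt ((x - (-1)) ^ 2 + (y - s) ^ 2)
    ∨ 2 ≤ Real.sqrt ((x - (-1)) ^ 2 + (y - (-s)) ^ 2) := by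
  rcases le_or_gt x 0 with hx0 | hx0
  · left
    exact (Real.le_sqrt (by norm_num) (by positivity)).mpr (by nlinarith [sq_nonneg y])
  · rcases le_or_gt (s * y) x with hyx | hyx
    · right; left
      exact (Real.le_sqrt (by norm_num) (by positivity)).mpr
        (by nlinarith [sq_nonneg x, sq_nonneg y])
    · right; right
      exact (Real.le_sqrt (by norm_num) (by positivity)).mpr
        (by nlinarith [sq_nonneg x, sq_nonneg y])

/-- In the Euclidean plane there is a finite point set `P`, the center `m` of its
smallest enclosing disk, and points `p, q ∈ P` such that `p` is closer to `m` than `q`,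
yet `q` has a strictly smaller distance to its farthest point of `P` than `p` does. -/
theorem stmt4 :
    ∃ (P : Finset (EuclideanSpace ℝ (Fin 2))) (hP : P.Nonempty)
      (m : EuclideanSpace ℝ (Fin 2)) (p q : EuclideanSpace ℝ (Fin 2)),
      p ∈ P ∧ q ∈ P
      ∧ (∀ c : EuclideanSpace ℝ (Fin 2),
          P.sup' hP (fun x => dist m x) ≤ P.sup' hP (fun x => dist c x))
      ∧ dist p m < dist q m
      ∧ P.sup' hP (fun x => dist q x) < P.sup' hP (fun x => dist p x) := by
  classical
  set s : ℝ := Real.sqrt 3 with hs_def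
  have hs2 : s ^ 2 = 3 := Real.sq_sqrt (by norm_num)
  have hs0 : 0 ≤ s := Real.sqrt_nonneg 3
  have hs1 : 1 ≤ s := by nlinarith
  set A : EuclideanSpace ℝ (Fin 2) := pt4aux 2 0 with hA
  set B : EuclideanSpace ℝ (Fin 2) := pt4aux (-1) s with hB
  set C : EuclideanSpace ℝ (Fin 2) := pt4aux (-1) (-s) with hC
  set p : EuclideanSpace ℝ (Fin 2) := pt4aux (-(3/5)) 0 with hp
  set q : EuclideanSpace ℝ (Fin 2) := pt4aux (4/5) 0 with hq
  set m : EuclideanSpace ℝ (Fin 2) := pt4aux 0 0 with hm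
  set P : Finset (EuclideanSpace ℝ (Fin 2)) := {A, B, C, p, q} with hPdef
  have hP : P.Nonempty := ⟨A, by simp [hPdef]⟩
  refine ⟨P, hP, m, p, q, by simp [hPdef], by simp [hPdef], ?_, ?_, ?_⟩
  · -- m is an optimal center
    intro c
    -- sup at m is exactly 2
    have hmA : dist m A = 2 := by
      rw [hm, hA, pt4aux_dist]; exact sqrt_eq_of_sq _ _ (by norm_num) (by ring)
    have hmB : dist m B = 2 := by
      rw [hm, hB, pt4aux_dist]; exact sqrt_eq_of_sq _ _ (by norm_num) (by nlinarith)
    have hmC : dist m C = 2 := by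
      rw [hm, hC, pt4aux_dist]; exact sqrt_eq_of_sq _ _ (by norm_num) (by nlinarith)
    have hmp : dist m p = 3/5 := by
      rw [hm, hp, pt4aux_dist]; exact sqrt_eq_of_sq _ _ (by norm_num) (by ring)
    have hmq : dist m q = 4/5 := by
      rw [hm, hq, pt4aux_dist]; exact sqrt_eq_of_sq _ _ (by norm_num) (by ring)
    have hsup_m : P.sup' hP (fun x => dist m x) ≤ 2 := by
      apply Finset.sup'_le
      intro x hx
      simp only [hPdef, Finset.mem_insert, Finset.mem_singleton] at hx
      rcases hx with rfl | rfl | rfl | rfl | rfl <;>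
        simp only [hmA, hmB, hmC, hmp, hmq] <;> norm_num
    refine le_trans hsup_m ?_
    -- for any c, some vertex of the triangle is at distance ≥ 2
    set x := c 0 with hx
    set y := c 1 with hy
    have key : 2 ≤ dist c A ∨ 2 ≤ dist c B ∨ 2 ≤ dist c C := by
      have hdA : dist c A = Real.sqrt ((x - 2) ^ 2 + (y - 0) ^ 2) := by
        rw [hA, dist_pt4aux]
      have hdB : dist c B = Real.sqrt ((x - (-1)) ^ 2 + (y - s) ^ 2) := by
        rw [hB, dist_pt4aux]
      have hdC : dist c C = Real.sqrt ((x - (-1)) ^ 2 + (y - (-s)) ^ 2) := by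
        rw [hC, dist_pt4aux]
      rw [hdA, hdB, hdC]
      exact tri_key s x y hs2
    rcases key with h | h | h
    · exact le_trans h (Finset.le_sup' _ (by simp [hPdef]))
    · exact le_trans h (Finset.le_sup' _ (by simp [hPdef]))
    · exact le_trans h (Finset.le_sup' _ (by simp [hPdef]))
  · -- dist p m < dist q m
    have h1 : dist p m = 3/5 := by
      rw [hp, hm, pt4aux_dist]; exact sqrt_eq_of_sq _ _ (by norm_num) (by ring)
    have h2 : dist q m = 4/5 := by
      rw [hq, hm, pt4aux_dist]; exact sqrt_eq_of_sq _ _ (by norm_num) (by ring)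
    rw [h1, h2]; norm_num
  · -- sup from q is < sup from p
    have hpA : dist p A = 13/5 := by
      rw [hp, hA, pt4aux_dist]; exact sqrt_eq_of_sq _ _ (by norm_num) (by ring)
    have hsup_p : (13:ℝ)/5 ≤ P.sup' hP (fun x => dist p x) := by
      rw [← hpA]; exact Finset.le_sup' _ (by simp [hPdef])
    refine lt_of_lt_of_le ?_ hsup_p
    rw [Finset.sup'_lt_iff]
    intro x hx
    have sqrt_lt : ∀ t : ℝ, t < (13/5) ^ 2 → Real.sqrt t < 13/5 := by
      intro t ht
      exact (Real.sqrt_lt' (by norm_num)).mpr ht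
    simp only [hPdef, Finset.mem_insert, Finset.mem_singleton] at hx
    rcases hx with rfl | rfl | rfl | rfl | rfl
    · rw [hq, hA, pt4aux_dist]; exact sqrt_lt _ (by norm_num)
    · rw [hq, hB, pt4aux_dist]; exact sqrt_lt _ (by nlinarith)
    · rw [hq, hC, pt4aux_dist]; exact sqrt_lt _ (by nlinarith)
    · rw [hq, hp, pt4aux_dist]; exact sqrt_lt _ (by norm_num)
    · rw [hq, pt4aux_dist]; exact sqrt_lt _ (by norm_num)
end

section
/- Let n ≥ 1 and let f_1, …, f_n : ℝ → ℝ be affine functions. Then the set of points t ∈ ℝ at which the midrange function t ↦ (max_{1≤i≤n} f_i(t) + min_{1≤i≤n} f_i(t))/2 is not differentiable is finite and has at most n elements. -/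
open Finset

namespace Stmt6Aux

noncomputable section
open Classical

variable {n : ℕ}

/-- the affine functions -/
def f (a b : Fin n → ℝ) (i : Fin n) (s : ℝ) : ℝ := a i * s + b i

variable (ne : (Finset.univ : Finset (Fin n)).Nonempty) (a b : Fin n → ℝ)

/-- upper envelope -/
def F (s : ℝ) : ℝ := Finset.univ.sup' ne (fun i => f a b i s)

lemma le_F (j : Fin n) (s : ℝ) : f a b j s ≤ F ne a b s :=
  Finset.le_sup' (fun i => f a b i s) (Finset.mem_univ j)

/-- argmax set -/
def Amax (t : ℝ) : Finset (Fin n) :=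
  Finset.univ.filter (fun i => f a b i t = F ne a b t)

lemma mem_Amax_iff {i : Fin n} {t : ℝ} :
    i ∈ Amax ne a b t ↔ f a b i t = F ne a b t := by
  simp [Amax]

lemma Amax_nonempty (t : ℝ) : (Amax ne a b t).Nonempty := by
  obtain ⟨i, -, hi⟩ := Finset.exists_mem_eq_sup' ne (fun i => f a b i t)
  exact ⟨i, (mem_Amax_iff ne a b).2 hi.symm⟩

/-- right slope -/
def R (t : ℝ) : ℝ := (Amax ne a b t).sup' (Amax_nonempty ne a b t) a

/-- left slope -/
def Lr (t : ℝ) : ℝ := (Amax ne a b t).inf' (Amax_nonempty ne a b t) a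

lemma Lr_le_R (t : ℝ) : Lr ne a b t ≤ R ne a b t := by
  obtain ⟨i, hi⟩ := Amax_nonempty ne a b t
  exact le_trans (Finset.inf'_le _ hi) (Finset.le_sup' _ hi)

lemma exists_R_attain (t : ℝ) : ∃ i ∈ Amax ne a b t, a i = R ne a b t := by
  obtain ⟨i, hi, h⟩ := Finset.exists_mem_eq_sup' (Amax_nonempty ne a b t) a
  exact ⟨i, hi, h.symm⟩

lemma exists_Lr_attain (t : ℝ) : ∃ i ∈ Amax ne a b t, a i = Lr ne a b t := by
  obtain ⟨i, hi, h⟩ := Finset.exists_mem_eq_inf' (Amax_nonempty ne a b t) a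
  exact ⟨i, hi, h.symm⟩

end

end Stmt6Aux

namespace Stmt6Aux
noncomputable section
open Classical
variable {n : ℕ}
variable (ne : (Finset.univ : Finset (Fin n)).Nonempty) (a b : Fin n → ℝ)

/-- Local structure of the upper envelope: affine with slope `R` to the right
and slope `Lr` to the left. -/
lemma exists_local (t : ℝ) :
    ∃ ε > 0, ∀ s : ℝ,
      (t < s → s < t + ε → F ne a b s = F ne a b t + R ne a b t * (s - t)) ∧
      (t - ε < s → s < t → F ne a b s = F ne a b t + Lr ne a b t * (s - t)) := by
  -- eventual strict inequalities for non-maximizers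
  have key : ∃ ε > 0, ∀ s : ℝ, |s - t| < ε → ∀ j, j ∉ Amax ne a b t →
      f a b j s < F ne a b s := by
    obtain ⟨i0, hi0⟩ := Amax_nonempty ne a b t
    have hev : ∀ᶠ s in nhds t, ∀ j ∈ (Finset.univ : Finset (Fin n)),
        j ∉ Amax ne a b t → f a b j s < f a b i0 s := by
      rw [Filter.eventually_all_finset]
      intro j _
      by_cases hj : j ∈ Amax ne a b t
      · exact Filter.Eventually.of_forall (fun s h => absurd hj h)
      · have hcj : Continuous (fun s => f a b j s) := by unfold f; continuity
        have hci : Continuous (fun s => f a b i0 s) := by unfold f; continuity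
        have hlt : f a b j t < f a b i0 t := by
          rcases lt_or_eq_of_le (le_F ne a b j t) with h | h
          · rw [(mem_Amax_iff ne a b).1 hi0]; exact h
          · exact absurd ((mem_Amax_iff ne a b).2 h) hj
        exact ((hcj.continuousAt (x := t)).eventually_lt (hci.continuousAt) hlt).mono
          (fun s h _ => h)
    rw [Metric.eventually_nhds_iff] at hev
    obtain ⟨ε, hε, h⟩ := hev
    exact ⟨ε, hε, fun s hs j hj =>
      lt_of_lt_of_le (h (by simpa [Real.dist_eq] using hs) j (Finset.mem_univ j) hj)
        (le_F ne a b i0 s)⟩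
  obtain ⟨ε, hε, hkey⟩ := key
  refine ⟨ε, hε, fun s => ⟨fun h1 h2 => ?_, fun h1 h2 => ?_⟩⟩
  · -- right side
    have hsd : |s - t| < ε := by rw [abs_lt]; constructor <;> linarith
    obtain ⟨m, hm, hFm⟩ := Finset.exists_mem_eq_sup' ne (fun i => f a b i s)
    have hmA : m ∈ Amax ne a b t := by
      by_contra hc
      exact absurd hFm (ne_of_gt (hkey s hsd m hc))
    obtain ⟨i, hiA, hia⟩ := exists_R_attain ne a b t
    have ham : a m ≤ R ne a b t := Finset.le_sup' a hmA
    have hfm : f a b m t = F ne a b t := (mem_Amax_iff ne a b).1 hmA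
    have hfi : f a b i t = F ne a b t := (mem_Amax_iff ne a b).1 hiA
    have hub : F ne a b s ≤ F ne a b t + R ne a b t * (s - t) := by
      rw [show F ne a b s = f a b m s from hFm]
      have : f a b m s = f a b m t + a m * (s - t) := by unfold f; ring
      rw [this, hfm]
      nlinarith
    have hlb : F ne a b t + R ne a b t * (s - t) ≤ F ne a b s := by
      have : f a b i s = f a b i t + a i * (s - t) := by unfold f; ring
      have h2 := le_F ne a b i s
      rw [this, hfi, hia] at h2; exact h2
    linarith
  · -- left side
    have hsd : |s - t| < ε := by rw [abs_lt]; constructor <;> linarith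
    obtain ⟨m, hm, hFm⟩ := Finset.exists_mem_eq_sup' ne (fun i => f a b i s)
    have hmA : m ∈ Amax ne a b t := by
      by_contra hc
      exact absurd hFm (ne_of_gt (hkey s hsd m hc))
    obtain ⟨i, hiA, hia⟩ := exists_Lr_attain ne a b t
    have ham : Lr ne a b t ≤ a m := Finset.inf'_le a hmA
    have hfm : f a b m t = F ne a b t := (mem_Amax_iff ne a b).1 hmA
    have hfi : f a b i t = F ne a b t := (mem_Amax_iff ne a b).1 hiA
    have hub : F ne a b s ≤ F ne a b t + Lr ne a b t * (s - t) := by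
      rw [show F ne a b s = f a b m s from hFm]
      have : f a b m s = f a b m t + a m * (s - t) := by unfold f; ring
      rw [this, hfm]
      nlinarith
    have hlb : F ne a b t + Lr ne a b t * (s - t) ≤ F ne a b s := by
      have : f a b i s = f a b i t + a i * (s - t) := by unfold f; ring
      have h2 := le_F ne a b i s
      rw [this, hfi, hia] at h2; exact h2
    linarith

end
end Stmt6Aux
-- piece C: monotonicity and range lemmas (to be appended)
namespace Stmt6Aux
noncomputable section
open Classical Finset
variable {n : ℕ}
variable (ne : (Finset.univ : Finset (Fin n)).Nonempty) (a b : Fin n → ℝ)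

/-- slopes along the upper envelope increase -/
lemma R_le_Lr {s1 s2 : ℝ} (h : s1 < s2) : R ne a b s1 ≤ Lr ne a b s2 := by
  obtain ⟨i, hiA, hia⟩ := exists_R_attain ne a b s1
  obtain ⟨j, hjA, hja⟩ := exists_Lr_attain ne a b s2
  have h1 : f a b j s1 ≤ f a b i s1 :=
    ((mem_Amax_iff ne a b).1 hiA) ▸ le_F ne a b j s1
  have h2 : f a b i s2 ≤ f a b j s2 :=
    ((mem_Amax_iff ne a b).1 hjA) ▸ le_F ne a b i s2
  rw [← hia, ← hja]
  unfold f at h1 h2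
  nlinarith

/-- Left slope values belong to the range of `R`. -/
lemma Lr_mem_range_R (t : ℝ) : ∃ s, s < t ∧ R ne a b s = Lr ne a b t := by
  obtain ⟨ε, hε, hloc⟩ := exists_local ne a b t
  set s0 := t - ε / 2 with hs0
  obtain ⟨δ, hδ, hloc2⟩ := exists_local ne a b s0
  set w := min δ (t - s0) with hw
  have hw0 : 0 < w := lt_min hδ (by rw [hs0]; linarith)
  set u1 := s0 + w / 2 with hu1
  set u2 := s0 + 3 * w / 4 with hu2
  have hwδ : w ≤ δ := min_le_left _ _
  have hwt : w ≤ t - s0 := min_le_right _ _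
  clear_value s0 w u1 u2
  have e1 : F ne a b u1 = F ne a b s0 + R ne a b s0 * (u1 - s0) :=
    (hloc2 u1).1 (by rw [hu1]; linarith) (by rw [hu1]; linarith)
  have e2 : F ne a b u2 = F ne a b s0 + R ne a b s0 * (u2 - s0) :=
    (hloc2 u2).1 (by rw [hu2]; linarith) (by rw [hu2]; linarith)
  have e1' : F ne a b u1 = F ne a b t + Lr ne a b t * (u1 - t) :=
    (hloc u1).2 (by rw [hu1, hs0]; linarith) (by rw [hu1]; linarith)
  have e2' : F ne a b u2 = F ne a b t + Lr ne a b t * (u2 - t) :=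
    (hloc u2).2 (by rw [hu2, hs0]; linarith) (by rw [hu2]; linarith)
  refine ⟨s0, by rw [hs0]; linarith, ?_⟩
  have hd : R ne a b s0 * (u2 - u1) = Lr ne a b t * (u2 - u1) := by nlinarith
  have : u2 - u1 ≠ 0 := by rw [hu1, hu2]; intro h; nlinarith
  have hd := mul_eq_mul_right_iff.1 hd
  rcases hd with h | h
  · exact h
  · exact absurd h this

end
end Stmt6Aux
-- piece D: upper-envelope witnesses and the extremal-slope dichotomy
namespace Stmt6Aux
noncomputable section
open Classical Finset
variable {n : ℕ}
variable (ne : (Finset.univ : Finset (Fin n)).Nonempty) (a b : Fin n → ℝ)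

/-- A line of slope `R t` dominates all others just to the right of `t`. -/
lemma exists_witness (t : ℝ) :
    ∃ ε > 0, ∃ i, a i = R ne a b t ∧
      ∀ s, t < s → s < t + ε → ∀ j, f a b j s ≤ f a b i s := by
  obtain ⟨ε, hε, hloc⟩ := exists_local ne a b t
  obtain ⟨i, hiA, hia⟩ := exists_R_attain ne a b t
  refine ⟨ε, hε, i, hia, fun s h1 h2 j => ?_⟩
  have hF : F ne a b s = F ne a b t + R ne a b t * (s - t) := (hloc s).1 h1 h2
  have hfi : f a b i s = F ne a b t + R ne a b t * (s - t) := by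
    have h := (mem_Amax_iff ne a b).1 hiA
    unfold f at h ⊢; rw [← hia]; rw [← h]; ring
  rw [hfi, ← hF]; exact le_F ne a b j s

/-- Core dichotomy: if a slope-`v` line dominates from above just right of `t1`
and a slope-`v` line dominates from below just right of `t2`, then either the two
lines are distinct, or `v` is an extreme slope. -/
lemma dichotomy {v t1 t2 ε1 ε2 : ℝ} {i k : Fin n}
    (hi : a i = v) (hk : a k = v) (hε1 : 0 < ε1) (hε2 : 0 < ε2)
    (h1 : ∀ s, t1 < s → s < t1 + ε1 → ∀ j, f a b j s ≤ f a b i s)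
    (h2 : ∀ s, t2 < s → s < t2 + ε2 → ∀ j, f a b k s ≤ f a b j s) :
    i ≠ k ∨ (∀ j, v ≤ a j) ∨ (∀ j, a j ≤ v) := by
  by_cases hik : i = k
  · subst hik
    rcases le_total t1 t2 with hle | hle
    · -- pick s1 < s2
      refine Or.inr (Or.inl (fun j => ?_))
      set s2 := t2 + ε2 / 2 with hs2
      set s1 := t1 + min ε1 (s2 - t1) / 2 with hs1
      have hs2t1 : t1 < s2 := by rw [hs2]; linarith
      have hm1 : 0 < min ε1 (s2 - t1) := lt_min hε1 (by linarith)
      have hm2 : min ε1 (s2 - t1) ≤ ε1 := min_le_left _ _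
      have hm3 : min ε1 (s2 - t1) ≤ s2 - t1 := min_le_right _ _
      clear_value s1 s2
      have hA := h1 s1 (by rw [hs1]; linarith) (by rw [hs1]; linarith) j
      have hB := h2 s2 (by rw [hs2]; linarith) (by rw [hs2]; linarith) j
      have hs12 : s1 < s2 := by rw [hs1]; linarith
      unfold f at hA hB
      rw [hi] at hA hB
      nlinarith
    · -- pick s2 < s1
      refine Or.inr (Or.inr (fun j => ?_))
      set s1 := t1 + ε1 / 2 with hs1'
      set s2 := t2 + min ε2 (s1 - t2) / 2 with hs2'
      have hs1t2 : t2 < s1 := by rw [hs1']; linarith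
      have hm1 : 0 < min ε2 (s1 - t2) := lt_min hε2 (by linarith)
      have hm2 : min ε2 (s1 - t2) ≤ ε2 := min_le_left _ _
      have hm3 : min ε2 (s1 - t2) ≤ s1 - t2 := min_le_right _ _
      clear_value s1 s2
      have hA := h1 s1 (by rw [hs1']; linarith) (by rw [hs1']; linarith) j
      have hB := h2 s2 (by rw [hs2']; linarith) (by rw [hs2']; linarith) j
      have hs21 : s2 < s1 := by rw [hs2']; linarith
      unfold f at hA hB
      rw [hi] at hA hB
      nlinarith
  · exact Or.inl hik

end
end Stmt6Aux
-- piece E: relation between inf' and the upper envelope of negated lines; differentiability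
namespace Stmt6Aux
noncomputable section
open Classical Finset
variable {n : ℕ}
variable (ne : (Finset.univ : Finset (Fin n)).Nonempty) (a b : Fin n → ℝ)

lemma inf'_eq_neg (s : ℝ) :
    Finset.univ.inf' ne (fun i => f a b i s) = - F ne (-a) (-b) s := by
  have h1 : F ne (-a) (-b) s = Finset.univ.sup' ne (fun i => -(f a b i s)) := by
    unfold F f
    apply Finset.sup'_congr ne rfl
    intro i _
    simp [Pi.neg_apply]; ring
  rw [h1]
  apply le_antisymm
  · obtain ⟨i, hi, h⟩ := Finset.exists_mem_eq_sup' ne (fun i => -(f a b i s))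
    rw [h]
    simpa only [neg_neg] using Finset.inf'_le (fun i => f a b i s) hi
  · rw [neg_le]
    obtain ⟨i, hi, h⟩ := Finset.exists_mem_eq_inf' ne (fun i => f a b i s)
    rw [h]
    exact Finset.le_sup' (fun i => -(f a b i s)) hi

/-- if both envelopes have equal one-sided slopes at `t`, the midrange is
differentiable at `t`. -/
lemma diff_of_flat (t : ℝ)
    (hF : Lr ne a b t = R ne a b t) (hG : Lr ne (-a) (-b) t = R ne (-a) (-b) t) :
    DifferentiableAt ℝ
      (fun s => (Finset.univ.sup' ne (fun i => a i * s + b i)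
        + Finset.univ.inf' ne (fun i => a i * s + b i)) / 2) t := by
  obtain ⟨ε1, hε1, hloc1⟩ := exists_local ne a b t
  obtain ⟨ε2, hε2, hloc2⟩ := exists_local ne (-a) (-b) t
  set c := (R ne a b t - R ne (-a) (-b) t) / 2 with hc
  set C := (F ne a b t - F ne (-a) (-b) t) / 2 with hC
  have hdiff : DifferentiableAt ℝ (fun s : ℝ => C + c * (s - t)) t := by
    apply DifferentiableAt.add (differentiableAt_const C)
    exact ((differentiableAt_id.sub (differentiableAt_const t)).const_mul c)
  have heq : (fun s => (Finset.univ.sup' ne (fun i => a i * s + b i)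
        + Finset.univ.inf' ne (fun i => a i * s + b i)) / 2)
      =ᶠ[nhds t] (fun s : ℝ => C + c * (s - t)) := by
    apply Metric.eventually_nhds_iff.mpr
    refine ⟨min ε1 ε2, lt_min hε1 hε2, fun s hs => ?_⟩
    rw [Real.dist_eq, abs_lt] at hs
    have hs1 := lt_of_lt_of_le hs.2 (min_le_left ε1 ε2)
    have hs2 := lt_of_lt_of_le hs.2 (min_le_right ε1 ε2)
    have hs1' := lt_of_le_of_lt (neg_le_neg (min_le_left ε1 ε2)) hs.1
    have hs2' := lt_of_le_of_lt (neg_le_neg (min_le_right ε1 ε2)) hs.1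
    have hsup : Finset.univ.sup' ne (fun i => a i * s + b i) = F ne a b s := rfl
    have hinf : Finset.univ.inf' ne (fun i => a i * s + b i) = - F ne (-a) (-b) s :=
      inf'_eq_neg ne a b s
    dsimp only
    rw [hsup, hinf]
    rcases lt_trichotomy s t with h | h | h
    · have e1 : F ne a b s = F ne a b t + Lr ne a b t * (s - t) :=
        (hloc1 s).2 (by linarith) h
      have e2 : F ne (-a) (-b) s = F ne (-a) (-b) t + Lr ne (-a) (-b) t * (s - t) :=
        (hloc2 s).2 (by linarith) h
      rw [e1, e2, hF, hG, hc, hC]; ring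
    · subst h; rw [hc, hC]; ring
    · have e1 : F ne a b s = F ne a b t + R ne a b t * (s - t) :=
        (hloc1 s).1 h (by linarith)
      have e2 : F ne (-a) (-b) s = F ne (-a) (-b) t + R ne (-a) (-b) t * (s - t) :=
        (hloc2 s).1 h (by linarith)
      rw [e1, e2, hc, hC]; ring
  exact (Filter.EventuallyEq.differentiableAt_iff heq).2 hdiff

end
end Stmt6Aux
-- piece F: counting the breakpoints of one envelope
namespace Stmt6Aux
noncomputable section
open Classical Finset
variable {n : ℕ}
variable (ne : (Finset.univ : Finset (Fin n)).Nonempty) (a b : Fin n → ℝ)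

lemma range_R_subset : Set.range (R ne a b) ⊆ Set.range a := by
  rintro v ⟨t, rfl⟩
  obtain ⟨i, -, hi⟩ := exists_R_attain ne a b t
  exact ⟨i, hi⟩

lemma range_R_finite : (Set.range (R ne a b)).Finite :=
  (Set.finite_range a).subset (range_R_subset ne a b)

lemma injOn_R : Set.InjOn (R ne a b) {t | Lr ne a b t ≠ R ne a b t} := by
  have key : ∀ t1 t2 : ℝ, t1 < t2 → t2 ∈ {t | Lr ne a b t ≠ R ne a b t} →
      R ne a b t1 < R ne a b t2 := by
    intro t1 t2 h ht2
    calc R ne a b t1 ≤ Lr ne a b t2 := R_le_Lr ne a b h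
    _ < R ne a b t2 := lt_of_le_of_ne (Lr_le_R ne a b t2) ht2
  intro t1 h1 t2 h2 heq
  rcases lt_trichotomy t1 t2 with h | h | h
  · exact absurd heq (ne_of_lt (key t1 t2 h h2))
  · exact h
  · exact absurd heq.symm (ne_of_lt (key t2 t1 h h1))

lemma JR_finite : {t | Lr ne a b t ≠ R ne a b t}.Finite := by
  apply Set.Finite.of_finite_image _ (injOn_R ne a b)
  exact (range_R_finite ne a b).subset (Set.image_subset_range _ _)

lemma JR_encard : {t | Lr ne a b t ≠ R ne a b t}.encard + 1 ≤ (Set.range (R ne a b)).encard := by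
  set JR := {t | Lr ne a b t ≠ R ne a b t} with hJR
  set T1 := (range_R_finite ne a b).toFinset with hT1
  have hT1ne : T1.Nonempty :=
    (Set.Finite.toFinset_nonempty _).2 ⟨R ne a b 0, 0, rfl⟩
  set m := T1.min' hT1ne with hm
  have hmmem : m ∈ Set.range (R ne a b) :=
    (Set.Finite.mem_toFinset _).1 (T1.min'_mem hT1ne)
  have himg : R ne a b '' JR ⊆ Set.range (R ne a b) \ {m} := by
    rintro v ⟨t, ht, rfl⟩
    refine ⟨Set.mem_range_self t, ?_⟩
    obtain ⟨s, -, hs⟩ := Lr_mem_range_R ne a b t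
    have hLrT : Lr ne a b t ∈ T1 :=
      (Set.Finite.mem_toFinset _).2 ⟨s, hs⟩
    have hmin : m ≤ Lr ne a b t := T1.min'_le _ hLrT
    have hlt : Lr ne a b t < R ne a b t := lt_of_le_of_ne (Lr_le_R ne a b t) ht
    simp only [Set.mem_singleton_iff]
    intro hc
    rw [hc] at hlt
    linarith
  have h1 : JR.encard = (R ne a b '' JR).encard := ((injOn_R ne a b).encard_image).symm
  have h2 : (R ne a b '' JR).encard ≤ (Set.range (R ne a b) \ {m}).encard :=
    Set.encard_mono himg
  have h3 : (Set.range (R ne a b) \ {m}).encard + 1 = (Set.range (R ne a b)).encard :=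
    Set.encard_diff_singleton_add_one hmmem
  calc JR.encard + 1 ≤ (Set.range (R ne a b) \ {m}).encard + 1 := by
        rw [h1]; exact add_le_add h2 le_rfl
  _ = (Set.range (R ne a b)).encard := h3

end
end Stmt6Aux
-- piece G: total envelope complexity bound
namespace Stmt6Aux
noncomputable section
open Classical Finset
variable {n : ℕ}
variable (ne : (Finset.univ : Finset (Fin n)).Nonempty) (a b : Fin n → ℝ)

lemma f_neg (i : Fin n) (s : ℝ) : f (-a) (-b) i s = -(f a b i s) := by
  unfold f; simp; ring

lemma range_negR_finite : (Set.range (fun t => - R ne (-a) (-b) t)).Finite := by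
  have : Set.range (fun t => - R ne (-a) (-b) t) ⊆ Set.range a := by
    rintro v ⟨t, rfl⟩
    obtain ⟨i, hi⟩ := range_R_subset ne (-a) (-b) (Set.mem_range_self t)
    exact ⟨i, by simp only [Pi.neg_apply] at hi; dsimp only; rw [← hi]; ring⟩
  exact (Set.finite_range a).subset this

lemma total_complexity :
    (Set.range (R ne a b)).encard + (Set.range (fun t => - R ne (-a) (-b) t)).encard
      ≤ (n : ℕ∞) + 2 := by
  set T1 := (range_R_finite ne a b).toFinset with hT1def
  set T2 := (range_negR_finite ne a b).toFinset with hT2def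
  set Sl := Finset.univ.image a with hSl
  have hSlne : Sl.Nonempty := ne.image a
  set Dup := Sl.filter (fun v => ∃ i k : Fin n, i ≠ k ∧ a i = v ∧ a k = v) with hDup
  -- T1 ⊆ Sl
  have hsub1 : T1 ⊆ Sl := by
    intro v hv
    obtain ⟨i, hi⟩ := range_R_subset ne a b ((Set.Finite.mem_toFinset _).1 hv)
    exact Finset.mem_image.2 ⟨i, Finset.mem_univ i, hi⟩
  have hsub2 : T2 ⊆ Sl := by
    intro v hv
    obtain ⟨t, ht⟩ := (Set.Finite.mem_toFinset _).1 hv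
    obtain ⟨i, -, hi⟩ := exists_R_attain ne (-a) (-b) t
    refine Finset.mem_image.2 ⟨i, Finset.mem_univ i, ?_⟩
    simp only [Pi.neg_apply] at hi
    dsimp only at ht
    rw [← ht, ← hi]; ring
  -- the intersection is small
  have hint : T1 ∩ T2 ⊆ insert (Sl.min' hSlne) (insert (Sl.max' hSlne) Dup) := by
    intro v hv
    have hv1 := (Set.Finite.mem_toFinset _).1 (Finset.mem_of_mem_inter_left hv)
    have hv2 := (Set.Finite.mem_toFinset _).1 (Finset.mem_of_mem_inter_right hv)
    obtain ⟨t1, ht1⟩ := hv1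
    obtain ⟨t2, ht2⟩ := hv2
    obtain ⟨ε1, hε1, i, hia, hdom1⟩ := exists_witness ne a b t1
    obtain ⟨ε2, hε2, k, hka, hdom2⟩ := exists_witness ne (-a) (-b) t2
    have hiv : a i = v := by rw [hia, ht1]
    have hkv : a k = v := by
      dsimp only at ht2
      simp only [Pi.neg_apply] at hka
      have : -(a k) = R ne (-a) (-b) t2 := hka
      have h2 : R ne (-a) (-b) t2 = -v := by rw [← ht2]; ring
      rw [h2] at this; linarith
    have hdom2' : ∀ s, t2 < s → s < t2 + ε2 → ∀ j, f a b k s ≤ f a b j s := by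
      intro s hs1 hs2 j
      have := hdom2 s hs1 hs2 j
      rw [f_neg, f_neg] at this
      linarith
    rcases dichotomy a b hiv hkv hε1 hε2 hdom1 hdom2' with h | h | h
    · -- duplicate slope
      refine Finset.mem_insert.2 (Or.inr (Finset.mem_insert.2 (Or.inr ?_)))
      rw [hDup]
      exact Finset.mem_filter.2 ⟨hsub1 (Finset.mem_of_mem_inter_left hv), i, k, h, hiv, hkv⟩
    · -- v is the minimum slope
      refine Finset.mem_insert.2 (Or.inl ?_)
      have hvSl : v ∈ Sl := hsub1 (Finset.mem_of_mem_inter_left hv)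
      apply le_antisymm _ (Sl.min'_le v hvSl)
      apply Finset.le_min'
      intro y hy
      obtain ⟨j, -, rfl⟩ := Finset.mem_image.1 hy
      exact h j
    · -- v is the maximum slope
      refine Finset.mem_insert.2 (Or.inr (Finset.mem_insert.2 (Or.inl ?_)))
      have hvSl : v ∈ Sl := hsub1 (Finset.mem_of_mem_inter_left hv)
      apply le_antisymm (Sl.le_max' v hvSl)
      apply Finset.max'_le
      intro y hy
      obtain ⟨j, -, rfl⟩ := Finset.mem_image.1 hy
      exact h j
  -- cardinality bookkeeping
  have hcard_int : (T1 ∩ T2).card ≤ Dup.card + 2 := by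
    calc (T1 ∩ T2).card ≤ (insert (Sl.min' hSlne) (insert (Sl.max' hSlne) Dup)).card :=
          Finset.card_le_card hint
    _ ≤ (insert (Sl.max' hSlne) Dup).card + 1 := Finset.card_insert_le _ _
    _ ≤ Dup.card + 1 + 1 := by
          have := Finset.card_insert_le (Sl.max' hSlne) Dup
          omega
    _ = Dup.card + 2 := by omega
  have hcard_union : (T1 ∪ T2).card ≤ Sl.card :=
    Finset.card_le_card (Finset.union_subset hsub1 hsub2)
  have hSlDup : Sl.card + Dup.card ≤ n := by
    have hn : n = ∑ v ∈ Sl, (Finset.univ.filter (fun i => a i = v)).card := by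
      have := Finset.card_eq_sum_card_image a (Finset.univ : Finset (Fin n))
      simpa [Finset.card_univ] using this
    have hbound : ∀ v ∈ Sl, (1 + if v ∈ Dup then 1 else 0) ≤
        (Finset.univ.filter (fun i => a i = v)).card := by
      intro v hv
      by_cases hd : v ∈ Dup
      · simp only [hd, if_true]
        obtain ⟨-, i, k, hik, hi, hk⟩ := Finset.mem_filter.1 hd
        have : ({i, k} : Finset (Fin n)) ⊆ Finset.univ.filter (fun j => a j = v) := by
          intro x hx
          rcases Finset.mem_insert.1 hx with rfl | hx
          · exact Finset.mem_filter.2 ⟨Finset.mem_univ _, hi⟩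
          · rw [Finset.mem_singleton.1 hx]
            exact Finset.mem_filter.2 ⟨Finset.mem_univ _, hk⟩
        calc (1 + 1 : ℕ) = ({i, k} : Finset (Fin n)).card := (Finset.card_pair hik).symm
        _ ≤ _ := Finset.card_le_card this
      · simp only [hd, if_false]
        obtain ⟨j, -, hj⟩ := Finset.mem_image.1 hv
        have : j ∈ Finset.univ.filter (fun i => a i = v) :=
          Finset.mem_filter.2 ⟨Finset.mem_univ _, hj⟩
        have := Finset.card_pos.2 ⟨j, this⟩
        omega
    have hsum : ∑ v ∈ Sl, (1 + if v ∈ Dup then 1 else 0) ≤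
        ∑ v ∈ Sl, (Finset.univ.filter (fun i => a i = v)).card :=
      Finset.sum_le_sum hbound
    have hsplit : ∑ v ∈ Sl, (1 + if v ∈ Dup then 1 else 0) = Sl.card + Dup.card := by
      rw [Finset.sum_add_distrib]
      congr 1
      · simp
      · rw [Finset.sum_ite_mem, Finset.inter_eq_right.2 (by rw [hDup]; exact Finset.filter_subset _ _)]
        simp
    omega
  -- assemble over ℕ
  have hnat : T1.card + T2.card ≤ n + 2 := by
    have := Finset.card_union_add_card_inter T1 T2
    omega
  -- convert to encard
  have e1 : (Set.range (R ne a b)).encard = (T1.card : ℕ∞) := by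
    rw [hT1def]
    exact (Set.Finite.encard_eq_coe_toFinset_card _)
  have e2 : (Set.range (fun t => - R ne (-a) (-b) t)).encard = (T2.card : ℕ∞) := by
    rw [hT2def]
    exact (Set.Finite.encard_eq_coe_toFinset_card _)
  rw [e1, e2]
  have : ((T1.card + T2.card : ℕ) : ℕ∞) ≤ ((n + 2 : ℕ) : ℕ∞) := Nat.cast_le.2 hnat
  push_cast at this ⊢
  convert this using 2

end
end Stmt6Aux
-- final theorem
open Stmt6Aux in
/-- The midrange (average of upper and lower envelope) of `n ≥ 1` affine functions has
at most `n` points of non-differentiability. -/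
theorem stmt6 (n : ℕ) (hn : 1 ≤ n) (a b : Fin n → ℝ) :
    {t : ℝ | ¬ DifferentiableAt ℝ
        (fun s => (Finset.univ.sup' ⟨⟨0, hn⟩, Finset.mem_univ _⟩ (fun i => a i * s + b i)
          + Finset.univ.inf' ⟨⟨0, hn⟩, Finset.mem_univ _⟩ (fun i => a i * s + b i)) / 2) t}.Finite
    ∧ {t : ℝ | ¬ DifferentiableAt ℝ
        (fun s => (Finset.univ.sup' ⟨⟨0, hn⟩, Finset.mem_univ _⟩ (fun i => a i * s + b i)
          + Finset.univ.inf' ⟨⟨0, hn⟩, Finset.mem_univ _⟩ (fun i => a i * s + b i)) / 2)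
          t}.encard ≤ (n : ℕ) := by
  have ne : (Finset.univ : Finset (Fin n)).Nonempty := ⟨⟨0, hn⟩, Finset.mem_univ _⟩
  set Bad := {t : ℝ | ¬ DifferentiableAt ℝ
        (fun s => (Finset.univ.sup' ⟨⟨0, hn⟩, Finset.mem_univ _⟩ (fun i => a i * s + b i)
          + Finset.univ.inf' ⟨⟨0, hn⟩, Finset.mem_univ _⟩ (fun i => a i * s + b i)) / 2) t}
    with hBad
  have hsub : Bad ⊆ {t | Lr ne a b t ≠ R ne a b t} ∪ {t | Lr ne (-a) (-b) t ≠ R ne (-a) (-b) t} := by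
    intro t ht
    by_contra hc
    rw [Set.mem_union] at hc
    push_neg at hc
    simp only [Set.mem_setOf_eq, not_not] at hc
    have hd := diff_of_flat ne a b t hc.1 hc.2
    exact ht hd
  have hfin : Bad.Finite :=
    (Set.Finite.union (JR_finite ne a b) (JR_finite ne (-a) (-b))).subset hsub
  refine ⟨hfin, ?_⟩
  have h1 := JR_encard ne a b
  have h2 := JR_encard ne (-a) (-b)
  -- the negated range has the same encard
  have hneg : (Set.range (R ne (-a) (-b))).encard
      = (Set.range (fun t => - R ne (-a) (-b) t)).encard := by
    have : Set.range (fun t => - R ne (-a) (-b) t)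
        = (fun x : ℝ => -x) '' Set.range (R ne (-a) (-b)) := by
      rw [← Set.range_comp]; rfl
    rw [this, Set.InjOn.encard_image (fun x _ y _ h => by linarith [neg_injective h] )]
  have htot := total_complexity ne a b
  have hsum : {t | Lr ne a b t ≠ R ne a b t}.encard
      + {t | Lr ne (-a) (-b) t ≠ R ne (-a) (-b) t}.encard + 2 ≤ (n : ℕ∞) + 2 := by
    calc {t | Lr ne a b t ≠ R ne a b t}.encard
        + {t | Lr ne (-a) (-b) t ≠ R ne (-a) (-b) t}.encard + 2
        = ({t | Lr ne a b t ≠ R ne a b t}.encard + 1)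
          + ({t | Lr ne (-a) (-b) t ≠ R ne (-a) (-b) t}.encard + 1) := by ring
    _ ≤ (Set.range (R ne a b)).encard + (Set.range (R ne (-a) (-b))).encard :=
          add_le_add h1 h2
    _ = (Set.range (R ne a b)).encard + (Set.range (fun t => - R ne (-a) (-b) t)).encard := by
          rw [hneg]
    _ ≤ (n : ℕ∞) + 2 := htot
  have hcancel : {t | Lr ne a b t ≠ R ne a b t}.encard
      + {t | Lr ne (-a) (-b) t ≠ R ne (-a) (-b) t}.encard ≤ (n : ℕ∞) :=
    (WithTop.add_le_add_iff_right (by norm_num : (2 : ℕ∞) ≠ ⊤)).1 hsum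
  calc Bad.encard ≤ ({t | Lr ne a b t ≠ R ne a b t}
        ∪ {t | Lr ne (-a) (-b) t ≠ R ne (-a) (-b) t}).encard := Set.encard_mono hsub
  _ ≤ {t | Lr ne a b t ≠ R ne a b t}.encard
        + {t | Lr ne (-a) (-b) t ≠ R ne (-a) (-b) t}.encard := Set.encard_union_le _ _
  _ ≤ (n : ℕ∞) := hcancel
end

section
/- Let n ≥ 1, τ ≥ 1, let t_0 < t_1 < … < t_τ be real numbers, and let σ_1, …, σ_n : ℝ → ℝ be continuous functions each of whose restriction to every interval [t_j, t_{j+1}] is affine. Define the ideal trajectory I(t) = (max_i σ_i(t) + min_i σ_i(t))/2. Then there exist K ≤ τ(n + 2) and a partition t_0 = s_0 < s_1 < … < s_K = t_τ such that I restricted to each interval [s_{k−1}, s_k] is affine. -/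
namespace Stmt7Aux

open Finset Set

def ev (L : ℝ × ℝ) (t : ℝ) : ℝ := L.1 * t + L.2

lemma line_eq_of_two {L L' : ℝ × ℝ} {u v : ℝ} (huv : u ≠ v)
    (h1 : ev L u = ev L' u) (h2 : ev L v = ev L' v) : L = L' := by
  simp only [ev] at h1 h2
  have hc : L.1 = L'.1 := by
    have h3 : (L.1 - L'.1) * (u - v) = 0 := by linarith
    rcases mul_eq_zero.1 h3 with h | h
    · linarith
    · exact absurd (sub_eq_zero.1 h) huv
  have hd : L.2 = L'.2 := by rw [hc] at h1; linarith
  exact Prod.ext hc hd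

lemma nonneg_Icc_of_Ioo {α β u v : ℝ} (huv : u < v)
    (h : ∀ t ∈ Ioo u v, 0 ≤ α * t + β) : ∀ t ∈ Icc u v, 0 ≤ α * t + β := by
  have hcl : IsClosed {t : ℝ | 0 ≤ α * t + β} :=
    isClosed_le continuous_const (by fun_prop)
  have hsub : Icc u v ⊆ {t : ℝ | 0 ≤ α * t + β} := by
    rw [← closure_Ioo huv.ne]
    exact hcl.closure_subset_iff.2 (fun t ht => h t ht)
  exact fun t ht => hsub ht

lemma slope_nonneg {α β u v : ℝ} (huv : u < v) (h0 : α * u + β = 0) (h1 : 0 ≤ α * v + β) :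
    0 ≤ α ∧ (α = 0 → β = 0) := by
  constructor
  · by_contra hα
    push_neg at hα
    nlinarith
  · intro h; rw [h] at h0; linarith

lemma slope_neg {α β u1 u2 u3 : ℝ} (h12 : u1 < u2) (h23 : u2 ≤ u3)
    (a1 : 0 ≤ α * u1 + β) (a2 : 0 ≤ α * u2 + β) (a3 : α * u3 + β ≤ 0) :
    α < 0 ∨ (α = 0 ∧ β = 0) := by
  rcases lt_trichotomy α 0 with h | h | h
  · exact Or.inl h
  · right
    refine ⟨h, ?_⟩
    rw [h] at a1 a3
    linarith
  · exfalso
    have h2 : α * u2 + β ≤ α * u3 + β := by nlinarith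
    have e2 : α * u2 + β = 0 := le_antisymm (by linarith) a2
    nlinarith [mul_pos h (sub_pos.2 h12)]

lemma dominate {n : ℕ} (hn : 1 ≤ n) (c d : Fin n → ℝ)
    {u v : ℝ} (huv : u < v)
    (hnc : ∀ i i' : Fin n, c i ≠ c i' → ((d i' - d i) / (c i - c i')) ∉ Ioo u v) :
    ∃ i0 : Fin n, ∀ i, ∀ t ∈ Icc u v, c i * t + d i ≤ c i0 * t + d i0 := by
  have He : (univ : Finset (Fin n)).Nonempty := ⟨⟨0, hn⟩, mem_univ _⟩
  set w := (u + v) / 2 with hw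
  have hwu : u < w := by rw [hw]; linarith
  have hwv : w < v := by rw [hw]; linarith
  obtain ⟨i0, -, hi0⟩ := Finset.exists_max_image univ (fun i => c i * w + d i) He
  refine ⟨i0, fun i => ?_⟩
  have hIoo : ∀ t ∈ Ioo u v, 0 ≤ (c i0 - c i) * t + (d i0 - d i) := by
    intro t0 ht0
    by_contra hcon
    push_neg at hcon
    have hw0 : 0 ≤ (c i0 - c i) * w + (d i0 - d i) := by
      have := hi0 i (mem_univ i); linarith
    have hα : c i0 - c i ≠ 0 := by
      intro h
      rw [h] at hw0 hcon
      simp at hw0 hcon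
      linarith
    set ρ := (d i - d i0) / (c i0 - c i) with hρdef
    have hρ : (c i0 - c i) * ρ + (d i0 - d i) = 0 := by
      rw [hρdef]; field_simp; ring
    have hρIoo : ρ ∈ Ioo u v := by
      rcases lt_or_gt_of_ne hα with hneg | hpos
      · have h1 : ρ ≤ t0 := by nlinarith
        have h2 : w ≤ ρ := by nlinarith
        exact ⟨lt_of_lt_of_le hwu h2, lt_of_le_of_lt h1 ht0.2⟩
      · have h1 : t0 ≤ ρ := by nlinarith
        have h2 : ρ ≤ w := by nlinarith
        exact ⟨lt_of_lt_of_le ht0.1 h1, lt_of_le_of_lt h2 hwv⟩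
    have hcne : c i0 ≠ c i := fun h => hα (by rw [h]; ring)
    exact hnc i0 i hcne hρIoo
  intro t ht
  have := nonneg_Icc_of_Ioo huv hIoo t ht
  linarith

/-- A piecewise-affine certificate for `I` on `[A, B]` with `K` pieces. -/
def PW (I : ℝ → ℝ) (K : ℕ) (s : ℕ → ℝ) (A B : ℝ) : Prop :=
  (∀ k k', k < k' → k' ≤ K → s k < s k') ∧ s 0 = A ∧ s K = B ∧
    ∀ k < K, ∃ p q : ℝ, ∀ t ∈ Icc (s k) (s (k + 1)), I t = p * t + q

section Sorted

variable {γ : Type*} [LinearOrder γ]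

lemma sorted_getD_lt (S : Finset γ) (z : γ) {k k' : ℕ} (hk : k < k') (hk' : k' < S.card) :
    (S.sort (· ≤ ·)).getD k z < (S.sort (· ≤ ·)).getD k' z := by
  have hlen : (S.sort (· ≤ ·)).length = S.card := Finset.length_sort _
  rw [List.getD_eq_getElem _ _ (by omega), List.getD_eq_getElem _ _ (by omega)]
  have := List.SortedLT.strictMono_get (Finset.sortedLT_sort S)
    (show (⟨k, by omega⟩ : Fin (S.sort (· ≤ ·)).length) < ⟨k', by omega⟩ from hk)
  simpa using this

lemma sorted_getD_mem (S : Finset γ) (z : γ) {k : ℕ} (hk : k < S.card) :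
    (S.sort (· ≤ ·)).getD k z ∈ S := by
  have hlen : (S.sort (· ≤ ·)).length = S.card := Finset.length_sort _
  rw [List.getD_eq_getElem _ _ (by omega)]
  exact (Finset.mem_sort _).1 (List.getElem_mem _)

lemma sorted_getD_surj (S : Finset γ) (z : γ) {y : γ} (hy : y ∈ S) :
    ∃ k, k < S.card ∧ (S.sort (· ≤ ·)).getD k z = y := by
  have hlen : (S.sort (· ≤ ·)).length = S.card := Finset.length_sort _
  obtain ⟨⟨k, hk⟩, hget⟩ := List.mem_iff_get.1 ((Finset.mem_sort (· ≤ ·)).2 hy)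
  refine ⟨k, by omega, ?_⟩
  rw [List.getD_eq_getElem _ _ (by omega)]
  simpa using hget

end Sorted


lemma locate (x : ℕ → ℝ) (r : ℕ) : ∀ r', r < r' → ∀ t, t ∈ Icc (x r) (x r') →
    ∃ q, r ≤ q ∧ q < r' ∧ t ∈ Icc (x q) (x (q + 1)) := by
  intro r'
  induction r' with
  | zero => omega
  | succ r'' ih =>
    intro hr t ht
    rcases Nat.lt_or_ge r r'' with h | h
    · rcases le_or_gt t (x r'') with h2 | h2
      · obtain ⟨q, hq1, hq2, hq3⟩ := ih h t ⟨ht.1, h2⟩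
        exact ⟨q, hq1, by omega, hq3⟩
      · exact ⟨r'', by omega, by omega, ⟨h2.le, ht.2⟩⟩
    · have hre : r'' = r := by omega
      rw [hre]
      exact ⟨r, le_rfl, by omega, by rw [hre] at ht; exact ht⟩

set_option maxHeartbeats 2000000 in
lemma interval_pw {n : ℕ} (hn : 1 ≤ n) (c d : Fin n → ℝ) {a b : ℝ} (hab : a < b)
    (He : (univ : Finset (Fin n)).Nonempty)
    (I : ℝ → ℝ)
    (hI : ∀ t ∈ Icc a b,
      I t = (univ.sup' He (fun i => c i * t + d i) + univ.inf' He (fun i => c i * t + d i)) / 2) :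
    ∃ K s, 1 ≤ K ∧ K ≤ n + 1 ∧ PW I K s a b := by
  classical
  set T : Finset ℝ := insert a (insert b ((univ : Finset (Fin n × Fin n)).image
      (fun p => max a (min b (if c p.1 = c p.2 then a
        else (d p.2 - d p.1) / (c p.1 - c p.2)))))) with hTdef
  have haT : a ∈ T := by simp [hTdef]
  have hbT : b ∈ T := by simp [hTdef]
  have hTIcc : ∀ y ∈ T, a ≤ y ∧ y ≤ b := by
    intro y hy
    simp only [hTdef, Finset.mem_insert, Finset.mem_image, Finset.mem_univ, true_and] at hy
    rcases hy with rfl | rfl | ⟨p, rfl⟩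
    · exact ⟨le_rfl, hab.le⟩
    · exact ⟨hab.le, le_rfl⟩
    · exact ⟨le_max_left _ _, max_le hab.le (min_le_left _ _)⟩
  have hrootT : ∀ i i' : Fin n, c i ≠ c i' →
      (d i' - d i) / (c i - c i') ∈ Icc a b → (d i' - d i) / (c i - c i') ∈ T := by
    intro i i' hne hmem
    have : max a (min b ((d i' - d i) / (c i - c i'))) = (d i' - d i) / (c i - c i') := by
      rw [min_eq_right hmem.2, max_eq_right hmem.1]
    refine mem_insert_of_mem (mem_insert_of_mem ?_)
    rw [Finset.mem_image]
    exact ⟨(i, i'), mem_univ _, by simp only [if_neg hne]; exact this⟩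
  -- the sorted breakpoints
  set m : ℕ := T.card - 1 with hmdef
  have hcard2 : 2 ≤ T.card := Finset.one_lt_card.2 ⟨a, haT, b, hbT, hab.ne⟩
  have hcardm : T.card = m + 1 := by omega
  have hm1 : 1 ≤ m := by omega
  set x : ℕ → ℝ := fun k => (T.sort (· ≤ ·)).getD k 0 with hxdef
  have hxlt : ∀ {k k'}, k < k' → k' ≤ m → x k < x k' := by
    intro k k' h h'
    exact sorted_getD_lt T 0 h (by omega)
  have hxle : ∀ {k k'}, k ≤ k' → k' ≤ m → x k ≤ x k' := by
    intro k k' h h'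
    rcases eq_or_lt_of_le h with rfl | h2
    · exact le_rfl
    · exact (hxlt h2 h').le
  have hxmem : ∀ k, k ≤ m → x k ∈ T := fun k hk => sorted_getD_mem T 0 (by omega)
  have hxsurj : ∀ y ∈ T, ∃ k, k ≤ m ∧ x k = y := by
    intro y hy
    obtain ⟨k, hk, he⟩ := sorted_getD_surj T 0 hy
    exact ⟨k, by omega, he⟩
  have hxab : ∀ k, k ≤ m → a ≤ x k ∧ x k ≤ b := fun k hk => hTIcc _ (hxmem k hk)
  have hx0 : x 0 = a := by
    obtain ⟨k, hk, he⟩ := hxsurj a haT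
    rcases Nat.eq_zero_or_pos k with rfl | h
    · exact he
    · have := hxlt h hk
      rw [he] at this
      exact absurd (hxab 0 (by omega)).1 (by linarith)
  have hxm : x m = b := by
    obtain ⟨k, hk, he⟩ := hxsurj b hbT
    rcases eq_or_lt_of_le hk with rfl | h
    · exact he
    · have := hxlt h le_rfl
      rw [he] at this
      exact absurd (hxab m le_rfl).2 (by linarith)
  have hgap : ∀ k, k < m → ∀ y ∈ T, y ∉ Ioo (x k) (x (k + 1)) := by
    intro k hk y hy hmem
    obtain ⟨q, hq, rfl⟩ := hxsurj y hy
    rcases Nat.lt_or_ge q (k + 1) with h | h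
    · exact absurd hmem.1 (not_lt.2 (hxle (by omega) (by omega)))
    · exact absurd hmem.2 (not_lt.2 (hxle h hq))
  -- dominating lines on each piece
  have hnc : ∀ k, k < m → ∀ i i' : Fin n, c i ≠ c i' →
      ((d i' - d i) / (c i - c i')) ∉ Ioo (x k) (x (k + 1)) := by
    intro k hk i i' hne hmem
    have hIccab : (d i' - d i) / (c i - c i') ∈ Icc a b := by
      constructor
      · exact le_trans (hxab k (by omega)).1 hmem.1.le
      · exact le_trans hmem.2.le (hxab (k + 1) (by omega)).2
    exact hgap k hk _ (hrootT i i' hne hIccab) hmem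
  have hdomF : ∀ k, ∃ i0 : Fin n, k < m →
      ∀ i, ∀ t ∈ Icc (x k) (x (k + 1)), c i * t + d i ≤ c i0 * t + d i0 := by
    intro k
    by_cases hk : k < m
    · obtain ⟨i0, h⟩ := dominate hn c d (hxlt (lt_add_one k) (by omega)) (hnc k hk)
      exact ⟨i0, fun _ => h⟩
    · exact ⟨⟨0, hn⟩, fun h => absurd h hk⟩
  choose i0 hi0 using hdomF
  have hdomG : ∀ k, ∃ j0 : Fin n, k < m →
      ∀ i, ∀ t ∈ Icc (x k) (x (k + 1)), c j0 * t + d j0 ≤ c i * t + d i := by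
    intro k
    by_cases hk : k < m
    · have hnc' : ∀ i i' : Fin n, (fun i => -c i) i ≠ (fun i => -c i) i' →
          (((fun i => -d i) i' - (fun i => -d i) i) / ((fun i => -c i) i - (fun i => -c i) i'))
            ∉ Ioo (x k) (x (k + 1)) := by
        intro i i' hne
        have hne' : c i ≠ c i' := fun h => hne (by simp [h])
        have : (-d i' - -d i) / (-c i - -c i') = (d i' - d i) / (c i - c i') := by
          rw [show (-d i' - -d i) = -(d i' - d i) by ring, show (-c i - -c i') = -(c i - c i') by ring,
            neg_div_neg_eq]
        simp only
        rw [this]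
        exact hnc k hk i i' hne'
      obtain ⟨j0, h⟩ := dominate hn (fun i => -c i) (fun i => -d i)
        (hxlt (lt_add_one k) (by omega)) hnc'
      refine ⟨j0, fun _ i t ht => ?_⟩
      have := h i t ht
      linarith
    · exact ⟨⟨0, hn⟩, fun h => absurd h hk⟩
  choose j0 hj0 using hdomG
  have hsup : ∀ k, k < m → ∀ t ∈ Icc (x k) (x (k + 1)),
      univ.sup' He (fun i => c i * t + d i) = c (i0 k) * t + d (i0 k) := by
    intro k hk t ht
    exact le_antisymm (Finset.sup'_le _ _ fun i _ => hi0 k hk i t ht) (Finset.le_sup' (fun i => c i * t + d i) (mem_univ (i0 k)))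
  have hinf : ∀ k, k < m → ∀ t ∈ Icc (x k) (x (k + 1)),
      univ.inf' He (fun i => c i * t + d i) = c (j0 k) * t + d (j0 k) := by
    intro k hk t ht
    exact le_antisymm (Finset.inf'_le (fun i => c i * t + d i) (mem_univ (j0 k))) (Finset.le_inf' _ _ fun i _ => hj0 k hk i t ht)
  set Lf : ℕ → ℝ × ℝ := fun k => (c (i0 k), d (i0 k)) with hLf
  set Lg : ℕ → ℝ × ℝ := fun k => (c (j0 k), d (j0 k)) with hLg
  set Ls : ℕ → ℝ × ℝ := fun k => Lf k + Lg k with hLs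
  have hIeval : ∀ k, k < m → ∀ t ∈ Icc (x k) (x (k + 1)),
      I t = ((Ls k).1 * t + (Ls k).2) / 2 := by
    intro k hk t ht
    have htab : t ∈ Icc a b :=
      ⟨le_trans (hxab k (by omega)).1 ht.1, le_trans ht.2 (hxab (k + 1) (by omega)).2⟩
    rw [hI t htab, hsup k hk t ht, hinf k hk t ht]
    simp only [hLs, hLf, hLg, Prod.fst_add, Prod.snd_add]
    ring
  have hLfc : ∀ k, (Lf k).1 = c (i0 k) := fun k => by rw [hLf]
  have hLfd : ∀ k, (Lf k).2 = d (i0 k) := fun k => by rw [hLf]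
  have hLgc : ∀ k, (Lg k).1 = c (j0 k) := fun k => by rw [hLg]
  have hLgd : ∀ k, (Lg k).2 = d (j0 k) := fun k => by rw [hLg]
  -- value agreement at interior breakpoints
  have hvalF : ∀ k, 0 < k → k < m →
      (Lf (k-1)).1 * x k + (Lf (k-1)).2 = (Lf k).1 * x k + (Lf k).2 := by
    intro k hk0 hk
    have hk1 : k - 1 + 1 = k := by omega
    have hmem1 : x k ∈ Icc (x (k-1)) (x (k-1+1)) := by
      rw [hk1]; exact ⟨hxle (by omega) (by omega), le_rfl⟩
    have h1 := hsup (k-1) (by omega) (x k) hmem1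
    have h2 := hsup k hk (x k) ⟨le_rfl, hxle (by omega) (by omega)⟩
    rw [hLfc, hLfd, hLfc, hLfd, ← h1, ← h2]
  have hvalG : ∀ k, 0 < k → k < m →
      (Lg (k-1)).1 * x k + (Lg (k-1)).2 = (Lg k).1 * x k + (Lg k).2 := by
    intro k hk0 hk
    have hk1 : k - 1 + 1 = k := by omega
    have hmem1 : x k ∈ Icc (x (k-1)) (x (k-1+1)) := by
      rw [hk1]; exact ⟨hxle (by omega) (by omega), le_rfl⟩
    have h1 := hinf (k-1) (by omega) (x k) hmem1
    have h2 := hinf k hk (x k) ⟨le_rfl, hxle (by omega) (by omega)⟩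
    rw [hLgc, hLgd, hLgc, hLgd, ← h1, ← h2]
  -- slope monotonicity of the upper envelope
  have stepF : ∀ k, 0 < k → k < m →
      (Lf (k-1)).1 ≤ (Lf k).1 ∧ (Lf (k-1) ≠ Lf k → (Lf (k-1)).1 < (Lf k).1) := by
    intro k hk0 hk
    have hval := hvalF k hk0 hk
    have hge : (Lf (k-1)).1 * x (k+1) + (Lf (k-1)).2 ≤ (Lf k).1 * x (k+1) + (Lf k).2 := by
      have := hi0 k hk (i0 (k-1)) (x (k+1)) ⟨(hxlt (by omega) (by omega)).le, le_rfl⟩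
      rw [hLfc, hLfd, hLfc, hLfd]
      exact this
    have hxy : x k < x (k+1) := hxlt (by omega) (by omega)
    have hsn := slope_nonneg (α := (Lf k).1 - (Lf (k-1)).1) (β := (Lf k).2 - (Lf (k-1)).2)
      hxy (by linarith [hval]; ) (by nlinarith [hge])
    constructor
    · linarith [hsn.1]
    · intro hne
      rcases eq_or_lt_of_le hsn.1 with h | h
      · exfalso
        have hβ := hsn.2 h.symm
        exact hne (Prod.ext (by linarith) (by linarith))
      · linarith
  have stepG : ∀ k, 0 < k → k < m →
      (Lg k).1 ≤ (Lg (k-1)).1 ∧ (Lg (k-1) ≠ Lg k → (Lg k).1 < (Lg (k-1)).1) := by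
    intro k hk0 hk
    have hval := hvalG k hk0 hk
    have hge : (Lg k).1 * x (k+1) + (Lg k).2 ≤ (Lg (k-1)).1 * x (k+1) + (Lg (k-1)).2 := by
      have := hj0 k hk (j0 (k-1)) (x (k+1)) ⟨(hxlt (by omega) (by omega)).le, le_rfl⟩
      rw [hLgc, hLgd, hLgc, hLgd]
      exact this
    have hxy : x k < x (k+1) := hxlt (by omega) (by omega)
    have hsn := slope_nonneg (α := (Lg (k-1)).1 - (Lg k).1) (β := (Lg (k-1)).2 - (Lg k).2)
      hxy (by linarith [hval]) (by nlinarith [hge])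
    constructor
    · linarith [hsn.1]
    · intro hne
      rcases eq_or_lt_of_le hsn.1 with h | h
      · exfalso
        have hβ := hsn.2 h.symm
        exact hne (Prod.ext (by linarith) (by linarith))
      · linarith
  have chainF : ∀ p k, k + p < m → (Lf k).1 ≤ (Lf (k+p)).1 := by
    intro p
    induction p with
    | zero => intro k _; simp
    | succ p ih =>
      intro k hk
      have h1 := ih k (by omega)
      have h2 := (stepF (k+p+1) (by omega) (by omega)).1
      have e : k + p + 1 - 1 = k + p := by omega
      rw [e] at h2
      show (Lf k).1 ≤ (Lf (k+p+1)).1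
      linarith
  have chainG : ∀ p k, k + p < m → (Lg (k+p)).1 ≤ (Lg k).1 := by
    intro p
    induction p with
    | zero => intro k _; simp
    | succ p ih =>
      intro k hk
      have h1 := ih k (by omega)
      have h2 := (stepG (k+p+1) (by omega) (by omega)).1
      have e : k + p + 1 - 1 = k + p := by omega
      rw [e] at h2
      show (Lg (k+p+1)).1 ≤ (Lg k).1
      linarith
  -- the change sets and envelope line sets
  set SF : Finset (ℝ × ℝ) := (range m).image Lf with hSF
  set SG : Finset (ℝ × ℝ) := (range m).image Lg with hSG
  set chF : Finset ℕ := (range m).filter (fun k => 0 < k ∧ Lf (k-1) ≠ Lf k) with hchF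
  set chG : Finset ℕ := (range m).filter (fun k => 0 < k ∧ Lg (k-1) ≠ Lg k) with hchG
  have injF : ∀ k k', k < k' → k' ∈ chF → k < m → (Lf k).1 < (Lf k').1 := by
    intro k k' hkk' hk' hk
    rw [hchF, Finset.mem_filter, Finset.mem_range] at hk'
    obtain ⟨hk'm, hk'0, hk'ne⟩ := hk'
    have h1 : (Lf k).1 ≤ (Lf (k'-1)).1 := by
      have := chainF (k'-1-k) k (by omega)
      rwa [show k + (k'-1-k) = k'-1 by omega] at this
    have h2 := (stepF k' hk'0 hk'm).2 hk'ne
    linarith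
  have injG : ∀ k k', k < k' → k' ∈ chG → k < m → (Lg k').1 < (Lg k).1 := by
    intro k k' hkk' hk' hk
    rw [hchG, Finset.mem_filter, Finset.mem_range] at hk'
    obtain ⟨hk'm, hk'0, hk'ne⟩ := hk'
    have h1 : (Lg (k'-1)).1 ≤ (Lg k).1 := by
      have := chainG (k'-1-k) k (by omega)
      rwa [show k + (k'-1-k) = k'-1 by omega] at this
    have h2 := (stepG k' hk'0 hk'm).2 hk'ne
    linarith
  have ccF : chF.card + 1 ≤ SF.card := by
    have h0 : (0 : ℕ) ∉ chF := by simp [hchF]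
    have hmemm : ∀ j ∈ insert 0 chF, j < m := by
      intro j hj
      rcases Finset.mem_insert.1 hj with rfl | hj
      · omega
      · rw [hchF, Finset.mem_filter, Finset.mem_range] at hj; exact hj.1
    have hsub : ∀ kk ∈ insert 0 chF, Lf kk ∈ SF := by
      intro kk hkk
      exact Finset.mem_image_of_mem _ (Finset.mem_range.2 (hmemm kk hkk))
    have hinj : Set.InjOn Lf ↑(insert 0 chF) := by
      intro k hk k' hk' he
      by_contra hne
      have hk2 := Finset.mem_coe.1 hk
      have hk2' := Finset.mem_coe.1 hk'
      rcases lt_or_gt_of_ne hne with h | h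
      · have hc' : k' ∈ chF := by
          rcases Finset.mem_insert.1 hk2' with rfl | hh
          · omega
          · exact hh
        exact (ne_of_lt (injF k k' h hc' (hmemm k hk2))) (congrArg Prod.fst he)
      · have hc' : k ∈ chF := by
          rcases Finset.mem_insert.1 hk2 with rfl | hh
          · omega
          · exact hh
        exact (ne_of_lt (injF k' k h hc' (hmemm k' hk2'))) (congrArg Prod.fst he.symm)
    calc chF.card + 1 = (insert 0 chF).card := (Finset.card_insert_of_notMem h0).symm
      _ ≤ SF.card := Finset.card_le_card_of_injOn Lf hsub hinj
  have ccG : chG.card + 1 ≤ SG.card := by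
    have h0 : (0 : ℕ) ∉ chG := by simp [hchG]
    have hmemm : ∀ j ∈ insert 0 chG, j < m := by
      intro j hj
      rcases Finset.mem_insert.1 hj with rfl | hj
      · omega
      · rw [hchG, Finset.mem_filter, Finset.mem_range] at hj; exact hj.1
    have hsub : ∀ kk ∈ insert 0 chG, Lg kk ∈ SG := by
      intro kk hkk
      exact Finset.mem_image_of_mem _ (Finset.mem_range.2 (hmemm kk hkk))
    have hinj : Set.InjOn Lg ↑(insert 0 chG) := by
      intro k hk k' hk' he
      by_contra hne
      have hk2 := Finset.mem_coe.1 hk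
      have hk2' := Finset.mem_coe.1 hk'
      rcases lt_or_gt_of_ne hne with h | h
      · have hc' : k' ∈ chG := by
          rcases Finset.mem_insert.1 hk2' with rfl | hh
          · omega
          · exact hh
        exact (ne_of_lt (injG k k' h hc' (hmemm k hk2))) (congrArg Prod.fst he.symm)
      · have hc' : k ∈ chG := by
          rcases Finset.mem_insert.1 hk2 with rfl | hh
          · omega
          · exact hh
        exact (ne_of_lt (injG k' k h hc' (hmemm k' hk2'))) (congrArg Prod.fst he)
    calc chG.card + 1 = (insert 0 chG).card := (Finset.card_insert_of_notMem h0).symm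
      _ ≤ SG.card := Finset.card_le_card_of_injOn Lg hsub hinj
  have hunion : (SF ∪ SG).card ≤ n := by
    have hsub : SF ∪ SG ⊆ univ.image (fun i : Fin n => (c i, d i)) := by
      intro L hL
      rcases Finset.mem_union.1 hL with h | h
      · obtain ⟨k, hk, rfl⟩ := Finset.mem_image.1 h
        exact Finset.mem_image.2 ⟨i0 k, mem_univ _, by rw [hLf]⟩
      · obtain ⟨k, hk, rfl⟩ := Finset.mem_image.1 h
        exact Finset.mem_image.2 ⟨j0 k, mem_univ _, by rw [hLg]⟩
    calc (SF ∪ SG).card ≤ (Finset.univ.image fun i : Fin n => (c i, d i)).card :=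
          Finset.card_le_card hsub
      _ ≤ (Finset.univ : Finset (Fin n)).card := Finset.card_image_le
      _ = n := by simp
  have hinter : (SF ∩ SG).card ≤ 2 := by
    by_contra hgt
    push_neg at hgt
    obtain ⟨a1, a2, a3, h1, h2, h3, h12, h13, h23⟩ := Finset.two_lt_card_iff.1 hgt
    have unpack : ∀ L ∈ SF ∩ SG, ∃ kF kG, kF < m ∧ kG < m ∧ Lf kF = L ∧ Lg kG = L := by
      intro L hL
      obtain ⟨kF, hkF, heF⟩ := Finset.mem_image.1 (Finset.mem_inter.1 hL).1
      obtain ⟨kG, hkG, heG⟩ := Finset.mem_image.1 (Finset.mem_inter.1 hL).2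
      exact ⟨kF, kG, Finset.mem_range.1 hkF, Finset.mem_range.1 hkG, heF, heG⟩
    obtain ⟨kF1, kG1, hkF1, hkG1, heF1, heG1⟩ := unpack a1 h1
    obtain ⟨kF2, kG2, hkF2, hkG2, heF2, heG2⟩ := unpack a2 h2
    obtain ⟨kF3, kG3, hkF3, hkG3, heF3, heG3⟩ := unpack a3 h3
    have deg : ∀ kk, kk < m → Lf kk = Lg kk → False := by
      intro kk hkk heq
      have hu : x kk < x (kk+1) := hxlt (by omega) (by omega)
      have hall : ∀ i : Fin n, (c i, d i) = Lf kk := by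
        intro i
        have hcc : (Lf kk).1 = (Lg kk).1 := by rw [heq]
        have hdd : (Lf kk).2 = (Lg kk).2 := by rw [heq]
        rw [hLfc, hLgc] at hcc
        rw [hLfd, hLgd] at hdd
        apply line_eq_of_two hu.ne
        · have hle := hi0 kk hkk i (x kk) ⟨le_rfl, hu.le⟩
          have hge := hj0 kk hkk i (x kk) ⟨le_rfl, hu.le⟩
          rw [← hcc, ← hdd] at hge
          simp only [ev, hLfc, hLfd]
          linarith
        · have hle := hi0 kk hkk i (x (kk+1)) ⟨hu.le, le_rfl⟩
          have hge := hj0 kk hkk i (x (kk+1)) ⟨hu.le, le_rfl⟩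
          rw [← hcc, ← hdd] at hge
          simp only [ev, hLfc, hLfd]
          linarith
      apply h12
      rw [← heF1, ← heF2]
      calc Lf kF1 = (c (i0 kF1), d (i0 kF1)) := by rw [hLf]
        _ = Lf kk := hall (i0 kF1)
        _ = (c (i0 kF2), d (i0 kF2)) := (hall (i0 kF2)).symm
        _ = Lf kF2 := by rw [hLf]
    have hne1 : kF1 ≠ kG1 := by
      intro h
      exact deg kF1 hkF1 (by rw [heF1, ← heG1, ← h])
    have hne2 : kF2 ≠ kG2 := by
      intro h
      exact deg kF2 hkF2 (by rw [heF2, ← heG2, ← h])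
    have hne3 : kF3 ≠ kG3 := by
      intro h
      exact deg kF3 hkF3 (by rw [heF3, ← heG3, ← h])
    have slopeF : ∀ (L L' : ℝ × ℝ) (kF kG kF' : ℕ), kF < m → kG < m → kF' < m →
        Lf kF = L → Lg kG = L → Lf kF' = L' → L ≠ L' → kF < kG → L.1 < L'.1 := by
      intro L L' kF kG kF' hkF hkG hkF' heF heG heF' hne hlt
      have hc' : c (i0 kF') = L'.1 := by rw [← heF', hLfc]
      have hd' : d (i0 kF') = L'.2 := by rw [← heF', hLfd]
      have hcF : c (i0 kF) = L.1 := by rw [← heF, hLfc]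
      have hdF : d (i0 kF) = L.2 := by rw [← heF, hLfd]
      have hcG : c (j0 kG) = L.1 := by rw [← heG, hLgc]
      have hdG : d (j0 kG) = L.2 := by rw [← heG, hLgd]
      have hu12 : x kF < x (kF+1) := hxlt (by omega) (by omega)
      have hu23 : x (kF+1) ≤ x kG := hxle (by omega) (by omega)
      have a1 : 0 ≤ (L.1 - L'.1) * x kF + (L.2 - L'.2) := by
        have := hi0 kF hkF (i0 kF') (x kF) ⟨le_rfl, hu12.le⟩
        rw [hc', hd', hcF, hdF] at this
        nlinarith [this]
      have a2 : 0 ≤ (L.1 - L'.1) * x (kF+1) + (L.2 - L'.2) := by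
        have := hi0 kF hkF (i0 kF') (x (kF+1)) ⟨hu12.le, le_rfl⟩
        rw [hc', hd', hcF, hdF] at this
        nlinarith [this]
      have a3 : (L.1 - L'.1) * x kG + (L.2 - L'.2) ≤ 0 := by
        have := hj0 kG hkG (i0 kF') (x kG) ⟨le_rfl, (hxlt (by omega) (by omega)).le⟩
        rw [hc', hd', hcG, hdG] at this
        nlinarith [this]
      rcases slope_neg hu12 hu23 a1 a2 a3 with h | ⟨hh1, hh2⟩
      · linarith
      · exact absurd (Prod.ext (by linarith) (by linarith)) hne
    have slopeR : ∀ (L L' : ℝ × ℝ) (kF kG kF' : ℕ), kF < m → kG < m → kF' < m →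
        Lf kF = L → Lg kG = L → Lf kF' = L' → L ≠ L' → kG < kF → L'.1 < L.1 := by
      intro L L' kF kG kF' hkF hkG hkF' heF heG heF' hne hlt
      have hc' : c (i0 kF') = L'.1 := by rw [← heF', hLfc]
      have hd' : d (i0 kF') = L'.2 := by rw [← heF', hLfd]
      have hcF : c (i0 kF) = L.1 := by rw [← heF, hLfc]
      have hdF : d (i0 kF) = L.2 := by rw [← heF, hLfd]
      have hcG : c (j0 kG) = L.1 := by rw [← heG, hLgc]
      have hdG : d (j0 kG) = L.2 := by rw [← heG, hLgd]
      have hu12 : x kG < x (kG+1) := hxlt (by omega) (by omega)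
      have hu23 : x (kG+1) ≤ x kF := hxle (by omega) (by omega)
      have a1 : 0 ≤ (L'.1 - L.1) * x kG + (L'.2 - L.2) := by
        have := hj0 kG hkG (i0 kF') (x kG) ⟨le_rfl, hu12.le⟩
        rw [hc', hd', hcG, hdG] at this
        nlinarith [this]
      have a2 : 0 ≤ (L'.1 - L.1) * x (kG+1) + (L'.2 - L.2) := by
        have := hj0 kG hkG (i0 kF') (x (kG+1)) ⟨hu12.le, le_rfl⟩
        rw [hc', hd', hcG, hdG] at this
        nlinarith [this]
      have a3 : (L'.1 - L.1) * x kF + (L'.2 - L.2) ≤ 0 := by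
        have := hi0 kF hkF (i0 kF') (x kF) ⟨le_rfl, (hxlt (by omega) (by omega)).le⟩
        rw [hc', hd', hcF, hdF] at this
        nlinarith [this]
      rcases slope_neg hu12 hu23 a1 a2 a3 with h | ⟨hh1, hh2⟩
      · linarith
      · exact absurd (Prod.ext (by linarith) (by linarith)) hne.symm
    have fall_fall : ∀ (L L' : ℝ × ℝ) (kF kG kF' kG' : ℕ), kF < m → kG < m → kF' < m → kG' < m →
        Lf kF = L → Lg kG = L → Lf kF' = L' → Lg kG' = L' → L ≠ L' → kF < kG → kF' < kG' → False := by
      intro L L' kF kG kF' kG' hkF hkG hkF' hkG' heF heG heF' heG' hne hlt hlt'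
      have q1 := slopeF L L' kF kG kF' hkF hkG hkF' heF heG heF' hne hlt
      have q2 := slopeF L' L kF' kG' kF hkF' hkG' hkF heF' heG' heF hne.symm hlt'
      linarith
    have rise_rise : ∀ (L L' : ℝ × ℝ) (kF kG kF' kG' : ℕ), kF < m → kG < m → kF' < m → kG' < m →
        Lf kF = L → Lg kG = L → Lf kF' = L' → Lg kG' = L' → L ≠ L' → kG < kF → kG' < kF' → False := by
      intro L L' kF kG kF' kG' hkF hkG hkF' hkG' heF heG heF' heG' hne hlt hlt'
      have q1 := slopeR L L' kF kG kF' hkF hkG hkF' heF heG heF' hne hlt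
      have q2 := slopeR L' L kF' kG' kF hkF' hkG' hkF heF' heG' heF hne.symm hlt'
      linarith
    rcases lt_or_gt_of_ne hne1 with f1 | r1 <;> rcases lt_or_gt_of_ne hne2 with f2 | r2 <;>
      rcases lt_or_gt_of_ne hne3 with f3 | r3
    · exact fall_fall a1 a2 kF1 kG1 kF2 kG2 hkF1 hkG1 hkF2 hkG2 heF1 heG1 heF2 heG2 h12 f1 f2
    · exact fall_fall a1 a2 kF1 kG1 kF2 kG2 hkF1 hkG1 hkF2 hkG2 heF1 heG1 heF2 heG2 h12 f1 f2
    · exact fall_fall a1 a3 kF1 kG1 kF3 kG3 hkF1 hkG1 hkF3 hkG3 heF1 heG1 heF3 heG3 h13 f1 f3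
    · exact rise_rise a2 a3 kF2 kG2 kF3 kG3 hkF2 hkG2 hkF3 hkG3 heF2 heG2 heF3 heG3 h23 r2 r3
    · exact fall_fall a2 a3 kF2 kG2 kF3 kG3 hkF2 hkG2 hkF3 hkG3 heF2 heG2 heF3 heG3 h23 f2 f3
    · exact rise_rise a1 a3 kF1 kG1 kF3 kG3 hkF1 hkG1 hkF3 hkG3 heF1 heG1 heF3 heG3 h13 r1 r3
    · exact rise_rise a1 a2 kF1 kG1 kF2 kG2 hkF1 hkG1 hkF2 hkG2 heF1 heG1 heF2 heG2 h12 r1 r2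
    · exact rise_rise a1 a2 kF1 kG1 kF2 kG2 hkF1 hkG1 hkF2 hkG2 heF1 heG1 heF2 heG2 h12 r1 r2
  -- the merged partition
  set kept : Finset ℕ :=
    insert 0 (insert m ((range m).filter (fun k => 0 < k ∧ Ls (k-1) ≠ Ls k))) with hkept
  have hk0 : (0 : ℕ) ∈ kept := Finset.mem_insert_self _ _
  have hkm : m ∈ kept := Finset.mem_insert_of_mem (Finset.mem_insert_self _ _)
  have hkle : ∀ k ∈ kept, k ≤ m := by
    intro k hk
    rcases Finset.mem_insert.1 hk with rfl | hk
    · omega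
    rcases Finset.mem_insert.1 hk with rfl | hk
    · exact le_rfl
    · have := (Finset.mem_filter.1 hk).1
      rw [Finset.mem_range] at this
      omega
  have hkcard2 : 2 ≤ kept.card := Finset.one_lt_card.2 ⟨0, hk0, m, hkm, by omega⟩
  have hkcard : kept.card ≤ n + 2 := by
    have hsub : kept ⊆ insert 0 (insert m (chF ∪ chG)) := by
      intro k hk
      rcases Finset.mem_insert.1 hk with rfl | hk
      · exact Finset.mem_insert_self _ _
      rcases Finset.mem_insert.1 hk with rfl | hk
      · exact Finset.mem_insert_of_mem (Finset.mem_insert_self _ _)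
      refine Finset.mem_insert_of_mem (Finset.mem_insert_of_mem ?_)
      obtain ⟨hkr, hk0', hkne⟩ := Finset.mem_filter.1 hk
      by_cases hf : Lf (k-1) = Lf k
      · refine Finset.mem_union_right _ (Finset.mem_filter.2 ⟨hkr, hk0', ?_⟩)
        intro hgeq
        exact hkne (by rw [hLs]; simp only; rw [hf, hgeq])
      · exact Finset.mem_union_left _ (Finset.mem_filter.2 ⟨hkr, hk0', hf⟩)
    have e1 := Finset.card_le_card hsub
    have e2 := Finset.card_insert_le 0 (insert m (chF ∪ chG))
    have e3 := Finset.card_insert_le m (chF ∪ chG)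
    have e4 := Finset.card_union_le chF chG
    have e5 := Finset.card_union_add_card_inter SF SG
    omega
  set K : ℕ := kept.card - 1 with hKdef
  have hycard : kept.card = K + 1 := by omega
  set y : ℕ → ℕ := fun k => (kept.sort (· ≤ ·)).getD k 0 with hydef
  have hylt : ∀ {k k'}, k < k' → k' ≤ K → y k < y k' := by
    intro k k' h h'
    exact sorted_getD_lt kept 0 h (by omega)
  have hyle : ∀ {k k'}, k ≤ k' → k' ≤ K → y k ≤ y k' := by
    intro k k' h h'
    rcases eq_or_lt_of_le h with rfl | h2
    · exact le_rfl
    · exact (hylt h2 h').le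
  have hymem : ∀ k, k ≤ K → y k ∈ kept := fun k hk => sorted_getD_mem kept 0 (by omega)
  have hym : ∀ k, k ≤ K → y k ≤ m := fun k hk => hkle _ (hymem k hk)
  have hysurj : ∀ q ∈ kept, ∃ k, k ≤ K ∧ y k = q := by
    intro q hq
    obtain ⟨k, hk, he⟩ := sorted_getD_surj kept 0 hq
    exact ⟨k, by omega, he⟩
  have hy0 : y 0 = 0 := by
    obtain ⟨k, hk, he⟩ := hysurj 0 hk0
    rcases Nat.eq_zero_or_pos k with rfl | h
    · exact he
    · have := hylt h hk
      omega
  have hyK : y K = m := by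
    obtain ⟨k, hk, he⟩ := hysurj m hkm
    rcases eq_or_lt_of_le hk with rfl | h
    · exact he
    · have := hylt h le_rfl
      have := hym K le_rfl
      omega
  refine ⟨K, fun k => x (y k), by omega, by omega, ?_, ?_, ?_, ?_⟩
  · intro k k' hkk' hk'
    exact hxlt (hylt hkk' hk') (hym k' hk')
  · show x (y 0) = a
    rw [hy0, hx0]
  · show x (y K) = b
    rw [hyK, hxm]
  · intro k hk
    have hyk : y k < y (k+1) := hylt (lt_add_one k) (by omega)
    have hykm : y (k+1) ≤ m := hym (k+1) (by omega)
    have hcons : ∀ q, y k < q → q < y (k+1) → q ∉ kept := by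
      intro q hq1 hq2 hq
      obtain ⟨j, hj, he⟩ := hysurj q hq
      rcases lt_trichotomy j k with h | rfl | h
      · have := hyle h.le (by omega)
        omega
      · omega
      · have : k + 1 ≤ j := h
        have := hyle this hj
        omega
    have hconst : ∀ q, y k ≤ q → q < y (k+1) → Ls q = Ls (y k) := by
      intro q
      induction q with
      | zero =>
        intro h1 _
        rw [Nat.le_zero.1 h1]
      | succ q ih =>
        intro h1 h2
        rcases eq_or_lt_of_le h1 with he | hlt2
        · rw [← he]
        · have hq1 : q + 1 ∉ kept := hcons (q+1) (by omega) h2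
          have hrange : q + 1 ∈ range m := Finset.mem_range.2 (by omega)
          have hstep : Ls q = Ls (q+1) := by
            by_contra hne
            apply hq1
            rw [hkept]
            refine Finset.mem_insert_of_mem (Finset.mem_insert_of_mem
              (Finset.mem_filter.2 ⟨hrange, by omega, ?_⟩))
            simpa using hne
          rw [← hstep]
          exact ih (by omega) (by omega)
    refine ⟨(Ls (y k)).1 / 2, (Ls (y k)).2 / 2, ?_⟩
    intro t ht
    obtain ⟨q, hq1, hq2, hq3⟩ := locate x (y k) (y (k+1)) hyk t ht
    have hqm : q < m := by omega
    rw [hIeval q hqm t hq3, hconst q hq1 hq2]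
    ring

lemma PW.concat {I : ℝ → ℝ} {K1 K2 : ℕ} {s1 s2 : ℕ → ℝ} {A B C : ℝ}
    (h1 : PW I K1 s1 A B) (h2 : PW I K2 s2 B C) :
    PW I (K1 + K2) (fun k => if k ≤ K1 then s1 k else s2 (k - K1)) A C := by
  obtain ⟨m1, a1, b1, p1⟩ := h1
  obtain ⟨m2, a2, b2, p2⟩ := h2
  have key : ∀ k, K1 ≤ k → (if k ≤ K1 then s1 k else s2 (k - K1)) = s2 (k - K1) := by
    intro k hk
    rcases eq_or_lt_of_le hk with h | h
    · rw [if_pos h.symm.le, ← h, Nat.sub_self, b1, a2]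
    · rw [if_neg (by omega)]
  have key2 : ∀ k, k ≤ K1 → (if k ≤ K1 then s1 k else s2 (k - K1)) = s1 k := fun k hk => if_pos hk
  refine ⟨?_, ?_, ?_, ?_⟩
  · intro k k' hkk' hk'
    beta_reduce
    rcases le_or_gt k' K1 with h | h
    · rw [key2 k (by omega), key2 k' h]
      exact m1 k k' hkk' h
    · rcases le_or_gt K1 k with h2 | h2
      · rw [key k h2, key k' h.le]
        exact m2 _ _ (by omega) (by omega)
      · rw [key2 k h2.le, key k' h.le]
        have e1 : s1 k < s1 K1 := m1 k K1 h2 le_rfl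
        have e2 : s2 0 < s2 (k' - K1) := m2 0 (k' - K1) (by omega) (by omega)
        rw [b1] at e1; rw [a2] at e2; linarith
  · beta_reduce
    rw [key2 0 (Nat.zero_le _), a1]
  · beta_reduce
    rw [key (K1 + K2) (by omega), Nat.add_sub_cancel_left, b2]
  · intro k hk
    beta_reduce
    rcases lt_or_ge k K1 with h | h
    · obtain ⟨p, q, hpq⟩ := p1 k h
      refine ⟨p, q, ?_⟩
      rw [key2 k h.le, key2 (k + 1) (by omega)]
      exact hpq
    · obtain ⟨p, q, hpq⟩ := p2 (k - K1) (by omega)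
      refine ⟨p, q, ?_⟩
      rw [key k h, key (k + 1) (by omega)]
      have e : k + 1 - K1 = (k - K1) + 1 := by omega
      rw [e]
      exact hpq

end Stmt7Aux

/-- Lemma 1 of the paper: the ideal trajectory of `n` piecewise-linear trajectories in ℝ¹
with breakpoints `t_0 < … < t_τ` is piecewise affine with at most `τ(n + 2)` pieces. -/
theorem stmt7 (n τ : ℕ) (hn : 1 ≤ n) (hτ : 1 ≤ τ)
    (ts : Fin (τ + 1) → ℝ) (hts : StrictMono ts)
    (σ : Fin n → ℝ → ℝ) (hσc : ∀ i, Continuous (σ i))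
    (hσaff : ∀ (i : Fin n) (j : Fin τ), ∃ c d : ℝ,
      ∀ t ∈ Set.Icc (ts j.castSucc) (ts j.succ), σ i t = c * t + d)
    (I : ℝ → ℝ)
    (hI : ∀ t, I t = (Finset.univ.sup' ⟨⟨0, hn⟩, Finset.mem_univ _⟩ (fun i => σ i t)
        + Finset.univ.inf' ⟨⟨0, hn⟩, Finset.mem_univ _⟩ (fun i => σ i t)) / 2) :
    ∃ K : ℕ, K ≤ τ * (n + 2) ∧
      ∃ s : Fin (K + 1) → ℝ, StrictMono s ∧ s 0 = ts 0 ∧ s (Fin.last K) = ts (Fin.last τ) ∧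
        ∀ k : Fin K, ∃ c d : ℝ,
          ∀ t ∈ Set.Icc (s k.castSucc) (s k.succ), I t = c * t + d := by
  classical
  have He : (Finset.univ : Finset (Fin n)).Nonempty := ⟨⟨0, hn⟩, Finset.mem_univ _⟩
  choose cc dd hcd using hσaff
  have piece : ∀ j : Fin τ, ∃ K s, 1 ≤ K ∧ K ≤ n + 1 ∧
      Stmt7Aux.PW I K s (ts j.castSucc) (ts j.succ) := by
    intro j
    have hab : ts j.castSucc < ts j.succ := hts (Fin.castSucc_lt_succ : j.castSucc < j.succ)
    refine Stmt7Aux.interval_pw hn (fun i => cc i j) (fun i => dd i j) hab He I ?_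
    intro t ht
    have hc : ∀ i : Fin n, σ i t = cc i j * t + dd i j := fun i => hcd i j t ht
    have h1 : Finset.univ.sup' He (fun i => σ i t)
        = Finset.univ.sup' He (fun i => cc i j * t + dd i j) :=
      Finset.sup'_congr He rfl (fun i _ => hc i)
    have h2 : Finset.univ.inf' He (fun i => σ i t)
        = Finset.univ.inf' He (fun i => cc i j * t + dd i j) :=
      Finset.inf'_congr He rfl (fun i _ => hc i)
    rw [hI t, h1, h2]
  have main : ∀ j : ℕ, ∀ hj : j ≤ τ, 1 ≤ j → ∃ K s, 1 ≤ K ∧ K ≤ j * (n + 1) ∧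
      Stmt7Aux.PW I K s (ts 0) (ts ⟨j, Nat.lt_succ_of_le hj⟩) := by
    intro j
    induction j with
    | zero => intro hj h1; omega
    | succ j ih =>
      intro hj h1
      rcases Nat.eq_zero_or_pos j with rfl | hj0
      · obtain ⟨K, s, hK1, hK2, hpw⟩ := piece ⟨0, by omega⟩
        have ecast : (⟨0, by omega⟩ : Fin τ).castSucc = 0 := by
          ext; simp
        rw [ecast] at hpw
        exact ⟨K, s, hK1, by omega, hpw⟩
      · obtain ⟨K1, s1, h11, h12, hpw1⟩ := ih (by omega) hj0
        obtain ⟨K2, s2, h21, h22, hpw2⟩ := piece ⟨j, by omega⟩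
        refine ⟨K1 + K2, _, by omega, ?_, hpw1.concat hpw2⟩
        have e : (j + 1) * (n + 1) = j * (n + 1) + (n + 1) := by ring
        omega
  obtain ⟨K, s, hK1, hKle, hmono, hs0, hsK, hpieces⟩ := main τ le_rfl hτ
  refine ⟨K, ?_, fun k => s k.val, ?_, ?_, ?_, ?_⟩
  · calc K ≤ τ * (n + 1) := hKle
      _ ≤ τ * (n + 2) := Nat.mul_le_mul_left _ (by omega)
  · intro k k' h
    exact hmono k.val k'.val h (Nat.lt_succ_iff.mp k'.isLt)
  · show s (0 : Fin (K + 1)).val = ts 0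
    rw [Fin.val_zero]
    exact hs0
  · show s (Fin.last K).val = ts (Fin.last τ)
    rw [Fin.val_last]
    exact hsK
  · intro k
    obtain ⟨p, q, hpq⟩ := hpieces k.val k.isLt
    exact ⟨p, q, fun t ht => hpq t ht⟩
end

section
/- Let d ≥ 1 and let f_1, g_1, f_2, g_2 : ℝ → ℝ^d (with the Euclidean metric) be affine ma设ps. Define h_1(t) = dist(f_1(t), g_1(t)) and h_2(t) = dist(f_2(t), g_2(t)). If h_1 and h_2 are not equal as functions on ℝ, then the set {t ∈ ℝ : h_1(t) = h_2(t)} has at most 2 elements. -/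
open Polynomial

lemma aux_norm_sq {E : Type*} [NormedAddCommGroup E] [InnerProductSpace ℝ E]
    (a b : E) (t : ℝ) :
    ‖a + t • b‖ ^ 2 = ‖a‖ ^ 2 + (2 * inner ℝ a b) * t + ‖b‖ ^ 2 * t ^ 2 := by
  rw [norm_add_sq_real, real_inner_smul_right, norm_smul]
  simp [mul_pow]
  ring

/-- Two distance functions between affinely moving entities in ℝ^d either coincide
identically or agree at no more than 2 times. -/
theorem stmt9 (d : ℕ) (hd : 1 ≤ d)
    (f₁ g₁ f₂ g₂ : ℝ → EuclideanSpace ℝ (Fin d))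
    (p₁ v₁ q₁ w₁ p₂ v₂ q₂ w₂ : EuclideanSpace ℝ (Fin d))
    (hf₁ : ∀ t : ℝ, f₁ t = p₁ + t • v₁) (hg₁ : ∀ t : ℝ, g₁ t = q₁ + t • w₁)
    (hf₂ : ∀ t : ℝ, f₂ t = p₂ + t • v₂) (hg₂ : ∀ t : ℝ, g₂ t = q₂ + t • w₂)
    (hne : (fun t => dist (f₁ t) (g₁ t)) ≠ (fun t => dist (f₂ t) (g₂ t))) :
    {t : ℝ | dist (f₁ t) (g₁ t) = dist (f₂ t) (g₂ t)}.encard ≤ 2 := by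
  set a₁ := p₁ - q₁
  set b₁ := v₁ - w₁
  set a₂ := p₂ - q₂
  set b₂ := v₂ - w₂
  have hd1 : ∀ t : ℝ, dist (f₁ t) (g₁ t) ^ 2
      = ‖a₁‖ ^ 2 + (2 * inner ℝ a₁ b₁) * t + ‖b₁‖ ^ 2 * t ^ 2 := by
    intro t
    rw [dist_eq_norm, hf₁, hg₁]
    have : p₁ + t • v₁ - (q₁ + t • w₁) = a₁ + t • b₁ := by
      simp [a₁, b₁, smul_sub]; abel
    rw [this, aux_norm_sq]
  have hd2 : ∀ t : ℝ, dist (f₂ t) (g₂ t) ^ 2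
      = ‖a₂‖ ^ 2 + (2 * inner ℝ a₂ b₂) * t + ‖b₂‖ ^ 2 * t ^ 2 := by
    intro t
    rw [dist_eq_norm, hf₂, hg₂]
    have : p₂ + t • v₂ - (q₂ + t • w₂) = a₂ + t • b₂ := by
      simp [a₂, b₂, smul_sub]; abel
    rw [this, aux_norm_sq]
  set P : ℝ[X] := C (‖a₁‖ ^ 2 - ‖a₂‖ ^ 2)
      + C (2 * inner ℝ a₁ b₁ - 2 * inner ℝ a₂ b₂) * X
      + C (‖b₁‖ ^ 2 - ‖b₂‖ ^ 2) * X ^ 2 with hP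
  have hev : ∀ t : ℝ, P.eval t = dist (f₁ t) (g₁ t) ^ 2 - dist (f₂ t) (g₂ t) ^ 2 := by
    intro t
    rw [hd1, hd2, hP]
    simp only [eval_add, eval_mul, eval_C, eval_X, eval_pow]
    ring
  have hPne : P ≠ 0 := by
    intro h0
    apply hne
    funext t
    have h := hev t
    rw [h0] at h
    simp at h
    have h2 : dist (f₁ t) (g₁ t) ^ 2 = dist (f₂ t) (g₂ t) ^ 2 := by linarith
    nlinarith [dist_nonneg (x := f₁ t) (y := g₁ t), dist_nonneg (x := f₂ t) (y := g₂ t)]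
  have hsub : {t : ℝ | dist (f₁ t) (g₁ t) = dist (f₂ t) (g₂ t)}
      ⊆ (P.roots.toFinset : Set ℝ) := by
    intro t ht
    simp only [Set.mem_setOf_eq] at ht
    simp only [Finset.coe_sort_coe, Multiset.mem_toFinset, Finset.mem_coe]
    rw [Polynomial.mem_roots hPne]
    have := hev t
    rw [ht] at this
    simpa [Polynomial.IsRoot] using this
  calc {t : ℝ | dist (f₁ t) (g₁ t) = dist (f₂ t) (g₂ t)}.encard
      ≤ (P.roots.toFinset : Set ℝ).encard := Set.encard_mono hsub
    _ = P.roots.toFinset.card := Set.encard_coe_eq_coe_finsetCard _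
    _ ≤ 2 := by
        have h1 : P.roots.toFinset.card ≤ Multiset.card P.roots :=
          Multiset.toFinset_card_le _
        have h2 : Multiset.card P.roots ≤ P.natDegree := Polynomial.card_roots' P
        have h3 : P.natDegree ≤ 2 := by
          rw [hP]; compute_degree
        exact_mod_cast Nat.cast_le.mpr (h1.trans (h2.trans h3))
end

section
/- Let n ≥ 1, let a < b be reals, and let f_1, …, f_n : ℝ → ℝ be continuous functions such that for all i ≠ j the set {t ∈ [a,b] : f_i(t) = f_j(t)} has at most 2 elements. Then there exist k ≤ 2n − 1, a partition a = s_0 < s_1 < … < s_k = b, and indices i_1, …, i_k such that for each j ∈ {1,…,k} and every t ∈ [s_{j−1}, s_j], max_{1≤i≤n} f_i(t) = f_{i_j}(t). -/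
lemma ds2 {n : ℕ} (m : ℕ) (c : ℕ → Fin n)
    (hadj : ∀ j, j + 1 < m → c j ≠ c (j + 1))
    (habab : ∀ p1 p2 p3 p4, p1 < p2 → p2 < p3 → p3 < p4 → p4 < m →
      c p1 = c p3 → c p2 = c p4 → c p1 ≠ c p2 → False) :
    m ≤ 2 * n - 1 := by
  have hn : 0 < n := (c 0).pos
  classical
  set F := (Finset.range m).filter (fun j => ∀ p < j, c p ≠ c j) with hF
  set NF := (Finset.range m).filter (fun j => ¬ ∀ p < j, c p ≠ c j) with hNF
  have hcard : F.card + NF.card = m := by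
    rw [hF, hNF, Finset.card_filter_add_card_filter_not, Finset.card_range]
  have hmemNF : ∀ j ∈ NF, j < m ∧ 1 ≤ j ∧ ∃ p < j, c p = c j := by
    intro j hj
    rw [hNF, Finset.mem_filter, Finset.mem_range] at hj
    obtain ⟨hjm, hj2⟩ := hj
    push_neg at hj2
    obtain ⟨p, hp, hcp⟩ := hj2
    exact ⟨hjm, by omega, p, hp, hcp⟩
  -- key: if j is a non-first occurrence, then j-1 is the last occurrence of c (j-1)
  have hlast : ∀ j ∈ NF, ∀ q, j - 1 < q → q < m → c q ≠ c (j - 1) := by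
    intro j hj q hq1 hq2 hcq
    obtain ⟨hjm, hj1, p, hp, hcp⟩ := hmemNF j hj
    obtain ⟨j', rfl⟩ : ∃ j', j = j' + 1 := ⟨j - 1, by omega⟩
    simp only [Nat.add_sub_cancel] at hq1 hcq
    have hne : c j' ≠ c (j' + 1) := hadj j' hjm
    have hpj : p ≠ j' := by intro h; subst h; exact hne hcp
    have hqj : q ≠ j' + 1 := by intro h; rw [h] at hcq; exact hne hcq.symm
    exact habab p j' (j' + 1) q (by omega) (by omega) (by omega) hq2 hcp hcq.symm
      (fun h => hne (h.symm.trans hcp))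
  have hFle : F.card ≤ n := by
    have := Finset.card_le_card_of_injOn (fun j => c j)
      (fun a _ => Finset.mem_univ (c a)) (s := F) (t := (Finset.univ : Finset (Fin n))) ?_
    · simpa using this
    · intro j hj j' hj' hcc
      rw [Finset.mem_coe, hF, Finset.mem_filter] at hj hj'
      simp only at hcc
      rcases lt_trichotomy j j' with h | h | h
      · exact absurd hcc (hj'.2 j h)
      · exact h
      · exact absurd hcc.symm (hj.2 j' h)
  have hNFle : NF.card ≤ n - 1 := by
    rcases Nat.eq_zero_or_pos m with rfl | hm
    · have : NF = ∅ := by rw [hNF]; simp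
      simp [this]
    · have := Finset.card_le_card_of_injOn (fun j => c (j - 1))
        (s := NF) (t := (Finset.univ : Finset (Fin n)).erase (c (m - 1))) ?_ ?_
      · calc NF.card ≤ _ := this
          _ ≤ n - 1 := by rw [Finset.card_erase_of_mem (Finset.mem_univ _)]; simp
      · intro j hj
        obtain ⟨hjm, hj1, _⟩ := hmemNF j hj
        exact Finset.mem_erase.2
          ⟨(hlast j hj (m - 1) (by omega) (by omega)).symm, Finset.mem_univ _⟩
      · intro j hj j' hj' hcc
        rw [Finset.mem_coe] at hj hj'
        simp only at hcc
        obtain ⟨h1m, h11, _⟩ := hmemNF j hj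
        obtain ⟨h2m, h21, _⟩ := hmemNF j' hj'
        rcases lt_trichotomy j j' with h | h | h
        · exact absurd hcc.symm (hlast j hj (j' - 1) (by omega) (by omega))
        · exact h
        · exact absurd hcc (hlast j' hj' (j - 1) (by omega) (by omega))
  omega

lemma mergelem (n : ℕ) (hn : 1 ≤ n) (a b : ℝ) (f : Fin n → ℝ → ℝ)
    (hfc : ∀ i, Continuous (f i))
    (hpair : ∀ i j : Fin n, i ≠ j →
      {t ∈ Set.Icc a b | f i t = f j t}.encard ≤ 2) :
    ∀ m : ℕ, 1 ≤ m → ∀ t : ℕ → ℝ, ∀ c : ℕ → Fin n,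
      (∀ j, j < m → t j < t (j + 1)) → t 0 = a → t m = b →
      (∀ j, j < m → ∀ x ∈ Set.Icc (t j) (t (j + 1)), ∀ i, f i x ≤ f (c j) x) →
      ∃ k : ℕ, 1 ≤ k ∧ k ≤ 2 * n - 1 ∧
        ∃ s : Fin (k + 1) → ℝ, StrictMono s ∧ s 0 = a ∧ s (Fin.last k) = b ∧
          ∃ idx : Fin k → Fin n, ∀ j : Fin k,
            ∀ x ∈ Set.Icc (s j.castSucc) (s j.succ),
              Finset.univ.sup' ⟨⟨0, hn⟩, Finset.mem_univ _⟩ (fun i => f i x) = f (idx j) x := by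
  intro m
  induction m using Nat.strong_induction_on with
  | _ m ih =>
  intro hm t c hadj ht0 htm hP
  classical
  by_cases hex : ∃ j, j + 1 < m ∧ c j = c (j + 1)
  · -- merge two adjacent blocks with the same owner
    obtain ⟨j, hjm, hcj⟩ := hex
    set t' : ℕ → ℝ := fun l => if l ≤ j then t l else t (l + 1) with ht'
    set c' : ℕ → Fin n := fun l => if l ≤ j then c l else c (l + 1) with hc'
    have hm2 : 2 ≤ m := by omega
    refine ih (m - 1) (by omega) (by omega) t' c' ?_ ?_ ?_ ?_
    · intro l hl
      simp only [ht']
      split_ifs with h1 h2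
      · exact hadj l (by omega)
      · have : l = j := by omega
        subst this
        exact lt_trans (hadj l (by omega)) (hadj (l + 1) (by omega))
      · omega
      · exact hadj (l + 1) (by omega)
    · simp only [ht', if_pos (Nat.zero_le j)]; exact ht0
    · have hj1 : ¬ (m - 1 ≤ j) := by omega
      simp only [ht', if_neg hj1]
      rw [(by omega : m - 1 + 1 = m)]; exact htm
    · intro l hl x hx i
      simp only [ht', hc'] at hx ⊢
      rcases le_or_gt l j with h1 | h1
      · rcases lt_or_eq_of_le h1 with h2 | h2
        · rw [if_pos h1] at *
          rw [if_pos (by omega : l + 1 ≤ j)] at hx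
          exact hP l (by omega) x hx i
        · subst h2
          rw [if_pos h1] at *
          rw [if_neg (by omega : ¬ l + 1 ≤ l)] at hx
          rcases le_or_gt x (t (l + 1)) with h3 | h3
          · exact hP l (by omega) x ⟨hx.1, h3⟩ i
          · have := hP (l + 1) (by omega) x ⟨h3.le, hx.2⟩ i
            rwa [← hcj] at this
      · rw [if_neg (by omega : ¬ l ≤ j)] at *
        rw [if_neg (by omega : ¬ l + 1 ≤ j)] at hx
        exact hP (l + 1) (by omega) x hx i
  · -- all adjacent owners distinct: bound m directly
    push_neg at hex
    have hmono : ∀ p q, p ≤ q → q ≤ m → t p ≤ t q := by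
      have key : ∀ d p, p + d ≤ m → t p ≤ t (p + d) := by
        intro d
        induction d with
        | zero => intro p _; simp
        | succ d ihd =>
          intro p h
          calc t p ≤ t (p + d) := ihd p (by omega)
            _ ≤ t (p + d + 1) := (hadj (p + d) (by omega)).le
      intro p q hpq hqm
      have := key (q - p) p (by omega)
      rwa [(by omega : p + (q - p) = q)] at this
    have hta : ∀ p, p ≤ m → a ≤ t p := fun p hp => ht0 ▸ hmono 0 p (Nat.zero_le p) hp
    have htb : ∀ p, p ≤ m → t p ≤ b := fun p hp => htm ▸ hmono p m hp le_rfl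
    -- strict domination of the owner over any other fixed function at some interior point
    have hstrict : ∀ p, p < m → ∀ w : Fin n, w ≠ c p →
        ∃ x ∈ Set.Ioo (t p) (t (p + 1)), f w x < f (c p) x := by
      intro p hp w hw
      by_contra hcon
      push_neg at hcon
      have heq : ∀ x ∈ Set.Ioo (t p) (t (p + 1)), f w x = f (c p) x := by
        intro x hx
        exact le_antisymm (hP p hp x ⟨hx.1.le, hx.2.le⟩ w) (hcon x hx)
      have hsub : Set.Ioo (t p) (t (p + 1)) ⊆
          {x ∈ Set.Icc a b | f w x = f (c p) x} := by
        intro x hx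
        exact ⟨⟨le_trans (hta p (by omega)) hx.1.le,
          le_trans hx.2.le (htb (p + 1) (by omega))⟩, heq x hx⟩
      have hinf : (Set.Ioo (t p) (t (p + 1))).Infinite :=
        Set.infinite_coe_iff.mp (Set.Ioo.infinite (hadj p hp))
      have h1 : ({x ∈ Set.Icc a b | f w x = f (c p) x}).encard = ⊤ :=
        (hinf.mono hsub).encard_eq
      have := hpair w (c p) hw
      rw [h1] at this
      exact absurd this (by norm_num)
    -- no abab pattern
    have habab : ∀ p1 p2 p3 p4, p1 < p2 → p2 < p3 → p3 < p4 → p4 < m →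
        c p1 = c p3 → c p2 = c p4 → c p1 ≠ c p2 → False := by
      intro p1 p2 p3 p4 h12 h23 h34 h4m hc13 hc24 hne
      obtain ⟨x1, hx1, hfx1⟩ := hstrict p1 (by omega) (c p2) (Ne.symm hne)
      obtain ⟨x2, hx2, hfx2⟩ := hstrict p2 (by omega) (c p1) hne
      obtain ⟨x3, hx3, hfx3⟩ := hstrict p3 (by omega) (c p2) (hc13 ▸ Ne.symm hne)
      obtain ⟨x4, hx4, hfx4⟩ := hstrict p4 h4m (c p1) (hc24 ▸ hne)
      rw [← hc13] at hfx3
      rw [← hc24] at hfx4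
      have hx12 : x1 < x2 := lt_of_lt_of_le hx1.2 (le_trans (hmono (p1+1) p2 (by omega) (by omega)) hx2.1.le)
      have hx23 : x2 < x3 := lt_of_lt_of_le hx2.2 (le_trans (hmono (p2+1) p3 (by omega) (by omega)) hx3.1.le)
      have hx34 : x3 < x4 := lt_of_lt_of_le hx3.2 (le_trans (hmono (p3+1) p4 (by omega) (by omega)) hx4.1.le)
      set g : ℝ → ℝ := fun x => f (c p1) x - f (c p2) x with hg
      have hgc : Continuous g := (hfc (c p1)).sub (hfc (c p2))
      have hz1 : ∃ z ∈ Set.Ioo x1 x2, g z = 0 := by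
        have := intermediate_value_Ioo' hx12.le hgc.continuousOn (a := x1) (b := x2)
        have h0 : (0 : ℝ) ∈ Set.Ioo (g x2) (g x1) := ⟨by simp [hg]; linarith, by simp [hg]; linarith⟩
        obtain ⟨z, hz, hgz⟩ := this h0
        exact ⟨z, hz, hgz⟩
      have hz2 : ∃ z ∈ Set.Ioo x2 x3, g z = 0 := by
        have := intermediate_value_Ioo hx23.le hgc.continuousOn (a := x2) (b := x3)
        have h0 : (0 : ℝ) ∈ Set.Ioo (g x2) (g x3) := ⟨by simp [hg]; linarith, by simp [hg]; linarith⟩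
        obtain ⟨z, hz, hgz⟩ := this h0
        exact ⟨z, hz, hgz⟩
      have hz3 : ∃ z ∈ Set.Ioo x3 x4, g z = 0 := by
        have := intermediate_value_Ioo' hx34.le hgc.continuousOn (a := x3) (b := x4)
        have h0 : (0 : ℝ) ∈ Set.Ioo (g x4) (g x3) := ⟨by simp [hg]; linarith, by simp [hg]; linarith⟩
        obtain ⟨z, hz, hgz⟩ := this h0
        exact ⟨z, hz, hgz⟩
      obtain ⟨z1, hz1m, hz1v⟩ := hz1
      obtain ⟨z2, hz2m, hz2v⟩ := hz2
      obtain ⟨z3, hz3m, hz3v⟩ := hz3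
      have hzab : ∀ z, x1 < z → z < x4 → z ∈ Set.Icc a b := by
        intro z h1 h2
        constructor
        · exact le_trans (hta p1 (by omega)) (le_trans hx1.1.le h1.le)
        · exact le_trans h2.le (le_trans hx4.2.le (htb (p4 + 1) (by omega)))
      set T := {x ∈ Set.Icc a b | f (c p1) x = f (c p2) x} with hT
      have hmemT : ∀ z, x1 < z → z < x4 → g z = 0 → z ∈ T := by
        intro z h1 h2 h3
        exact ⟨hzab z h1 h2, by simp [hg] at h3; linarith⟩
      have hz1T : z1 ∈ T := hmemT z1 hz1m.1 (by linarith [hz1m.2, hx23, hx34]) hz1v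
      have hz2T : z2 ∈ T := hmemT z2 (by linarith [hz2m.1, hx12]) (by linarith [hz2m.2, hx34]) hz2v
      have hz3T : z3 ∈ T := hmemT z3 (by linarith [hz3m.1, hx12, hx23]) hz3m.2 hz3v
      have hord : z1 < z2 ∧ z2 < z3 := ⟨by linarith [hz1m.2, hz2m.1], by linarith [hz2m.2, hz3m.1]⟩
      have h3le : ({z1, z2, z3} : Set ℝ) ⊆ T := by
        intro z hz
        rcases hz with rfl | rfl | rfl
        exacts [hz1T, hz2T, hz3T]
      have hne12 : z1 ≠ z2 := ne_of_lt hord.1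
      have hne13 : z1 ≠ z3 := ne_of_lt (lt_trans hord.1 hord.2)
      have hne23 : z2 ≠ z3 := ne_of_lt hord.2
      have hcard3 : ({z1, z2, z3} : Set ℝ).encard = 3 := by
        rw [Set.encard_insert_of_notMem (by simp [hne12, hne13]),
          Set.encard_pair hne23]
        rfl
      have hfin := (Set.encard_mono h3le).trans (hpair (c p1) (c p2) hne)
      rw [hcard3] at hfin
      exact absurd hfin (by norm_num)
    have hmN : m ≤ 2 * n - 1 := ds2 m c (fun j hj => hex j hj) habab
    refine ⟨m, hm, hmN, fun j => t j.val, ?_, ?_, ?_, fun j => c j.val, ?_⟩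
    · rw [Fin.strictMono_iff_lt_succ]
      intro i
      simpa using hadj i.val i.isLt
    · simpa using ht0
    · simpa using htm
    · intro j x hx
      have hx' : x ∈ Set.Icc (t j.val) (t (j.val + 1)) := by
        simpa using hx
      refine le_antisymm (Finset.sup'_le _ _ fun i _ => hP j.val j.isLt x hx' i) ?_
      exact Finset.le_sup' (fun i => f i x) (Finset.mem_univ (c j.val))

/-- The upper envelope of `n` continuous functions on `[a,b]` that pairwise intersect at
most twice consists of at most `2n − 1` pieces, each attained by a single function. -/
theorem stmt10 (n : ℕ) (hn : 1 ≤ n) (a b : ℝ) (hab : a < b)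
    (f : Fin n → ℝ → ℝ) (hfc : ∀ i, Continuous (f i))
    (hpair : ∀ i j : Fin n, i ≠ j →
      {t ∈ Set.Icc a b | f i t = f j t}.encard ≤ 2) :
    ∃ k : ℕ, 1 ≤ k ∧ k ≤ 2 * n - 1 ∧
      ∃ s : Fin (k + 1) → ℝ, StrictMono s ∧ s 0 = a ∧ s (Fin.last k) = b ∧
        ∃ idx : Fin k → Fin n, ∀ j : Fin k,
          ∀ t ∈ Set.Icc (s j.castSucc) (s j.succ),
            Finset.univ.sup' ⟨⟨0, hn⟩, Finset.mem_univ _⟩ (fun i => f i t) = f (idx j) t := by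
  classical
  set U : Fin n × Fin n → Set ℝ :=
    fun p => {x ∈ Set.Icc a b | p.1 ≠ p.2 ∧ f p.1 x = f p.2 x} with hU
  have hUfin : ∀ p, (U p).Finite := by
    intro p
    rcases eq_or_ne p.1 p.2 with h | h
    · have : U p = ∅ := by ext x; simp [hU, h]
      rw [this]; exact Set.finite_empty
    · have h2 := hpair p.1 p.2 h
      have hfin : {x ∈ Set.Icc a b | f p.1 x = f p.2 x}.Finite := by
        rw [← Set.encard_ne_top_iff]
        intro htop
        rw [htop] at h2
        exact absurd h2 (by norm_num)
      exact hfin.subset (fun x hx => ⟨hx.1, hx.2.2⟩)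
  have hSfin : (insert a (insert b (⋃ p, U p))).Finite :=
    ((Set.finite_iUnion hUfin).insert b).insert a
  set Fs := hSfin.toFinset with hFs
  have haF : a ∈ Fs := by rw [hFs, Set.Finite.mem_toFinset]; exact Set.mem_insert _ _
  have hbF : b ∈ Fs := by
    rw [hFs, Set.Finite.mem_toFinset]
    exact Set.mem_insert_of_mem _ (Set.mem_insert _ _)
  have hsubIcc : ∀ x ∈ Fs, x ∈ Set.Icc a b := by
    intro x hx
    rw [hFs, Set.Finite.mem_toFinset] at hx
    rcases hx with rfl | hx
    · exact Set.left_mem_Icc.2 hab.le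
    rcases hx with rfl | hx
    · exact Set.right_mem_Icc.2 hab.le
    obtain ⟨p, hp⟩ := Set.mem_iUnion.mp hx
    exact hp.1
  have hmemFs : ∀ i j : Fin n, i ≠ j → ∀ x ∈ Set.Icc a b, f i x = f j x → x ∈ Fs := by
    intro i j hij x hx hfx
    rw [hFs, Set.Finite.mem_toFinset]
    exact Set.mem_insert_of_mem _ (Set.mem_insert_of_mem _
      (Set.mem_iUnion.2 ⟨(i, j), ⟨hx, hij, hfx⟩⟩))
  set N := Fs.card with hN
  have hN2 : 2 ≤ N := by
    have hsub : ({a, b} : Finset ℝ) ⊆ Fs := by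
      intro x hx
      rcases Finset.mem_insert.mp hx with rfl | hx
      · exact haF
      · rw [Finset.mem_singleton] at hx; subst hx; exact hbF
    have : ({a, b} : Finset ℝ).card = 2 := by
      rw [Finset.card_insert_of_notMem (by simp [hab.ne]), Finset.card_singleton]
    rw [← this]
    exact Finset.card_le_card hsub
  set e := Fs.orderEmbOfFin (rfl : Fs.card = N) with he
  set t : ℕ → ℝ := fun j => if h : j < N then e ⟨j, h⟩ else b with ht
  set m := N - 1 with hm
  have hm1 : 1 ≤ m := by omega
  have hzN : 0 < N := by omega
  have htval : ∀ j (h : j < N), t j = e ⟨j, h⟩ := by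
    intro j h
    show (if h' : j < N then (e ⟨j, h'⟩ : ℝ) else b) = e ⟨j, h⟩
    rw [dif_pos h]
  have hadj : ∀ j, j < m → t j < t (j + 1) := by
    intro j hj
    rw [htval j (by omega), htval (j + 1) (by omega)]
    exact e.strictMono (by simp [Fin.mk_lt_mk])
  have ht0 : t 0 = a := by
    rw [htval 0 hzN]
    refine (Finset.orderEmbOfFin_zero rfl hzN).trans ?_
    exact le_antisymm (Finset.min'_le Fs a haF)
      (Finset.le_min' _ _ _ (fun y hy => (hsubIcc y hy).1))
  have htm : t m = b := by
    rw [htval m (by omega)]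
    refine (Finset.orderEmbOfFin_last rfl hzN).trans ?_
    exact le_antisymm (Finset.max'_le Fs _ _ (fun y hy => (hsubIcc y hy).2))
      (Finset.le_max' Fs b hbF)
  have htIcc : ∀ j, j ≤ m → t j ∈ Set.Icc a b := by
    intro j hj
    refine hsubIcc _ ?_
    rw [htval j (by omega)]
    exact Finset.orderEmbOfFin_mem Fs rfl _
  have hgap : ∀ j, j < m → ∀ x ∈ Set.Ioo (t j) (t (j + 1)), x ∉ Fs := by
    intro j hj x hx hxF
    obtain ⟨hx1, hx2⟩ := hx
    obtain ⟨l, hl⟩ : x ∈ Set.range ⇑e := by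
      rw [he, Finset.range_orderEmbOfFin]; exact hxF
    rw [htval j (by omega), ← hl] at hx1
    rw [htval (j + 1) (by omega), ← hl] at hx2
    have h1 : j < l.val := e.lt_iff_lt.mp hx1
    have h2 : l.val < j + 1 := e.lt_iff_lt.mp hx2
    omega
  -- each block has a single owner
  have hPexists : ∀ j, j < m →
      ∃ i0 : Fin n, ∀ x ∈ Set.Icc (t j) (t (j + 1)), ∀ i, f i x ≤ f i0 x := by
    intro j hj
    have huv : t j < t (j + 1) := hadj j hj
    set u := t j with hu
    set v := t (j + 1) with hv
    set mid := (u + v) / 2 with hmid'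
    have hmid : mid ∈ Set.Ioo u v := ⟨by rw [hmid']; linarith, by rw [hmid']; linarith⟩
    obtain ⟨i0, -, hi0⟩ := Finset.exists_mem_eq_sup'
      (⟨⟨0, hn⟩, Finset.mem_univ _⟩ : (Finset.univ : Finset (Fin n)).Nonempty)
      (fun i => f i mid)
    refine ⟨i0, ?_⟩
    intro x hx i
    by_contra hlt
    push_neg at hlt
    have hii0 : i ≠ i0 := by rintro rfl; exact lt_irrefl _ hlt
    have hIccab : Set.Icc u v ⊆ Set.Icc a b :=
      Set.Icc_subset_Icc (htIcc j (by omega)).1 (htIcc (j + 1) (by omega)).2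
    have hle : f i mid ≤ f i0 mid :=
      hi0 ▸ Finset.le_sup' (fun i => f i mid) (Finset.mem_univ i)
    have hnemid : f i mid ≠ f i0 mid := by
      intro h
      exact hgap j hj mid hmid
        (hmemFs i i0 hii0 mid (hIccab (Set.Ioo_subset_Icc_self hmid)) h)
    have hltmid : f i mid < f i0 mid := lt_of_le_of_ne hle hnemid
    set g : ℝ → ℝ := fun y => f i0 y - f i y with hg
    have hgc : Continuous g := (hfc i0).sub (hfc i)
    rcases lt_trichotomy x mid with hxm | hxm | hxm
    · obtain ⟨z, hz, hgz⟩ := intermediate_value_Ioo hxm.le hgc.continuousOn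
        (show (0 : ℝ) ∈ Set.Ioo (g x) (g mid) from
          ⟨by simp only [hg]; linarith, by simp only [hg]; linarith⟩)
      have hzIoo : z ∈ Set.Ioo u v := ⟨lt_of_le_of_lt hx.1 hz.1, lt_trans hz.2 hmid.2⟩
      have hfz : f i0 z = f i z := by
        simp only [hg] at hgz; linarith
      exact hgap j hj z hzIoo
        (hmemFs i0 i (Ne.symm hii0) z (hIccab (Set.Ioo_subset_Icc_self hzIoo)) hfz)
    · rw [hxm] at hlt; linarith
    · obtain ⟨z, hz, hgz⟩ := intermediate_value_Ioo' hxm.le hgc.continuousOn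
        (show (0 : ℝ) ∈ Set.Ioo (g x) (g mid) from
          ⟨by simp only [hg]; linarith, by simp only [hg]; linarith⟩)
      have hzIoo : z ∈ Set.Ioo u v := ⟨lt_trans hmid.1 hz.1, lt_of_lt_of_le hz.2 hx.2⟩
      have hfz : f i0 z = f i z := by
        simp only [hg] at hgz; linarith
      exact hgap j hj z hzIoo
        (hmemFs i0 i (Ne.symm hii0) z (hIccab (Set.Ioo_subset_Icc_self hzIoo)) hfz)
  have hInh : Inhabited (Fin n) := ⟨⟨0, hn⟩⟩
  choose! c hc using hPexists
  exact mergelem n hn a b f hfc hpair m hm1 t c hadj ht0 htm hc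
end

section
/- Let d, n ≥ 1, τ ≥ 1, let t_0 < t_1 < … < t_τ be reals, and let σ, ψ_1, …, ψ_n : ℝ → ℝ^d (with the Euclidean metric) be continuous maps each of whose restriction to every interval [t_l, t_{l+1}] is affine. Assume that for every l < τ and all i ≠ j, the set {t ∈ [t_l, t_{l+1}] : dist(σ(t), ψ_i(t)) = dist(σ(t), ψ_j(t))} has at most 2 elements. Define D_σ(t) = max_{1≤i≤n} dist(σ(t), ψ_i(t)). Then there exist K ≤ τ(2n − 1), a partition t_0 = s_0 < s_1 < … < s_K = t_τ, and indices j_1, …, j_K such that for each k and every t ∈ [s_{k−1}, s_k], D_σ(t) = dist(σ(t), ψ_{j_k}(t)); in particular, on each interval [s_{k−1}, s_k] there are reals a, b, c with D_σ(t) = √(a·t² + b·t + c). -/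
section DS
variable {α : Type*} [DecidableEq α]

lemma ds_first_split {a : α} {l : List α} (h : a ∈ l) :
    ∃ m r, l = m ++ a :: r ∧ a ∉ m := by
  induction l with
  | nil => simp at h
  | cons x t ih =>
    by_cases hx : x = a
    · exact ⟨[], t, by simp [hx], by simp⟩
    · have ht : a ∈ t := by
        rcases List.mem_cons.1 h with h1 | h1
        · exact absurd h1.symm hx
        · exact h1
      obtain ⟨m, r, rfl, hm⟩ := ih ht
      refine ⟨x :: m, r, by simp, ?_⟩
      simp only [List.mem_cons, not_or]
      exact ⟨fun h => hx h.symm, hm⟩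

lemma ds_main : ∀ (N : ℕ) (l : List α), l.length ≤ N → l.Chain' (· ≠ ·) →
    (∀ a b : α, a ≠ b → ¬ List.Sublist [a, b, a, b] l) → l.length ≤ 2 * l.toFinset.card - 1 := by
  intro N
  induction N with
  | zero => intro l hl _ _; simp_all
  | succ N ih =>
    intro l hl hchain habab
    match l with
    | [] => simp
    | a :: rest =>
      by_cases ha : a ∈ rest
      · obtain ⟨m, r, rfl, hm⟩ := ds_first_split ha
        have hchain_rest : (m ++ a :: r).Chain' (· ≠ ·) := hchain.tail
        have chain_m : m.Chain' (· ≠ ·) := hchain_rest.left_of_append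
        have chain_ar : (a :: r).Chain' (· ≠ ·) := hchain_rest.right_of_append
        have hmne : m ≠ [] := by
          rintro rfl
          simp only [List.nil_append, List.isChain_cons_cons] at hchain
          exact (List.isChain_cons_cons.mp hchain).1 rfl
        have sub_rest : List.Sublist (m ++ a :: r) (a :: (m ++ a :: r)) := List.sublist_cons_self _ _
        have sub_m : List.Sublist m (a :: (m ++ a :: r)) :=
          (List.sublist_append_left m (a :: r)).trans sub_rest
        have sub_ar : List.Sublist (a :: r) (a :: (m ++ a :: r)) :=
          (List.sublist_append_right m (a :: r)).trans sub_rest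
        have habab_m : ∀ x y : α, x ≠ y → ¬ List.Sublist [x, y, x, y] m :=
          fun x y hxy hs => habab x y hxy (hs.trans sub_m)
        have habab_ar : ∀ x y : α, x ≠ y → ¬ List.Sublist [x, y, x, y] (a :: r) :=
          fun x y hxy hs => habab x y hxy (hs.trans sub_ar)
        have key : ∀ b ∈ m, b ∉ (a :: r) := by
          intro b hb hbar
          have hba : b ≠ a := fun h => hm (h ▸ hb)
          have hbr : b ∈ r := by
            rcases List.mem_cons.1 hbar with h1 | h1
            · exact absurd h1 hba
            · exact h1
          have h1 : List.Sublist [b] m := List.singleton_sublist.mpr hb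
          have h2 : List.Sublist [a, b] (a :: r) := (List.singleton_sublist.mpr hbr).cons₂ a
          have h3 : List.Sublist ([b] ++ [a, b]) (m ++ a :: r) := h1.append h2
          have h4 : List.Sublist [a, b, a, b] (a :: (m ++ a :: r)) := h3.cons₂ a
          exact habab a b (Ne.symm hba) h4
        have hdisj : Disjoint m.toFinset (a :: r).toFinset := by
          rw [Finset.disjoint_left]
          intro x hx hx'
          exact key x (List.mem_toFinset.1 hx) (List.mem_toFinset.1 hx')
        have hlm : m.length ≤ N := by
          have := hl; simp only [List.length_cons, List.length_append] at this ⊢; omega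
        have hlar : (a :: r).length ≤ N := by
          have h0 : 1 ≤ m.length := List.length_pos_iff.mpr hmne
          have := hl; simp only [List.length_cons, List.length_append] at this ⊢; omega
        have ih_m := ih m hlm chain_m habab_m
        have ih_ar := ih (a :: r) hlar chain_ar habab_ar
        have hcard : m.toFinset.card + (a :: r).toFinset.card ≤ (a :: (m ++ a :: r)).toFinset.card := by
          rw [← Finset.card_union_of_disjoint hdisj]
          apply Finset.card_le_card
          intro x hx
          simp only [List.toFinset_cons, List.toFinset_append, Finset.mem_union] at hx ⊢
          rcases hx with hx | hx
          · exact Finset.mem_insert_of_mem (Finset.mem_union_left _ hx)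
          · exact Finset.mem_insert_of_mem (Finset.mem_union_right _ hx)
        have hcm : 1 ≤ m.toFinset.card := by
          rcases List.exists_mem_of_ne_nil m hmne with ⟨x, hx⟩
          exact Finset.card_pos.mpr ⟨x, List.mem_toFinset.2 hx⟩
        have hcar : 1 ≤ (a :: r).toFinset.card :=
          Finset.card_pos.mpr ⟨a, List.mem_toFinset.2 (List.mem_cons_self)⟩
        simp only [List.length_cons, List.length_append] at ih_m ih_ar ⊢
        omega
      · have habab' : ∀ x y : α, x ≠ y → ¬ List.Sublist [x, y, x, y] rest :=
          fun x y hxy hs => habab x y hxy (hs.trans (List.sublist_cons_self _ _))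
        have ih_rest := ih rest (by simpa using Nat.lt_succ_iff.mp (Nat.lt_of_lt_of_le (Nat.lt_succ_of_le le_rfl) (by simpa using hl))) hchain.tail habab'
        have hcard : (a :: rest).toFinset.card = rest.toFinset.card + 1 := by
          simp only [List.toFinset_cons]
          rw [Finset.card_insert_of_notMem (fun h => ha (List.mem_toFinset.1 h))]
        simp only [List.length_cons]
        omega

end DS


section Merge
variable {n : ℕ}

def PJ (f : Fin n → ℝ → ℝ) (d0 : Fin n) (u : List ℝ) (j : List (Fin n)) : Prop :=
  u.length = j.length + 1 ∧ u.Chain' (· < ·) ∧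
  ∀ k < j.length, ∀ t : ℝ, u.getD k 0 ≤ t → t ≤ u.getD (k+1) 0 →
    ∀ i, f i t ≤ f (j.getD k d0) t

lemma merge (f : Fin n → ℝ → ℝ) (d0 : Fin n) :
    ∀ (N : ℕ) (u : List ℝ) (j : List (Fin n)), j.length ≤ N → PJ f d0 u j →
    ∃ u' j', PJ f d0 u' j' ∧ j'.Chain' (· ≠ ·) ∧ j'.length ≤ j.length ∧
      u'.head? = u.head? ∧ u'.getLast? = u.getLast? ∧ j'.head? = j.head? := by
  intro N
  induction N with
  | zero =>
    intro u j hlen hPJ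
    have : j = [] := List.length_eq_zero_iff.mp (Nat.le_zero.mp hlen)
    subst this
    exact ⟨u, [], hPJ, List.isChain_nil, le_rfl, rfl, rfl, rfl⟩
  | succ N ih =>
    intro u j hlen hPJ
    match j with
    | [] => exact ⟨u, [], hPJ, List.isChain_nil, le_rfl, rfl, rfl, rfl⟩
    | [a] => exact ⟨u, [a], hPJ, List.isChain_singleton a, le_rfl, rfl, rfl, rfl⟩
    | a :: b :: j₂ =>
      obtain ⟨hulen, huchain, hpieces⟩ := hPJ
      match u, hulen with
      | x :: y :: u₂, hulen =>
        have hu₂len : u₂.length = j₂.length + 1 := by simpa using hulen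
        have hu₂ne : u₂ ≠ [] := by intro h; rw [h] at hu₂len; simp at hu₂len
        replace huchain := List.isChain_cons_cons.mp huchain
        obtain ⟨hxy, huchain'⟩ := huchain
        replace huchain' := List.isChain_cons.mp huchain'
        obtain ⟨hyh, hu₂chain⟩ := huchain'
        by_cases hab : a = b
        · -- merge the first two pieces
          subst hab
          have hPJ' : PJ f d0 (x :: u₂) (a :: j₂) := by
            refine ⟨by simpa using hulen, ?_, ?_⟩
            · refine List.isChain_cons.mpr ?_
              exact ⟨fun h hh => lt_trans hxy (hyh h hh), hu₂chain⟩
            · intro k hk t ht1 ht2 i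
              match k with
              | 0 =>
                rcases le_total t y with hty | hty
                · exact hpieces 0 (by simp) t (by simpa using ht1) (by simpa using hty) i
                · exact hpieces 1 (by simp) t (by simpa using hty) (by simpa using ht2) i
              | (k+1) =>
                exact hpieces (k+2) (by simpa using hk) t (by simpa using ht1)
                  (by simpa using ht2) i
          obtain ⟨u', j', h1, h2, h3, h4, h5, h6⟩ := ih (x :: u₂) (a :: j₂)
            (by simp at hlen ⊢; omega) hPJ'
          refine ⟨u', j', h1, h2, by simp at h3 ⊢; omega, ?_, ?_, by simpa using h6⟩
        
          · simpa using h4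
          · rw [h5]
            rcases u₂ with _ | ⟨z, u₃⟩
            · exact absurd rfl hu₂ne
            · simp
        · -- keep the first piece, recurse on the rest
          have hPJ' : PJ f d0 (y :: u₂) (b :: j₂) := by
            refine ⟨by simpa using hulen, List.isChain_cons.mpr ⟨hyh, hu₂chain⟩, ?_⟩
            intro k hk t ht1 ht2 i
            exact hpieces (k+1) (by simpa using hk) t (by simpa using ht1)
              (by simpa using ht2) i
          obtain ⟨u₂', j₂', h1, h2, h3, h4, h5, h6⟩ := ih (y :: u₂) (b :: j₂)
            (by simp at hlen ⊢; omega) hPJ'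
          simp only [List.head?_cons] at h4 h6
          rcases u₂' with _ | ⟨y', urest⟩
          · simp at h4
          rcases j₂' with _ | ⟨b', jrest⟩
          · simp at h6
          simp only [List.head?_cons, Option.some.injEq] at h4 h6
          subst h4; subst h6
          obtain ⟨h1len, h1chain, h1pieces⟩ := h1
          refine ⟨x :: y' :: urest, a :: b' :: jrest, ⟨by simpa using h1len, ?_, ?_⟩,
            ?_, by simp at h3 ⊢; omega, by simp, ?_, by simp⟩
          · refine List.isChain_cons_cons.mpr ?_
            exact ⟨hxy, h1chain⟩
          · intro k hk t ht1 ht2 i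
            match k with
            | 0 => exact hpieces 0 (by simp) t (by simpa using ht1) (by simpa using ht2) i
            | (k+1) =>
              exact h1pieces k (by simpa using hk) t (by simpa using ht1)
                (by simpa using ht2) i
          · refine List.isChain_cons_cons.mpr ?_
            exact ⟨hab, h2⟩
          · simp only [List.getLast?_cons_cons] at h5 ⊢
            exact h5

end Merge

lemma gap {n : ℕ} (hn : 0 < n) (f : Fin n → ℝ → ℝ) (hf : ∀ i, Continuous (f i))
    {x y : ℝ} (hxy : x < y)
    (hne : ∀ (i jj : Fin n), i ≠ jj → ∀ t ∈ Set.Ioo x y, f i t ≠ f jj t) :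
    ∃ jj : Fin n, ∀ t ∈ Set.Icc x y, ∀ i, f i t ≤ f jj t := by
  set t₀ := (x + y) / 2 with ht₀def
  have ht₀ : t₀ ∈ Set.Ioo x y := ⟨by rw [ht₀def]; linarith, by rw [ht₀def]; linarith⟩
  obtain ⟨jj, -, hjj⟩ := Finset.exists_max_image Finset.univ (fun i => f i t₀)
    ⟨⟨0, hn⟩, Finset.mem_univ _⟩
  have hIoo : ∀ t ∈ Set.Ioo x y, ∀ i, f i t ≤ f jj t := by
    intro t ht i
    by_contra hlt
    push_neg at hlt
    have hij : i ≠ jj := by rintro rfl; exact lt_irrefl _ hlt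
    have h0 : f i t₀ ≤ f jj t₀ := hjj i (Finset.mem_univ _)
    have hgc : Continuous (fun s => f i s - f jj s) := (hf i).sub (hf jj)
    have hgt : 0 < f i t - f jj t := sub_pos.mpr hlt
    have hgt₀ : f i t₀ - f jj t₀ ≤ 0 := sub_nonpos.mpr h0
    rcases lt_trichotomy t t₀ with h | h | h
    · obtain ⟨z, hz, hgz⟩ := intermediate_value_Icc' h.le hgc.continuousOn
        (Set.mem_Icc.mpr ⟨hgt₀, hgt.le⟩)
      have hzI : z ∈ Set.Ioo x y := ⟨lt_of_lt_of_le ht.1 hz.1, lt_of_le_of_lt hz.2 ht₀.2⟩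
      have hgz' : f i z - f jj z = 0 := hgz
      exact hne i jj hij z hzI (by linarith)
    · rw [h] at hgt; linarith
    · obtain ⟨z, hz, hgz⟩ := intermediate_value_Icc h.le hgc.continuousOn
        (Set.mem_Icc.mpr ⟨hgt₀, hgt.le⟩)
      have hzI : z ∈ Set.Ioo x y := ⟨lt_of_lt_of_le ht₀.1 hz.1, lt_of_le_of_lt hz.2 ht.2⟩
      have hgz' : f i z - f jj z = 0 := hgz
      exact hne i jj hij z hzI (by linarith)
  refine ⟨jj, ?_⟩
  have hclosed : IsClosed (⋂ i, {t : ℝ | f i t ≤ f jj t}) :=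
    isClosed_iInter fun i => isClosed_le (hf i) (hf jj)
  have hsub : Set.Icc x y ⊆ ⋂ i, {t : ℝ | f i t ≤ f jj t} := by
    rw [← closure_Ioo hxy.ne]
    refine closure_minimal ?_ hclosed
    intro t ht
    exact Set.mem_iInter.mpr fun i => hIoo t ht i
  exact fun t ht i => Set.mem_iInter.mp (hsub ht) i

lemma phase1 {n : ℕ} (hn : 0 < n) (f : Fin n → ℝ → ℝ) (hf : ∀ i, Continuous (f i))
    {α β : ℝ} (hαβ : α < β)
    (hpair : ∀ i j : Fin n, i ≠ j → {t ∈ Set.Icc α β | f i t = f j t}.encard ≤ 2) :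
    ∃ u j, PJ f ⟨0, hn⟩ u j ∧ u.head? = some α ∧ u.getLast? = some β ∧ j ≠ [] := by
  classical
  set E : Set ℝ := {α, β} ∪ ⋃ (i : Fin n) (jj : Fin n) (_ : i ≠ jj),
    {t ∈ Set.Icc α β | f i t = f jj t} with hEdef
  have hEfin : E.Finite := by
    refine Set.Finite.union (by simp) ?_
    refine Set.finite_iUnion fun i => Set.finite_iUnion fun jj => Set.finite_iUnion fun h => ?_
    exact Set.finite_of_encard_le_coe (k := 2) (by exact_mod_cast hpair i jj h)
  have hEsub : E ⊆ Set.Icc α β := by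
    rintro w (hw | hw)
    · rcases hw with rfl | hw
      · exact Set.left_mem_Icc.mpr hαβ.le
      · rcases hw with rfl
        exact Set.right_mem_Icc.mpr hαβ.le
    · simp only [Set.mem_iUnion] at hw
      obtain ⟨i, jj, hij, hw, -⟩ := hw
      exact hw
  have hEeq : ∀ (i jj : Fin n), i ≠ jj → ∀ t ∈ Set.Icc α β, f i t = f jj t → t ∈ E := by
    intro i jj hij t ht heq
    refine Or.inr ?_
    simp only [Set.mem_iUnion]
    exact ⟨i, jj, hij, ht, heq⟩
  set F : Finset ℝ := hEfin.toFinset with hFdef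
  set u : List ℝ := F.sort (· ≤ ·) with hudef
  have hmemu : ∀ w : ℝ, w ∈ u ↔ w ∈ E := by
    intro w; rw [hudef, Finset.mem_sort, hFdef, Set.Finite.mem_toFinset]
  have hαE : α ∈ E := Or.inl (Or.inl rfl)
  have hβE : β ∈ E := Or.inl (Or.inr rfl)
  have hsorted : u.Pairwise (· < ·) := (Finset.sortedLT_sort F).pairwise
  have hchain : u.Chain' (· < ·) := List.isChain_iff_pairwise.mpr hsorted
  have hget : ∀ (p q : Fin u.length), p < q → u.get p < u.get q :=
    fun p q hpq => List.pairwise_iff_get.mp hsorted p q hpq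
  have hgetlt : ∀ (p q : Fin u.length), u.get p < u.get q → (p : ℕ) < q := by
    intro p q hlt
    by_contra hle
    push_neg at hle
    rcases eq_or_lt_of_le hle with h | h
    · have : u.get p = u.get q := by congr 1; exact (Fin.ext h.symm)
      rw [this] at hlt; exact lt_irrefl _ hlt
    · exact absurd (hget q p (by exact h)) (by exact not_lt.mpr hlt.le)
  -- α is in u, β is in u
  have hαu : α ∈ u := (hmemu α).mpr hαE
  have hβu : β ∈ u := (hmemu β).mpr hβE
  have hune : u ≠ [] := List.ne_nil_of_mem hαu
  have hL1 : 1 ≤ u.length := List.length_pos_iff.mpr hune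
  -- head is α
  have hget0 : ∀ (p : Fin u.length), u.get ⟨0, hL1⟩ ≤ u.get p := by
    intro p
    rcases Nat.eq_zero_or_pos p with h | h
    · have : p = ⟨0, hL1⟩ := Fin.ext h
      rw [this]
    · exact (hget ⟨0, hL1⟩ p h).le
  have hhead : u.get ⟨0, hL1⟩ = α := by
    obtain ⟨p, hp⟩ := List.get_of_mem hαu
    have h1 : u.get ⟨0, hL1⟩ ≤ α := hp ▸ hget0 p
    have h2 : α ≤ u.get ⟨0, hL1⟩ := (hEsub ((hmemu _).mp (List.get_mem u _))).1
    linarith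
  have hgetlast : ∀ (p : Fin u.length), u.get p ≤ u.get ⟨u.length - 1, Nat.sub_lt hL1 Nat.one_pos⟩ := by
    intro p
    rcases eq_or_lt_of_le (Nat.le_sub_one_of_lt p.isLt) with h | h
    · have : p = ⟨u.length - 1, Nat.sub_lt hL1 Nat.one_pos⟩ := Fin.ext h
      rw [this]
    · exact (hget p ⟨u.length - 1, Nat.sub_lt hL1 Nat.one_pos⟩ h).le
  have hlast : u.get ⟨u.length - 1, Nat.sub_lt hL1 Nat.one_pos⟩ = β := by
    obtain ⟨p, hp⟩ := List.get_of_mem hβu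
    have h1 : β ≤ u.get ⟨u.length - 1, Nat.sub_lt hL1 Nat.one_pos⟩ := by rw [← hp]; exact hgetlast p
    have h2 : u.get ⟨u.length - 1, Nat.sub_lt hL1 Nat.one_pos⟩ ≤ β :=
      (hEsub ((hmemu _).mp (List.get_mem u _))).2
    linarith
  have hL2 : 2 ≤ u.length := by
    by_contra h
    push_neg at h
    have h01 : (⟨u.length - 1, Nat.sub_lt hL1 Nat.one_pos⟩ : Fin u.length) = ⟨0, hL1⟩ :=
      Fin.ext (by show u.length - 1 = 0; omega)
    rw [h01, hhead] at hlast
    exact hαβ.ne hlast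
  set m := u.length - 1 with hmdef
  -- the gap property
  have hgap : ∀ k, k < m → ∃ jj : Fin n, ∀ t ∈ Set.Icc (u.getD k 0) (u.getD (k+1) 0),
      ∀ i, f i t ≤ f jj t := by
    intro k hk
    have hk1 : k < u.length := by omega
    have hk2 : k + 1 < u.length := by omega
    rw [List.getD_eq_get u 0 ⟨k, hk1⟩, List.getD_eq_get u 0 ⟨k+1, hk2⟩]
    have hxy : u.get ⟨k, hk1⟩ < u.get ⟨k+1, hk2⟩ := hget _ _ (by simp)
    refine gap hn f hf hxy ?_
    intro i jj hij t ht heq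
    have htαβ : t ∈ Set.Icc α β := by
      constructor
      · calc α = u.get ⟨0, hL1⟩ := hhead.symm
          _ ≤ u.get ⟨k, hk1⟩ := hget0 _
          _ ≤ t := ht.1.le
      · calc t ≤ u.get ⟨k+1, hk2⟩ := ht.2.le
          _ ≤ u.get ⟨u.length - 1, Nat.sub_lt hL1 Nat.one_pos⟩ := hgetlast _
          _ = β := hlast
    have htE : t ∈ E := hEeq i jj hij t htαβ heq
    obtain ⟨q, hq⟩ := List.get_of_mem ((hmemu t).mpr htE)
    have hq1 : (k : ℕ) < q := hgetlt ⟨k, hk1⟩ q (by rw [hq]; exact ht.1)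
    have hq2 : (q : ℕ) < k + 1 := hgetlt q ⟨k+1, hk2⟩ (by rw [hq]; exact ht.2)
    omega
  set j : List (Fin n) := (List.range m).map
    (fun k => if h : k < m then (hgap k h).choose else ⟨0, hn⟩) with hjdef
  have hjlen : j.length = m := by simp [hjdef]
  have hjget : ∀ (k : ℕ) (hk : k < m), j.getD k ⟨0, hn⟩ = (hgap k hk).choose := by
    intro k hk
    rw [List.getD_eq_get j ⟨0, hn⟩ ⟨k, by rw [hjlen]; exact hk⟩]
    simp [hjdef, List.getElem_map, hk]
  refine ⟨u, j, ⟨by omega, hchain, ?_⟩, ?_, ?_, ?_⟩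
  · intro k hk t ht1 ht2 i
    rw [hjlen] at hk
    rw [hjget k hk]
    exact (hgap k hk).choose_spec t (Set.mem_Icc.mpr ⟨ht1, ht2⟩) i
  · rcases u with _ | ⟨c, rest⟩
    · exact absurd rfl hune
    · simpa using hhead
  · rw [List.getLast?_eq_getLast_of_ne_nil hune]
    congr 1
    rw [List.getLast_eq_getElem]
    exact hlast
  · intro h
    rw [h] at hjlen
    simp at hjlen
    omega

lemma abab {n : ℕ} (hn : 0 < n) (f : Fin n → ℝ → ℝ) (hf : ∀ i, Continuous (f i))
    {α β : ℝ}
    (hpair : ∀ i j : Fin n, i ≠ j → {t ∈ Set.Icc α β | f i t = f j t}.encard ≤ 2)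
    {u : List ℝ} {j : List (Fin n)} (hPJ : PJ f ⟨0, hn⟩ u j)
    (hhead : u.head? = some α) (hlast : u.getLast? = some β) :
    ∀ a b : Fin n, a ≠ b → ¬ List.Sublist [a, b, a, b] j := by
  obtain ⟨hulen, huchain, hpieces⟩ := hPJ
  have hune : u ≠ [] := by intro h; rw [h] at hulen; simp at hulen
  have hupair : u.Pairwise (· < ·) := List.isChain_iff_pairwise.mp huchain
  have hget : ∀ (p q : Fin u.length), p < q → u.get p < u.get q :=
    fun p q hpq => List.pairwise_iff_get.mp hupair p q hpq
  have humono : ∀ (p q : ℕ), p ≤ q → q < u.length → u.getD p 0 ≤ u.getD q 0 := by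
    intro p q hpq hq
    rw [List.getD_eq_get u 0 ⟨p, by omega⟩, List.getD_eq_get u 0 ⟨q, hq⟩]
    rcases eq_or_lt_of_le hpq with h | h
    · subst h; exact le_rfl
    · exact (hget _ _ h).le
  have hu0 : u.getD 0 0 = α := by
    rcases u with _ | ⟨c, rest⟩
    · exact absurd rfl hune
    · simpa using hhead
  have hulast : u.getD (u.length - 1) 0 = β := by
    rw [List.getLast?_eq_getLast_of_ne_nil hune] at hlast
    rw [List.getD_eq_get u 0 ⟨u.length - 1, by have := List.length_pos_iff.mpr hune; omega⟩]
    rw [List.get_eq_getElem, ← List.getLast_eq_getElem hune]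
    injection hlast
  have hαle : ∀ q : ℕ, q < u.length → α ≤ u.getD q 0 := by
    intro q hq
    rw [← hu0]; exact humono 0 q (Nat.zero_le _) hq
  have hleβ : ∀ q : ℕ, q < u.length → u.getD q 0 ≤ β := by
    intro q hq
    rw [← hulast]; exact humono q (u.length - 1) (by omega) (by omega)
  have hstrict : ∀ (k : ℕ) (hk : k < j.length) (i : Fin n), i ≠ j.getD k ⟨0, hn⟩ →
      ∃ t : ℝ, u.getD k 0 ≤ t ∧ t ≤ u.getD (k+1) 0 ∧ f i t < f (j.getD k ⟨0, hn⟩) t := by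
    intro k hk i hne
    by_contra h
    push_neg at h
    have hxy : u.getD k 0 < u.getD (k+1) 0 := by
      rw [List.getD_eq_get u 0 ⟨k, by omega⟩, List.getD_eq_get u 0 ⟨k+1, by omega⟩]
      exact hget _ _ (by simp)
    have hsub : Set.Icc (u.getD k 0) (u.getD (k+1) 0) ⊆
        {t ∈ Set.Icc α β | f i t = f (j.getD k ⟨0, hn⟩) t} := by
      intro t ht
      refine ⟨⟨le_trans (hαle k (by omega)) ht.1, le_trans ht.2 (hleβ (k+1) (by omega))⟩,
        le_antisymm (hpieces k hk t ht.1 ht.2 i) (h t ht.1 ht.2)⟩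
    have hinf : {t ∈ Set.Icc α β | f i t = f (j.getD k ⟨0, hn⟩) t}.Infinite :=
      (Set.Icc_infinite hxy).mono hsub
    have h2 := hpair i (j.getD k ⟨0, hn⟩) hne
    rw [hinf.encard_eq] at h2
    exact absurd h2 (by norm_num)
  intro a b hab hsl
  obtain ⟨g, hg⟩ := List.sublist_iff_exists_fin_orderEmbedding_get_eq.mp hsl
  set k1 := g ⟨0, by norm_num⟩ with hk1def
  set k2 := g ⟨1, by norm_num⟩ with hk2def
  set k3 := g ⟨2, by norm_num⟩ with hk3def
  set k4 := g ⟨3, by norm_num⟩ with hk4def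
  have hja : j.getD (k1 : ℕ) ⟨0, hn⟩ = a := by
    rw [List.getD_eq_get j ⟨0, hn⟩ k1]
    have := (hg ⟨0, by norm_num⟩).symm
    simpa [hk1def] using this
  have hjb : j.getD (k2 : ℕ) ⟨0, hn⟩ = b := by
    rw [List.getD_eq_get j ⟨0, hn⟩ k2]
    have := (hg ⟨1, by norm_num⟩).symm
    simpa [hk2def] using this
  have hja3 : j.getD (k3 : ℕ) ⟨0, hn⟩ = a := by
    rw [List.getD_eq_get j ⟨0, hn⟩ k3]
    have := (hg ⟨2, by norm_num⟩).symm
    simpa [hk3def] using this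
  have hjb4 : j.getD (k4 : ℕ) ⟨0, hn⟩ = b := by
    rw [List.getD_eq_get j ⟨0, hn⟩ k4]
    have := (hg ⟨3, by norm_num⟩).symm
    simpa [hk4def] using this
  have h12 : (k1 : ℕ) < k2 := g.strictMono (show (⟨0, by norm_num⟩ : Fin ([a,b,a,b].length)) < ⟨1, by norm_num⟩ from Fin.mk_lt_mk.mpr (by norm_num))
  have h23 : (k2 : ℕ) < k3 := g.strictMono (show (⟨1, by norm_num⟩ : Fin ([a,b,a,b].length)) < ⟨2, by norm_num⟩ from Fin.mk_lt_mk.mpr (by norm_num))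
  have h34 : (k3 : ℕ) < k4 := g.strictMono (show (⟨2, by norm_num⟩ : Fin ([a,b,a,b].length)) < ⟨3, by norm_num⟩ from Fin.mk_lt_mk.mpr (by norm_num))
  have hK1 : (k1 : ℕ) < j.length := k1.isLt
  have hK2 : (k2 : ℕ) < j.length := k2.isLt
  have hK3 : (k3 : ℕ) < j.length := k3.isLt
  have hK4 : (k4 : ℕ) < j.length := k4.isLt
  -- points with sign information for f a - f b
  set t₁ := u.getD (k1 : ℕ) 0 with ht₁def
  obtain ⟨t₂, ht₂l, ht₂r, ht₂⟩ := hstrict (k2 : ℕ) hK2 a (by rw [hjb]; exact hab)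
  obtain ⟨t₃, ht₃l, ht₃r, ht₃⟩ := hstrict (k3 : ℕ) hK3 b (by rw [hja3]; exact hab.symm)
  set t₄ := u.getD ((k4 : ℕ)+1) 0 with ht₄def
  rw [hjb] at ht₂
  rw [hja3] at ht₃
  have hgt₁ : f b t₁ ≤ f a t₁ := by
    have := hpieces (k1 : ℕ) hK1 t₁ le_rfl
      (humono (k1 : ℕ) ((k1 : ℕ)+1) (by omega) (by omega)) b
    rwa [hja] at this
  have hgt₄ : f a t₄ ≤ f b t₄ := by
    have := hpieces (k4 : ℕ) hK4 t₄
      (humono (k4 : ℕ) ((k4 : ℕ)+1) (by omega) (by omega)) le_rfl a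
    rwa [hjb4] at this
  have ht₁₂ : t₁ ≤ t₂ :=
    le_trans (humono (k1 : ℕ) (k2 : ℕ) (by omega) (by omega)) ht₂l
  have ht₂₃ : t₂ ≤ t₃ :=
    le_trans ht₂r (le_trans (humono ((k2 : ℕ)+1) (k3 : ℕ) (by omega) (by omega)) ht₃l)
  have ht₃₄ : t₃ ≤ t₄ :=
    le_trans ht₃r (humono ((k3 : ℕ)+1) ((k4 : ℕ)+1) (by omega) (by omega))
  have hgc : Continuous (fun s => f a s - f b s) := (hf a).sub (hf b)
  obtain ⟨z₁, hz₁, hgz₁⟩ := intermediate_value_Icc' ht₁₂ hgc.continuousOn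
    (show (0:ℝ) ∈ Set.Icc (f a t₂ - f b t₂) (f a t₁ - f b t₁) from ⟨by linarith, by linarith⟩)
  obtain ⟨z₂, hz₂, hgz₂⟩ := intermediate_value_Icc ht₂₃ hgc.continuousOn
    (show (0:ℝ) ∈ Set.Icc (f a t₂ - f b t₂) (f a t₃ - f b t₃) from ⟨by linarith, by linarith⟩)
  obtain ⟨z₃, hz₃, hgz₃⟩ := intermediate_value_Icc' ht₃₄ hgc.continuousOn
    (show (0:ℝ) ∈ Set.Icc (f a t₄ - f b t₄) (f a t₃ - f b t₃) from ⟨by linarith, by linarith⟩)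
  have hgz₁' : f a z₁ = f b z₁ := by have : f a z₁ - f b z₁ = 0 := hgz₁; linarith
  have hgz₂' : f a z₂ = f b z₂ := by have : f a z₂ - f b z₂ = 0 := hgz₂; linarith
  have hgz₃' : f a z₃ = f b z₃ := by have : f a z₃ - f b z₃ = 0 := hgz₃; linarith
  have hz₁t₂ : z₁ < t₂ := lt_of_le_of_ne hz₁.2 (fun h => by rw [h] at hgz₁'; linarith)
  have ht₂z₂ : t₂ < z₂ := lt_of_le_of_ne hz₂.1 (fun h => by rw [← h] at hgz₂'; linarith)
  have hz₂t₃ : z₂ < t₃ := lt_of_le_of_ne hz₂.2 (fun h => by rw [h] at hgz₂'; linarith)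
  have ht₃z₃ : t₃ < z₃ := lt_of_le_of_ne hz₃.1 (fun h => by rw [← h] at hgz₃'; linarith)
  -- all three z's are in [α, β]
  have hαt₁ : α ≤ t₁ := hαle (k1 : ℕ) (by omega)
  have ht₄β : t₄ ≤ β := hleβ ((k4 : ℕ)+1) (by omega)
  have hz₁m : z₁ ∈ Set.Icc α β := ⟨le_trans hαt₁ hz₁.1, by linarith [hz₁.2]⟩
  have hz₂m : z₂ ∈ Set.Icc α β := ⟨by linarith [hz₂.1], by linarith [hz₂.2]⟩
  have hz₃m : z₃ ∈ Set.Icc α β := ⟨by linarith [hz₃.1], by linarith [hz₃.2]⟩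
  have hsubS : ({z₁, z₂, z₃} : Set ℝ) ⊆ {t ∈ Set.Icc α β | f a t = f b t} := by
    rintro z (rfl | rfl | rfl)
    · exact ⟨hz₁m, hgz₁'⟩
    · exact ⟨hz₂m, hgz₂'⟩
    · exact ⟨hz₃m, hgz₃'⟩
  have hz12 : z₁ ≠ z₂ := by linarith
  have hz13 : z₁ ≠ z₃ := by intro h; rw [h] at hz₁t₂; linarith
  have hz23 : z₂ ≠ z₃ := by intro h; rw [h] at hz₂t₃; linarith
  have hcard : ({z₁, z₂, z₃} : Set ℝ).encard = 3 := by
    rw [Set.encard_insert_of_notMem (by simp [hz12, hz13]), Set.encard_pair hz23]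
    rfl
  have h3le : (3 : ℕ∞) ≤ 2 := hcard ▸ (Set.encard_le_encard hsubS).trans (hpair a b hab)
  exact absurd h3le (by norm_num)

lemma dist_sqrt {d : ℕ} (p v q w : EuclideanSpace ℝ (Fin d)) :
    ∃ a b c : ℝ, ∀ t : ℝ, dist (p + t • v) (q + t • w) = Real.sqrt (a * t^2 + b * t + c) := by
  refine ⟨‖v - w‖^2, 2 * (inner ℝ (p - q) (v - w) : ℝ), ‖p - q‖^2, ?_⟩
  intro t
  have h1 : p + t • v - (q + t • w) = (p - q) + t • (v - w) := by
    rw [smul_sub]; abel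
  rw [dist_eq_norm, h1]
  rw [← Real.sqrt_sq (norm_nonneg ((p - q) + t • (v - w)))]
  congr 1
  rw [norm_add_sq_real, real_inner_smul_right, norm_smul]
  rw [Real.norm_eq_abs, mul_pow, sq_abs]
  ring

def GP {n : ℕ} (Q : ℝ → ℝ → Fin n → Prop) (d0 : Fin n) (u : List ℝ) (j : List (Fin n)) : Prop :=
  u.length = j.length + 1 ∧ u.Chain' (· < ·) ∧
  ∀ k < j.length, Q (u.getD k 0) (u.getD (k+1) 0) (j.getD k d0)

lemma GPappend {n : ℕ} (Q : ℝ → ℝ → Fin n → Prop) (d0 : Fin n) :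
    ∀ (j₁ : List (Fin n)) (u₁ u₂ : List ℝ) (j₂ : List (Fin n)),
    GP Q d0 u₁ j₁ → GP Q d0 u₂ j₂ → u₁.getLast? = u₂.head? →
    GP Q d0 (u₁ ++ u₂.tail) (j₁ ++ j₂) := by
  intro j₁
  induction j₁ with
  | nil =>
    intro u₁ u₂ j₂ h₁ h₂ hjoin
    obtain ⟨hlen₁, -, -⟩ := h₁
    rcases u₁ with _ | ⟨x, rest⟩
    · simp at hlen₁
    · have : rest = [] := by simpa using hlen₁
      subst this
      rcases u₂ with _ | ⟨y, t⟩
      · simp at hjoin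
      · simp only [List.getLast?_singleton, List.head?_cons, Option.some.injEq] at hjoin
        subst hjoin
        simpa using h₂
  | cons aj j₁' ih =>
    intro u₁ u₂ j₂ h₁ h₂ hjoin
    obtain ⟨hlen₁, hchain₁, hp₁⟩ := h₁
    rcases u₁ with _ | ⟨x, u₁'⟩
    · simp at hlen₁
    have hu₁'len : u₁'.length = j₁'.length + 1 := by simpa using hlen₁
    have hu₁'ne : u₁' ≠ [] := by intro h; rw [h] at hu₁'len; simp at hu₁'len
    rcases u₁' with _ | ⟨y, urest⟩
    · exact absurd rfl hu₁'ne
    have hGP' : GP Q d0 (y :: urest) j₁' := by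
      refine ⟨by simpa using hu₁'len, (List.isChain_cons_cons.mp hchain₁).2, ?_⟩
      intro k hk
      exact hp₁ (k+1) (by simpa using hk)
    have hlast' : (y :: urest).getLast? = u₂.head? := by
      rw [← hjoin, List.getLast?_cons_cons]
    have hIH := ih (y :: urest) u₂ j₂ hGP' h₂ hlast'
    obtain ⟨hlenI, hchainI, hpI⟩ := hIH
    refine ⟨by simp at hlenI ⊢; omega, ?_, ?_⟩
    · simp only [List.cons_append] at hchainI ⊢
      refine List.isChain_cons_cons.mpr ?_
      exact ⟨(List.isChain_cons_cons.mp hchain₁).1, hchainI⟩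
    · intro k hk
      match k with
      | 0 =>
        show Q x ((y :: urest ++ u₂.tail).getD 0 0) _
        have h00 : (y :: urest ++ u₂.tail).getD 0 0 = y := by simp
        rw [h00]
        exact hp₁ 0 (by simp)
      | (k+1) =>
        have := hpI k (by simp at hk ⊢; omega)
        simpa using this


lemma perinterval {n : ℕ} (hn : 0 < n) (f : Fin n → ℝ → ℝ) (hf : ∀ i, Continuous (f i))
    {α β : ℝ} (hαβ : α < β)
    (hpair : ∀ i j : Fin n, i ≠ j → {t ∈ Set.Icc α β | f i t = f j t}.encard ≤ 2) :
    ∃ u j, PJ f ⟨0, hn⟩ u j ∧ u.head? = some α ∧ u.getLast? = some β ∧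
      j ≠ [] ∧ j.length ≤ 2 * n - 1 := by
  obtain ⟨u, j, hPJ, hh, hl, hne⟩ := phase1 hn f hf hαβ hpair
  obtain ⟨u', j', hPJ', hchain, hlen, hh', hl', hjh⟩ := merge f ⟨0, hn⟩ j.length u j le_rfl hPJ
  have hh'' : u'.head? = some α := hh'.trans hh
  have hl'' : u'.getLast? = some β := hl'.trans hl
  have habab := abab hn f hf hpair hPJ' hh'' hl''
  have hds := ds_main j'.length j' le_rfl hchain habab
  have hcard : j'.toFinset.card ≤ n := by
    calc j'.toFinset.card ≤ (Finset.univ : Finset (Fin n)).card := Finset.card_le_univ _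
      _ = n := by simp
  have hj'ne : j' ≠ [] := by
    intro h
    rw [h] at hjh
    rcases j with _ | ⟨c, rest⟩
    · exact hne rfl
    · simp at hjh
  exact ⟨u', j', hPJ', hh'', hl'', hj'ne, by omega⟩

lemma PJtoGP {n d : ℕ} (hn : 0 < n) (σ : ℝ → EuclideanSpace ℝ (Fin d))
    (ψ : Fin n → ℝ → EuclideanSpace ℝ (Fin d)) (Dσ : ℝ → ℝ)
    {hnn : (Finset.univ : Finset (Fin n)).Nonempty}
    (hD : ∀ t, Dσ t = Finset.univ.sup' hnn (fun i => dist (σ t) (ψ i t)))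
    {α β : ℝ}
    (hσa : ∃ p v : EuclideanSpace ℝ (Fin d), ∀ t ∈ Set.Icc α β, σ t = p + t • v)
    (hψa : ∀ i, ∃ p v : EuclideanSpace ℝ (Fin d), ∀ t ∈ Set.Icc α β, ψ i t = p + t • v)
    {u : List ℝ} {j : List (Fin n)}
    (hPJ : PJ (fun i t => dist (σ t) (ψ i t)) ⟨0, hn⟩ u j)
    (hh : u.head? = some α) (hl : u.getLast? = some β) :
    GP (fun x y i => (∀ t ∈ Set.Icc x y, Dσ t = dist (σ t) (ψ i t)) ∧
      ∃ a b c : ℝ, ∀ t ∈ Set.Icc x y, Dσ t = Real.sqrt (a * t^2 + b * t + c)) ⟨0, hn⟩ u j := by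
  obtain ⟨hulen, huchain, hpieces⟩ := hPJ
  have hune : u ≠ [] := by intro h; rw [h] at hulen; simp at hulen
  have hupair : u.Pairwise (· < ·) := List.isChain_iff_pairwise.mp huchain
  have hget : ∀ (p q : Fin u.length), p < q → u.get p < u.get q :=
    fun p q hpq => List.pairwise_iff_get.mp hupair p q hpq
  have humono : ∀ (p q : ℕ), p ≤ q → q < u.length → u.getD p 0 ≤ u.getD q 0 := by
    intro p q hpq hq
    rw [List.getD_eq_get u 0 ⟨p, by omega⟩, List.getD_eq_get u 0 ⟨q, hq⟩]
    rcases eq_or_lt_of_le hpq with h | h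
    · subst h; exact le_rfl
    · exact (hget _ _ h).le
  have hu0 : u.getD 0 0 = α := by
    rcases u with _ | ⟨c, rest⟩
    · exact absurd rfl hune
    · simpa using hh
  have hulast : u.getD (u.length - 1) 0 = β := by
    rw [List.getLast?_eq_getLast_of_ne_nil hune] at hl
    rw [List.getD_eq_get u 0 ⟨u.length - 1, by have := List.length_pos_iff.mpr hune; omega⟩]
    rw [List.get_eq_getElem, ← List.getLast_eq_getElem hune]
    injection hl
  have hαle : ∀ q : ℕ, q < u.length → α ≤ u.getD q 0 := by
    intro q hq
    rw [← hu0]; exact humono 0 q (Nat.zero_le _) hq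
  have hleβ : ∀ q : ℕ, q < u.length → u.getD q 0 ≤ β := by
    intro q hq
    rw [← hulast]; exact humono q (u.length - 1) (by omega) (by omega)
  refine ⟨hulen, huchain, ?_⟩
  intro k hk
  have hx : α ≤ u.getD k 0 := hαle k (by omega)
  have hy : u.getD (k+1) 0 ≤ β := hleβ (k+1) (by omega)
  have hDeq : ∀ t ∈ Set.Icc (u.getD k 0) (u.getD (k+1) 0),
      Dσ t = dist (σ t) (ψ (j.getD k ⟨0, hn⟩) t) := by
    intro t ht
    rw [hD t]
    apply le_antisymm
    · exact Finset.sup'_le _ _ (fun i _ => hpieces k hk t ht.1 ht.2 i)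
    · exact Finset.le_sup' (fun i => dist (σ t) (ψ i t)) (Finset.mem_univ _)
  refine ⟨hDeq, ?_⟩
  obtain ⟨p, v, hσ⟩ := hσa
  obtain ⟨q, w, hψi⟩ := hψa (j.getD k ⟨0, hn⟩)
  obtain ⟨a, b, c, habc⟩ := dist_sqrt p v q w
  refine ⟨a, b, c, ?_⟩
  intro t ht
  have htαβ : t ∈ Set.Icc α β := ⟨le_trans hx ht.1, le_trans ht.2 hy⟩
  rw [hDeq t ht, hσ t htαβ, hψi t htαβ, habc t]


/-- Lemma 13 of the paper: the distance `D_σ` from a piecewise-linear trajectory `σ` to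
its farthest entity among `ψ_1,…,ψ_n` (also piecewise linear, with common breakpoints
`t_0 < … < t_τ`) is piecewise hyperbolic with at most `τ(2n − 1)` pieces. -/
theorem stmt12 (d n τ : ℕ) (hd : 1 ≤ d) (hn : 1 ≤ n) (hτ : 1 ≤ τ)
    (ts : Fin (τ + 1) → ℝ) (hts : StrictMono ts)
    (σ : ℝ → EuclideanSpace ℝ (Fin d)) (ψ : Fin n → ℝ → EuclideanSpace ℝ (Fin d))
    (hσc : Continuous σ) (hψc : ∀ i, Continuous (ψ i))
    (hσaff : ∀ l : Fin τ, ∃ p v : EuclideanSpace ℝ (Fin d),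
      ∀ t ∈ Set.Icc (ts l.castSucc) (ts l.succ), σ t = p + t • v)
    (hψaff : ∀ (i : Fin n) (l : Fin τ), ∃ p v : EuclideanSpace ℝ (Fin d),
      ∀ t ∈ Set.Icc (ts l.castSucc) (ts l.succ), ψ i t = p + t • v)
    (hpair : ∀ (l : Fin τ) (i j : Fin n), i ≠ j →
      {t ∈ Set.Icc (ts l.castSucc) (ts l.succ) |
        dist (σ t) (ψ i t) = dist (σ t) (ψ j t)}.encard ≤ 2)
    (Dσ : ℝ → ℝ)
    (hD : ∀ t, Dσ t = Finset.univ.sup' ⟨⟨0, hn⟩, Finset.mem_univ _⟩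
        (fun i => dist (σ t) (ψ i t))) :
    ∃ K : ℕ, K ≤ τ * (2 * n - 1) ∧
      ∃ s : Fin (K + 1) → ℝ, StrictMono s ∧ s 0 = ts 0 ∧ s (Fin.last K) = ts (Fin.last τ) ∧
        ∃ jdx : Fin K → Fin n, ∀ k : Fin K,
          (∀ t ∈ Set.Icc (s k.castSucc) (s k.succ), Dσ t = dist (σ t) (ψ (jdx k) t))
          ∧ ∃ a b c : ℝ, ∀ t ∈ Set.Icc (s k.castSucc) (s k.succ),
              Dσ t = Real.sqrt (a * t ^ 2 + b * t + c) := by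
  have hn' : 0 < n := hn
  set d0 : Fin n := ⟨0, hn'⟩ with hd0
  set f : Fin n → ℝ → ℝ := fun i t => dist (σ t) (ψ i t) with hf
  have hfc : ∀ i, Continuous (f i) := fun i => hσc.dist (hψc i)
  set Q : ℝ → ℝ → Fin n → Prop := fun x y i =>
    (∀ t ∈ Set.Icc x y, Dσ t = dist (σ t) (ψ i t)) ∧
    ∃ a b c : ℝ, ∀ t ∈ Set.Icc x y, Dσ t = Real.sqrt (a * t^2 + b * t + c) with hQ
  have hper : ∀ l : Fin τ, ∃ u j, GP Q d0 u j ∧ u.head? = some (ts l.castSucc) ∧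
      u.getLast? = some (ts l.succ) ∧ j ≠ [] ∧ j.length ≤ 2 * n - 1 := by
    intro l
    have hαβ : ts l.castSucc < ts l.succ := hts (Fin.castSucc_lt_succ (i := l))
    obtain ⟨u, j, hPJ, hh, hl, hjne, hjlen⟩ := perinterval hn' f hfc hαβ (hpair l)
    exact ⟨u, j, PJtoGP hn' σ ψ Dσ hD (hσaff l) (fun i => hψaff i l) hPJ hh hl,
      hh, hl, hjne, hjlen⟩
  have main : ∀ m : ℕ, 1 ≤ m → ∀ (hm : m ≤ τ), ∃ u j, GP Q d0 u j ∧
      u.head? = some (ts 0) ∧ u.getLast? = some (ts ⟨m, by omega⟩) ∧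
      j ≠ [] ∧ j.length ≤ m * (2 * n - 1) := by
    intro m
    induction m with
    | zero => intro h1 _; exact absurd h1 (by omega)
    | succ m ih =>
      intro h1 hm
      rcases Nat.eq_zero_or_pos m with rfl | hmpos
      · obtain ⟨u, j, hGP, hh, hl, hjne, hjlen⟩ := hper ⟨0, by omega⟩
        have e1 : ((⟨0, by omega⟩ : Fin τ).castSucc) = (0 : Fin (τ + 1)) := by
          simp [Fin.ext_iff]
        have e2 : ((⟨0, by omega⟩ : Fin τ).succ) = (⟨1, by omega⟩ : Fin (τ + 1)) := by
          simp [Fin.ext_iff]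
        rw [e1] at hh
        rw [e2] at hl
        exact ⟨u, j, hGP, hh, hl, hjne, by simpa using hjlen⟩
      · obtain ⟨u₁, j₁, hGP₁, hh₁, hl₁, hjne₁, hjlen₁⟩ := ih hmpos (by omega)
        obtain ⟨u₂, j₂, hGP₂, hh₂, hl₂, hjne₂, hjlen₂⟩ := hper ⟨m, by omega⟩
        have e1 : ((⟨m, by omega⟩ : Fin τ).castSucc) = (⟨m, by omega⟩ : Fin (τ + 1)) := rfl
        have e2 : ((⟨m, by omega⟩ : Fin τ).succ) = (⟨m + 1, by omega⟩ : Fin (τ + 1)) := rfl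
        rw [e1] at hh₂
        rw [e2] at hl₂
        have hjoin : u₁.getLast? = u₂.head? := by rw [hl₁, hh₂]
        have hGP := GPappend Q d0 j₁ u₁ u₂ j₂ hGP₁ hGP₂ hjoin
        have hu₁ne : u₁ ≠ [] := by
          intro h; rw [h] at hh₁; simp at hh₁
        have hu₂len : u₂.length = j₂.length + 1 := hGP₂.1
        refine ⟨u₁ ++ u₂.tail, j₁ ++ j₂, hGP, ?_, ?_, by simp [hjne₁], ?_⟩
        · rcases u₁ with _ | ⟨x, r⟩
          · exact absurd rfl hu₁ne
          · simpa using hh₁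
        · rcases u₂ with _ | ⟨y, t⟩
          · simp at hu₂len
          have htne : t ≠ [] := by
            intro h
            rw [h] at hu₂len
            simp at hu₂len
            exact hjne₂ hu₂len
          simp only [List.tail_cons]
          rw [List.getLast?_append_of_ne_nil _ htne]
          show t.getLast? = _
          rcases t with _ | ⟨z, t'⟩
          · exact absurd rfl htne
          · rw [List.getLast?_cons_cons] at hl₂
            exact hl₂
        · calc (j₁ ++ j₂).length = j₁.length + j₂.length := by simp
            _ ≤ m * (2 * n - 1) + (2 * n - 1) := add_le_add hjlen₁ hjlen₂
            _ = (m + 1) * (2 * n - 1) := (Nat.succ_mul m _).symm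
  obtain ⟨U, J, hGP, hhU, hlU, hJne, hJlen⟩ := main τ hτ le_rfl
  obtain ⟨hUlen, hUchain, hUp⟩ := hGP
  have hUne : U ≠ [] := by intro h; rw [h] at hUlen; simp at hUlen
  have hUpair : U.Pairwise (· < ·) := List.isChain_iff_pairwise.mp hUchain
  have hgetU : ∀ (p q : Fin U.length), p < q → U.get p < U.get q :=
    fun p q hpq => List.pairwise_iff_get.mp hUpair p q hpq
  refine ⟨J.length, hJlen, fun i : Fin (J.length + 1) => U.getD i 0, ?_, ?_, ?_,
    fun k => J.getD k d0, ?_⟩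
  · intro i i' hii'
    show U.getD (i : ℕ) 0 < U.getD (i' : ℕ) 0
    have hi : (i : ℕ) < U.length := by omega
    have hi' : (i' : ℕ) < U.length := by omega
    rw [List.getD_eq_get U 0 ⟨i, hi⟩, List.getD_eq_get U 0 ⟨i', hi'⟩]
    exact hgetU ⟨i, hi⟩ ⟨i', hi'⟩ (by simpa [Fin.mk_lt_mk] using hii')
  · show U.getD ((0 : Fin (J.length + 1)) : ℕ) 0 = ts 0
    have : ((0 : Fin (J.length + 1)) : ℕ) = 0 := rfl
    rw [this]
    rcases U with _ | ⟨x, r⟩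
    · exact absurd rfl hUne
    · simpa using hhU
  · show U.getD ((Fin.last J.length : Fin (J.length + 1)) : ℕ) 0 = ts (Fin.last τ)
    have hv : ((Fin.last J.length : Fin (J.length + 1)) : ℕ) = U.length - 1 := by
      simp [Fin.val_last]; omega
    rw [hv]
    rw [List.getLast?_eq_getLast_of_ne_nil hUne] at hlU
    rw [List.getD_eq_get U 0 ⟨U.length - 1, by have := List.length_pos_iff.mpr hUne; omega⟩]
    rw [List.get_eq_getElem, ← List.getLast_eq_getElem hUne]
    have : ts (⟨τ, by omega⟩ : Fin (τ + 1)) = ts (Fin.last τ) := by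
      congr 1
    rw [← this]
    injection hlU
  · intro k
    have hk : (k : ℕ) < J.length := k.isLt
    have h2 := hUp (k : ℕ) hk
    have e1 : ((k.castSucc : Fin (J.length + 1)) : ℕ) = (k : ℕ) := Fin.coe_castSucc k
    have e2 : ((k.succ : Fin (J.length + 1)) : ℕ) = (k : ℕ) + 1 := Fin.val_succ k
    show Q (U.getD ((k.castSucc : Fin (J.length + 1)) : ℕ) 0)
        (U.getD ((k.succ : Fin (J.length + 1)) : ℕ) 0) (J.getD (k : ℕ) d0)
    rw [e1, e2]
    exact h2
end

section
/- Let A < B be reals, let M ≥ 1, and let h_1, h_2 : ℝ → ℝ be functions such that for each r ∈ {1,2} there is a partition of [A, B] into at most M subintervals on each of which h_r(t) = √(a·t² + b·t + c) for some reals a, b, c (with a·t² + b·t + c ≥ 0 on that subinterval). If the set {t ∈ [A, B] : h_1(t) = h_2(t)} is finite, then it has at most 2(2M − 1) elements. -/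
private lemma quad_zero {a b c x y z : ℝ} (hxy : x ≠ y) (hxz : x ≠ z) (hyz : y ≠ z)
    (hx : a * x ^ 2 + b * x + c = 0) (hy : a * y ^ 2 + b * y + c = 0)
    (hz : a * z ^ 2 + b * z + c = 0) (t : ℝ) : a * t ^ 2 + b * t + c = 0 := by
  have d1 : (x - y) * (a * (x + y) + b) = 0 := by linear_combination hx - hy
  have d2 : (y - z) * (a * (y + z) + b) = 0 := by linear_combination hy - hz
  have e1 : a * (x + y) + b = 0 := (mul_eq_zero.1 d1).resolve_left (sub_ne_zero.2 hxy)
  have e2 : a * (y + z) + b = 0 := (mul_eq_zero.1 d2).resolve_left (sub_ne_zero.2 hyz)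
  have d3 : a * (x - z) = 0 := by linear_combination e1 - e2
  have ha : a = 0 := (mul_eq_zero.1 d3).resolve_right (sub_ne_zero.2 hxz)
  have hb : b = 0 := by linear_combination e1 - (x + y) * ha
  have hc : c = 0 := by linear_combination hx - x ^ 2 * ha - x * hb
  rw [ha, hb, hc]; ring

private lemma two_lt_encard {α : Type*} {s : Set α} (hs : s.Finite) (h : 2 < s.encard) :
    ∃ x ∈ s, ∃ y ∈ s, ∃ z ∈ s, x ≠ y ∧ x ≠ z ∧ y ≠ z := by
  rw [hs.encard_eq_coe_toFinset_card] at h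
  have h' : 2 < hs.toFinset.card := by exact_mod_cast h
  obtain ⟨x, hx, y, hy, z, hz, h1, h2, h3⟩ := Finset.two_lt_card.1 h'
  exact ⟨x, hs.mem_toFinset.1 hx, y, hs.mem_toFinset.1 hy, z, hs.mem_toFinset.1 hz, h1, h2, h3⟩

private lemma interval_bound {h₁ h₂ : ℝ → ℝ} {u v : ℝ} (huv : u < v)
    {a₁ b₁ c₁ a₂ b₂ c₂ : ℝ}
    (P₁ : ∀ t ∈ Set.Icc u v, 0 ≤ a₁ * t ^ 2 + b₁ * t + c₁)
    (P₂ : ∀ t ∈ Set.Icc u v, 0 ≤ a₂ * t ^ 2 + b₂ * t + c₂)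
    (H₁ : ∀ t ∈ Set.Icc u v, h₁ t = Real.sqrt (a₁ * t ^ 2 + b₁ * t + c₁))
    (H₂ : ∀ t ∈ Set.Icc u v, h₂ t = Real.sqrt (a₂ * t ^ 2 + b₂ * t + c₂))
    (hfin : {t ∈ Set.Icc u v | h₁ t = h₂ t}.Finite) :
    {t ∈ Set.Icc u v | h₁ t = h₂ t}.encard ≤ 2 := by
  by_contra hlt
  push_neg at hlt
  obtain ⟨x, hx, y, hy, z, hz, hxy, hxz, hyz⟩ := two_lt_encard hfin hlt
  have key : ∀ w : ℝ, w ∈ {t ∈ Set.Icc u v | h₁ t = h₂ t} →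
      (a₁ - a₂) * w ^ 2 + (b₁ - b₂) * w + (c₁ - c₂) = 0 := by
    rintro w ⟨hw, hweq⟩
    have h1 : Real.sqrt (a₁ * w ^ 2 + b₁ * w + c₁) = Real.sqrt (a₂ * w ^ 2 + b₂ * w + c₂) := by
      rw [← H₁ w hw, ← H₂ w hw, hweq]
    have h2 : a₁ * w ^ 2 + b₁ * w + c₁ = a₂ * w ^ 2 + b₂ * w + c₂ := by
      rw [← Real.sq_sqrt (P₁ w hw), ← Real.sq_sqrt (P₂ w hw), h1]
    linarith
  have hall : ∀ t : ℝ, (a₁ - a₂) * t ^ 2 + (b₁ - b₂) * t + (c₁ - c₂) = 0 :=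
    quad_zero hxy hxz hyz (key x hx) (key y hy) (key z hz)
  have hsub : Set.Icc u v ⊆ {t ∈ Set.Icc u v | h₁ t = h₂ t} := by
    intro w hw
    refine ⟨hw, ?_⟩
    have := hall w
    have hq : a₁ * w ^ 2 + b₁ * w + c₁ = a₂ * w ^ 2 + b₂ * w + c₂ := by linarith
    rw [H₁ w hw, H₂ w hw, hq]
  exact Set.not_infinite.2 hfin ((Set.Icc_infinite huv).mono hsub)

private lemma encard_biUnion_le {α ι : Type*} (I : Finset ι) (f : ι → Set α) :
    (⋃ i ∈ I, f i).encard ≤ ∑ i ∈ I, (f i).encard := by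
  classical
  induction I using Finset.induction with
  | empty => simp
  | insert _ _ hx ih =>
      rw [Finset.set_biUnion_insert, Finset.sum_insert hx]
      exact le_trans (Set.encard_union_le _ _) (add_le_add_right ih _)

/-- Two piecewise hyperbolic functions on `[A,B]`, each with at most `M` pieces, agree
at most `2(2M − 1)` times (provided their agreement set is finite). -/
theorem stmt13 (A B : ℝ) (hAB : A < B) (M : ℕ) (hM : 1 ≤ M)
    (h₁ h₂ : ℝ → ℝ)
    (hp : ∀ h : ℝ → ℝ, h = h₁ ∨ h = h₂ →
      ∃ k : ℕ, 1 ≤ k ∧ k ≤ M ∧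
        ∃ s : Fin (k + 1) → ℝ, StrictMono s ∧ s 0 = A ∧ s (Fin.last k) = B ∧
          ∀ j : Fin k, ∃ a b c : ℝ,
            (∀ t ∈ Set.Icc (s j.castSucc) (s j.succ), 0 ≤ a * t ^ 2 + b * t + c)
            ∧ ∀ t ∈ Set.Icc (s j.castSucc) (s j.succ),
                h t = Real.sqrt (a * t ^ 2 + b * t + c))
    (hfin : {t ∈ Set.Icc A B | h₁ t = h₂ t}.Finite) :
    {t ∈ Set.Icc A B | h₁ t = h₂ t}.encard ≤ 2 * (2 * M - 1 : ℕ) := by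
  classical
  obtain ⟨k₁, hk₁1, hk₁M, s₁, hs₁m, hs₁0, hs₁l, hpc₁⟩ := hp h₁ (Or.inl rfl)
  obtain ⟨k₂, hk₂1, hk₂M, s₂, hs₂m, hs₂0, hs₂l, hpc₂⟩ := hp h₂ (Or.inr rfl)
  set P : Finset ℝ := Finset.univ.image s₁ ∪ Finset.univ.image s₂ with hP
  set n : ℕ := P.card with hn
  -- All points of P lie in [A, B]
  have hmemP : ∀ p ∈ P, A ≤ p ∧ p ≤ B := by
    intro p hp'
    rw [hP, Finset.mem_union] at hp'
    rcases hp' with hp' | hp' <;>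
      obtain ⟨j, -, rfl⟩ := Finset.mem_image.1 hp'
    · exact ⟨hs₁0 ▸ hs₁m.monotone (Fin.zero_le j), hs₁l ▸ hs₁m.monotone (Fin.le_last j)⟩
    · exact ⟨hs₂0 ▸ hs₂m.monotone (Fin.zero_le j), hs₂l ▸ hs₂m.monotone (Fin.le_last j)⟩
  have hAP : A ∈ P := by
    rw [hP, Finset.mem_union]
    exact Or.inl (Finset.mem_image.2 ⟨0, Finset.mem_univ _, hs₁0⟩)
  have hBP : B ∈ P := by
    rw [hP, Finset.mem_union]
    exact Or.inl (Finset.mem_image.2 ⟨Fin.last k₁, Finset.mem_univ _, hs₁l⟩)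
  -- card bounds
  have hcard1 : (Finset.univ.image s₁).card = k₁ + 1 := by
    rw [Finset.card_image_of_injective _ hs₁m.injective, Finset.card_univ, Fintype.card_fin]
  have hcard2 : (Finset.univ.image s₂).card = k₂ + 1 := by
    rw [Finset.card_image_of_injective _ hs₂m.injective, Finset.card_univ, Fintype.card_fin]
  have hABsub : ({A, B} : Finset ℝ) ⊆ Finset.univ.image s₁ ∩ Finset.univ.image s₂ := by
    intro x hx
    rw [Finset.mem_insert, Finset.mem_singleton] at hx
    rcases hx with rfl | rfl
    · exact Finset.mem_inter.2 ⟨Finset.mem_image.2 ⟨0, Finset.mem_univ _, hs₁0⟩,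
        Finset.mem_image.2 ⟨0, Finset.mem_univ _, hs₂0⟩⟩
    · exact Finset.mem_inter.2 ⟨Finset.mem_image.2 ⟨Fin.last k₁, Finset.mem_univ _, hs₁l⟩,
        Finset.mem_image.2 ⟨Fin.last k₂, Finset.mem_univ _, hs₂l⟩⟩
  have hinter : 2 ≤ (Finset.univ.image s₁ ∩ Finset.univ.image s₂).card := by
    have : ({A, B} : Finset ℝ).card = 2 := by
      rw [Finset.card_insert_of_notMem (by simp [hAB.ne]), Finset.card_singleton]
    exact this ▸ Finset.card_le_card hABsub
  have hnle : n ≤ k₁ + k₂ := by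
    have h := Finset.card_union_add_card_inter (Finset.univ.image s₁) (Finset.univ.image s₂)
    rw [hcard1, hcard2, ← hP] at h
    omega
  have hn2 : 2 ≤ n := by
    have : ({A, B} : Finset ℝ).card ≤ n := by
      refine Finset.card_le_card ?_
      intro x hx
      rw [Finset.mem_insert, Finset.mem_singleton] at hx
      rcases hx with rfl | rfl <;> assumption
    have hc : ({A, B} : Finset ℝ).card = 2 := by
      rw [Finset.card_insert_of_notMem (by simp [hAB.ne]), Finset.card_singleton]
    omega
  -- sorted enumeration of P
  let e : Fin n ≃o {x // x ∈ P} := P.orderIsoOfFin rfl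
  let u : Fin n → ℝ := fun i => (e i : ℝ)
  have hum : StrictMono u := fun a b h => by
    have := e.strictMono h
    exact_mod_cast this
  have huP : ∀ i, u i ∈ P := fun i => (e i).2
  have hsurj : ∀ p ∈ P, ∃ i, u i = p := fun p hp' => ⟨e.symm ⟨p, hp'⟩, by simp [u]⟩
  have hAu : ∀ i, A ≤ u i := fun i => (hmemP _ (huP i)).1
  have huB : ∀ i, u i ≤ B := fun i => (hmemP _ (huP i)).2
  have h0n : 0 < n := by omega
  have hlastn : n - 1 < n := by omega
  have hu0 : u ⟨0, h0n⟩ = A := by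
    obtain ⟨i, hi⟩ := hsurj A hAP
    refine le_antisymm ?_ (hAu _)
    calc u ⟨0, h0n⟩ ≤ u i := hum.monotone (by exact Fin.mk_le_of_le_val (Nat.zero_le _))
    _ = A := hi
  have hul : u ⟨n - 1, hlastn⟩ = B := by
    obtain ⟨i, hi⟩ := hsurj B hBP
    refine le_antisymm (huB _) ?_
    calc B = u i := hi.symm
    _ ≤ u ⟨n - 1, hlastn⟩ := hum.monotone (by
        rw [Fin.le_def]
        exact Nat.le_sub_one_of_lt i.isLt)
  -- consecutiveness
  have hconsec : ∀ (i : ℕ) (hi : i + 1 < n), ∀ p ∈ P,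
      p ≤ u ⟨i, by omega⟩ ∨ u ⟨i + 1, hi⟩ ≤ p := by
    intro i hi p hp'
    obtain ⟨j, rfl⟩ := hsurj p hp'
    rcases le_or_gt j.val i with h | h
    · exact Or.inl (hum.monotone (by rw [Fin.le_def]; exact h))
    · exact Or.inr (hum.monotone (by rw [Fin.le_def]; exact h))
  -- each consecutive interval is contained in a piece of any partition
  have piece : ∀ (k : ℕ) (s : Fin (k + 1) → ℝ), StrictMono s → s 0 = A → s (Fin.last k) = B →
      (∀ j, s j ∈ P) →
      ∀ (i : ℕ) (hi : i + 1 < n), ∃ j : Fin k,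
        s j.castSucc ≤ u ⟨i, by omega⟩ ∧ u ⟨i + 1, hi⟩ ≤ s j.succ := by
    intro k s hsm hs0 hsl hsP i hi
    have huiB : u ⟨i, by omega⟩ < B := lt_of_lt_of_le (hum (Fin.mk_lt_mk.2 (by omega))) (huB ⟨i + 1, hi⟩)
    set J : Finset (Fin (k + 1)) := Finset.univ.filter (fun j => s j ≤ u ⟨i, by omega⟩) with hJ
    have hJne : J.Nonempty := ⟨0, by
      rw [hJ, Finset.mem_filter]
      exact ⟨Finset.mem_univ _, hs0 ▸ hAu _⟩⟩
    set j0 : Fin (k + 1) := J.max' hJne with hj0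
    have hj0J : j0 ∈ J := Finset.max'_mem _ _
    have hj0le : s j0 ≤ u ⟨i, by omega⟩ := (Finset.mem_filter.1 hj0J).2
    have hj0k : j0.val < k := by
      rcases lt_or_eq_of_le (Nat.lt_succ_iff.1 j0.isLt) with h | h
      · exact h
      · exfalso
        have : j0 = Fin.last k := Fin.ext h
        rw [this, hsl] at hj0le
        exact absurd hj0le (not_le.2 huiB)
    refine ⟨⟨j0.val, hj0k⟩, ?_, ?_⟩
    · have : (⟨j0.val, hj0k⟩ : Fin k).castSucc = j0 := by
        simp [Fin.ext_iff]
      rw [this]; exact hj0le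
    · have hsucc : ¬ s (⟨j0.val, hj0k⟩ : Fin k).succ ≤ u ⟨i, by omega⟩ := by
        intro hcon
        have hmem : (⟨j0.val, hj0k⟩ : Fin k).succ ∈ J := by
          rw [hJ, Finset.mem_filter]; exact ⟨Finset.mem_univ _, hcon⟩
        have := Finset.le_max' J _ hmem
        rw [← hj0] at this
        rw [Fin.le_def] at this
        simp at this
      rcases hconsec i hi _ (hsP (⟨j0.val, hj0k⟩ : Fin k).succ) with h | h
      · exact absurd h hsucc
      · exact h
  -- extended breakpoints
  let u' : ℕ → ℝ := fun i => if h : i < n then u ⟨i, h⟩ else 0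
  have hu'eq : ∀ (i : ℕ) (h : i < n), u' i = u ⟨i, h⟩ := fun i h => dif_pos h
  -- the covering sets
  set F : ℕ → Set ℝ := fun i => {x ∈ Set.Icc (u' i) (u' (i + 1)) | h₁ x = h₂ x} with hF
  -- covering
  have hcover : {t ∈ Set.Icc A B | h₁ t = h₂ t} ⊆ ⋃ i ∈ Finset.range (n - 1), F i := by
    rintro x ⟨hx, hxeq⟩
    rcases eq_or_lt_of_le hx.2 with hxB | hxB
    · -- x = B, use the interval (n-2, n-1)
      have h2 : n - 2 + 1 = n - 1 := by omega
      refine Set.mem_biUnion (Finset.mem_range.2 (by omega : n - 2 < n - 1)) ?_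
      refine ⟨⟨?_, ?_⟩, hxeq⟩
      · rw [hu'eq (n - 2) (by omega)]
        rw [hxB]; exact huB _
      · rw [h2, hu'eq (n - 1) hlastn, hul]; exact hx.2
    · -- x < B
      set T : Finset (Fin n) := Finset.univ.filter (fun i => u i ≤ x) with hT
      have hTne : T.Nonempty := ⟨⟨0, h0n⟩, by
        rw [hT, Finset.mem_filter]
        exact ⟨Finset.mem_univ _, hu0 ▸ hx.1⟩⟩
      set i0 : Fin n := T.max' hTne with hi0
      have hi0T : i0 ∈ T := Finset.max'_mem _ _
      have hi0le : u i0 ≤ x := (Finset.mem_filter.1 hi0T).2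
      have hi0n : i0.val + 1 < n := by
        rcases lt_or_eq_of_le (Nat.succ_le_of_lt i0.isLt) with h | h
        · exact h
        · exfalso
          have : i0 = ⟨n - 1, hlastn⟩ := Fin.ext ((by omega : i0.val = n - 1))
          rw [this, hul] at hi0le
          exact absurd hi0le (not_le.2 hxB)
      have hnext : ¬ u ⟨i0.val + 1, hi0n⟩ ≤ x := by
        intro hcon
        have hmem : (⟨i0.val + 1, hi0n⟩ : Fin n) ∈ T := by
          rw [hT, Finset.mem_filter]; exact ⟨Finset.mem_univ _, hcon⟩
        have := Finset.le_max' T _ hmem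
        rw [← hi0, Fin.le_def] at this
        simp at this
      refine Set.mem_biUnion (Finset.mem_range.2 (by omega : i0.val < n - 1)) ?_
      refine ⟨⟨?_, ?_⟩, hxeq⟩
      · rw [hu'eq i0.val i0.isLt]
        convert hi0le using 2
      · rw [hu'eq (i0.val + 1) hi0n]
        exact le_of_lt (not_le.1 hnext)
  -- each F i has at most 2 elements
  have hFbound : ∀ i ∈ Finset.range (n - 1), (F i).encard ≤ 2 := by
    intro i hi
    rw [Finset.mem_range] at hi
    have hi1 : i + 1 < n := by omega
    have hilt : i < n := by omega
    have huv : u' i < u' (i + 1) := by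
      rw [hu'eq i hilt, hu'eq (i + 1) hi1]
      exact hum (Fin.mk_lt_mk.2 (by omega))
    have hsubAB : Set.Icc (u' i) (u' (i + 1)) ⊆ Set.Icc A B := by
      apply Set.Icc_subset_Icc
      · rw [hu'eq i hilt]; exact hAu _
      · rw [hu'eq (i + 1) hi1]; exact huB _
    obtain ⟨j₁, hj₁l, hj₁r⟩ := piece k₁ s₁ hs₁m hs₁0 hs₁l
      (fun j => by rw [hP, Finset.mem_union]; exact Or.inl (Finset.mem_image.2 ⟨j, Finset.mem_univ _, rfl⟩)) i hi1
    obtain ⟨j₂, hj₂l, hj₂r⟩ := piece k₂ s₂ hs₂m hs₂0 hs₂l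
      (fun j => by rw [hP, Finset.mem_union]; exact Or.inr (Finset.mem_image.2 ⟨j, Finset.mem_univ _, rfl⟩)) i hi1
    obtain ⟨a₁, b₁, c₁, hq₁pos, hq₁⟩ := hpc₁ j₁
    obtain ⟨a₂, b₂, c₂, hq₂pos, hq₂⟩ := hpc₂ j₂
    have hsub₁ : Set.Icc (u' i) (u' (i + 1)) ⊆ Set.Icc (s₁ j₁.castSucc) (s₁ j₁.succ) := by
      apply Set.Icc_subset_Icc
      · rw [hu'eq i hilt]; exact hj₁l
      · rw [hu'eq (i + 1) hi1]; exact hj₁r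
    have hsub₂ : Set.Icc (u' i) (u' (i + 1)) ⊆ Set.Icc (s₂ j₂.castSucc) (s₂ j₂.succ) := by
      apply Set.Icc_subset_Icc
      · rw [hu'eq i hilt]; exact hj₂l
      · rw [hu'eq (i + 1) hi1]; exact hj₂r
    refine interval_bound huv
      (fun t ht => hq₁pos t (hsub₁ ht)) (fun t ht => hq₂pos t (hsub₂ ht))
      (fun t ht => hq₁ t (hsub₁ ht)) (fun t ht => hq₂ t (hsub₂ ht)) ?_
    exact hfin.subset (fun x hx => ⟨hsubAB hx.1, hx.2⟩)
  -- put it together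
  calc {t ∈ Set.Icc A B | h₁ t = h₂ t}.encard
      ≤ (⋃ i ∈ Finset.range (n - 1), F i).encard := Set.encard_mono hcover
    _ ≤ ∑ i ∈ Finset.range (n - 1), (F i).encard := encard_biUnion_le _ _
    _ ≤ ∑ _i ∈ Finset.range (n - 1), (2 : ℕ∞) := Finset.sum_le_sum hFbound
    _ = (n - 1) * 2 := by rw [Finset.sum_const, Finset.card_range]; simp [mul_comm]
    _ ≤ (2 * M - 1) * 2 := by
        have : n - 1 ≤ 2 * M - 1 := by omega
        exact mul_le_mul_left (by exact_mod_cast Nat.cast_le.2 this) 2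
    _ = ((2 * (2 * M - 1) : ℕ) : ℕ∞) := by push_cast; ring
end
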